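/- arXiv:2102.02037 — 4 statements merged into one kernel-verified Lean document; each statement's English description precedes it below -/
import Mathlib

section
/- Let E be a separable real Hilbert space, let μ, ν ∈ W_2(E), and set σ = d_{W_2}(μ, δ_{m(μ)}) and τ = d_{W_2}(ν, δ_{m(ν)}). Then d_{W_2}²(μ,ν) = ‖m(μ)−m(ν)‖² + σ² + τ² holds if and only if there exist two orthogonal closed affine subspaces L and M of E (i.e. ⟨u−u′, w−w′⟩ = 0 for all u,u′ ∈ L and w,w′ ∈ M) such that supp(μ) ⊂ L and supp(ν) ⊂ M. -/
open MeasureTheory ENNReal Topology Filter Metric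
open scoped RealInnerProductSpace

noncomputable section

set_option linter.unusedSectionVars false

/-- The `p`-Wasserstein "distance" (valued in `ℝ≥0∞`) between two Borel measures on a
metric space: `(inf over couplings π of ∫ ρ(x,y)^p dπ)^(min (1/p) 1)`. -/
noncomputable def wassersteinDist {X : Type*} [MeasurableSpace X] [PseudoEMetricSpace X]
    (p : ℝ) (μ ν : Measure X) : ℝ≥0∞ :=
  (⨅ π ∈ {π : Measure (X × X) | π.map Prod.fst = μ ∧ π.map Prod.snd = ν},
    ∫⁻ z, edist z.1 z.2 ^ p ∂π) ^ min p⁻¹ 1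

/-- Membership in the `p`-Wasserstein space: a Borel probability measure with a finite
`p`-th moment. -/
def MemWp {X : Type*} [MeasurableSpace X] [PseudoEMetricSpace X] (p : ℝ) (μ : Measure X) : Prop :=
  IsProbabilityMeasure μ ∧ ∃ x₀ : X, ∫⁻ x, edist x x₀ ^ p ∂μ ≠ ⊤

/-- The support of a measure: the smallest closed set whose complement is null. -/
def msupport {X : Type*} [TopologicalSpace X] [MeasurableSpace X] (μ : Measure X) : Set X :=
  ⋂₀ {C : Set X | IsClosed C ∧ μ Cᶜ = 0}


section Support
variable {X : Type*} [TopologicalSpace X] [SecondCountableTopology X] [MeasurableSpace X]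
  (μ : Measure X)

lemma msupport_compl_null : μ (msupport μ)ᶜ = 0 := by
  have hset : (msupport μ)ᶜ = ⋃ U : {U : Set X // IsOpen U ∧ μ U = 0}, (U : Set X) := by
    ext x
    simp only [msupport, Set.mem_compl_iff, Set.mem_sInter, Set.mem_setOf_eq, not_forall,
      Set.mem_iUnion]
    constructor
    · rintro ⟨C, ⟨hC, hCn⟩, hx⟩
      exact ⟨⟨Cᶜ, hC.isOpen_compl, hCn⟩, hx⟩
    · rintro ⟨⟨U, hU, hUn⟩, hx⟩
      exact ⟨Uᶜ, ⟨hU.isClosed_compl, by simpa using hUn⟩, by simpa using hx⟩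
  rw [hset]
  obtain ⟨T, hTc, hT⟩ := TopologicalSpace.isOpen_iUnion_countable
    (fun U : {U : Set X // IsOpen U ∧ μ U = 0} => (U : Set X)) (fun U => U.2.1)
  rw [← hT]
  refine (measure_biUnion_null_iff hTc).2 fun U _ => U.2.2

lemma msupport_subset_of_closed {C : Set X} (hC : IsClosed C) (hn : μ Cᶜ = 0) :
    msupport μ ⊆ C := Set.sInter_subset_of_mem ⟨hC, hn⟩

lemma compl_null_of_msupport_subset {C : Set X} (h : msupport μ ⊆ C) : μ Cᶜ = 0 :=
  measure_mono_null (Set.compl_subset_compl.2 h) (msupport_compl_null μ)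

end Support

lemma measure_closedBall_ne_zero {X : Type*} [MetricSpace X] [MeasurableSpace X]
    (μ : Measure X) {x₀ : X} (hx₀ : x₀ ∈ msupport μ) {ε : ℝ} (hε : 0 < ε) :
    μ (closedBall x₀ ε) ≠ 0 := by
  intro h
  have hb : μ (ball x₀ ε) = 0 := measure_mono_null ball_subset_closedBall h
  have : msupport μ ⊆ (ball x₀ ε)ᶜ :=
    Set.sInter_subset_of_mem ⟨isClosed_compl_iff.2 isOpen_ball, by simpa using hb⟩
  exact this hx₀ (mem_ball_self hε)

set_option linter.unusedSectionVars false

-- ENNReal sq triangle helper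
lemma sq_add_le_ennreal (a b : ℝ≥0∞) : (a + b) ^ 2 ≤ 4 * (a ^ 2 + b ^ 2) := by
  have h1 : a + b ≤ 2 * max a b := by
    rw [two_mul]
    exact add_le_add (le_max_left a b) (le_max_right a b)
  calc (a + b) ^ 2 ≤ (2 * max a b) ^ 2 := pow_le_pow_left' h1 2
    _ = 4 * (max a b) ^ 2 := by ring
    _ ≤ 4 * (a ^ 2 + b ^ 2) := by
      gcongr
      rcases max_cases a b with ⟨h, _⟩ | ⟨h, _⟩ <;> rw [h]
      · exact le_add_right le_rfl
      · exact le_add_left le_rfl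

section Moments
variable {E : Type*} [MeasurableSpace E] [MetricSpace E] [OpensMeasurableSpace E]
  (μ : Measure E) [IsProbabilityMeasure μ]

lemma moment_transfer {x₀ : E} (h : ∫⁻ x, edist x x₀ ^ 2 ∂μ ≠ ⊤) (c : E) :
    ∫⁻ x, edist x c ^ 2 ∂μ ≠ ⊤ := by
  have hb : ∀ x, edist x c ^ 2 ≤ 4 * (edist x x₀ ^ 2 + edist x₀ c ^ 2) := fun x => by
    calc edist x c ^ 2 ≤ (edist x x₀ + edist x₀ c) ^ 2 :=
          pow_le_pow_left' (edist_triangle _ _ _) 2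
      _ ≤ 4 * (edist x x₀ ^ 2 + edist x₀ c ^ 2) := sq_add_le_ennreal _ _
  have : ∫⁻ x, edist x c ^ 2 ∂μ ≤ ∫⁻ x, 4 * (edist x x₀ ^ 2 + edist x₀ c ^ 2) ∂μ :=
    lintegral_mono hb
  refine ne_top_of_le_ne_top ?_ this
  rw [lintegral_const_mul 4 (by measurability), lintegral_add_right _ (by measurability),
    lintegral_const]
  simp only [measure_univ, mul_one]
  exact ENNReal.mul_ne_top (by norm_num)
    (ENNReal.add_ne_top.2 ⟨h, pow_ne_top (edist_ne_top _ _)⟩)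

end Moments

section Int
variable {E : Type*} [NormedAddCommGroup E] [InnerProductSpace ℝ E]
  [MeasurableSpace E] [OpensMeasurableSpace E] [SecondCountableTopology E]
  (μ : Measure E) [IsProbabilityMeasure μ]

lemma lintegral_edist_sq_lt_top_iff (c : E) :
    ∫⁻ x, edist x c ^ 2 ∂μ = ∫⁻ x, (‖x - c‖₊ : ℝ≥0∞) ^ 2 ∂μ := by
  simp [edist_nndist, nndist_eq_nnnorm]

lemma integrable_norm_sq (c : E) (h : ∫⁻ x, edist x c ^ 2 ∂μ ≠ ⊤) :
    Integrable (fun x => ‖x - c‖ ^ 2) μ := by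
  refine ⟨(Continuous.aestronglyMeasurable (by continuity)), ?_⟩
  show ∫⁻ x, (‖(‖x - c‖ ^ 2 : ℝ)‖₊ : ℝ≥0∞) ∂μ < ⊤
  have : ∀ x : E, (‖(‖x - c‖ ^ 2 : ℝ)‖₊ : ℝ≥0∞) = edist x c ^ 2 := fun x => by
    rw [edist_nndist, nndist_eq_nnnorm]
    norm_cast
    ext
    simp [NNReal.coe_pow, abs_of_nonneg (sq_nonneg ‖x - c‖)]
  simpa only [this] using h.lt_top

lemma integrable_sub_const (c : E) (h : ∫⁻ x, edist x c ^ 2 ∂μ ≠ ⊤) :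
    Integrable (fun x => x - c) μ := by
  refine ⟨(Continuous.aestronglyMeasurable (by continuity)), ?_⟩
  show ∫⁻ x, (‖x - c‖₊ : ℝ≥0∞) ∂μ < ⊤
  have hb : ∀ x : E, (‖x - c‖₊ : ℝ≥0∞) ≤ 1 + (‖x - c‖₊ : ℝ≥0∞) ^ 2 := fun x => by
    rcases le_total ((‖x - c‖₊ : ℝ≥0∞)) 1 with h1 | h1
    · exact le_add_right h1
    · calc (‖x - c‖₊ : ℝ≥0∞) = ‖x - c‖₊ * 1 := (mul_one _).symm
        _ ≤ (‖x - c‖₊ : ℝ≥0∞) * ‖x - c‖₊ := by gcongr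
        _ ≤ 1 + (‖x - c‖₊ : ℝ≥0∞) ^ 2 := by rw [← pow_two]; exact le_add_self
  refine lt_of_le_of_lt (lintegral_mono hb) ?_
  rw [lintegral_add_left (by measurability), lintegral_const]
  simp only [measure_univ, mul_one]
  rw [lintegral_edist_sq_lt_top_iff] at h
  exact ENNReal.add_lt_top.2 ⟨by norm_num, h.lt_top⟩

lemma integrable_id' (h : ∃ x₀ : E, ∫⁻ x, edist x x₀ ^ 2 ∂μ ≠ ⊤) :
    Integrable (fun x => x) μ := by
  obtain ⟨x₀, hx₀⟩ := h
  have := integrable_sub_const μ (0 : E) (moment_transfer μ hx₀ 0)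
  simpa using this

end Int

section Coupling
variable {E : Type*} [NormedAddCommGroup E] [InnerProductSpace ℝ E] [CompleteSpace E]
  [SecondCountableTopology E] [MeasurableSpace E] [BorelSpace E]
  {μ ν : Measure E} {π : Measure (E × E)}

lemma coupling_isProb [IsProbabilityMeasure μ] (hπ1 : π.map Prod.fst = μ) :
    IsProbabilityMeasure π := by
  constructor
  have := Measure.map_apply (μ := π) measurable_fst (MeasurableSet.univ)
  rw [hπ1] at this
  simpa using this.symm

lemma integrable_comp_fst {F : Type*} [NormedAddCommGroup F]
    (hπ1 : π.map Prod.fst = μ) {f : E → F} (hf : Integrable f μ) :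
    Integrable (fun z : E × E => f z.1) π :=
  (integrable_map_measure (hπ1.symm ▸ hf.aestronglyMeasurable)
    measurable_fst.aemeasurable).1 (hπ1.symm ▸ hf)

lemma integrable_comp_snd {F : Type*} [NormedAddCommGroup F]
    (hπ2 : π.map Prod.snd = ν) {f : E → F} (hf : Integrable f ν) :
    Integrable (fun z : E × E => f z.2) π :=
  (integrable_map_measure (hπ2.symm ▸ hf.aestronglyMeasurable)
    measurable_snd.aemeasurable).1 (hπ2.symm ▸ hf)

lemma integral_comp_fst {F : Type*} [NormedAddCommGroup F] [NormedSpace ℝ F]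
    (hπ1 : π.map Prod.fst = μ) {f : E → F} (hf : AEStronglyMeasurable f μ) :
    ∫ z, f z.1 ∂π = ∫ x, f x ∂μ := by
  rw [← hπ1, integral_map measurable_fst.aemeasurable (hπ1.symm ▸ hf)]

lemma integral_comp_snd {F : Type*} [NormedAddCommGroup F] [NormedSpace ℝ F]
    (hπ2 : π.map Prod.snd = ν) {f : E → F} (hf : AEStronglyMeasurable f ν) :
    ∫ z, f z.2 ∂π = ∫ y, f y ∂ν := by
  rw [← hπ2, integral_map measurable_snd.aemeasurable (hπ2.symm ▸ hf)]

variable (bμ bν : E)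

lemma norm_sub_sq_expand (x y : E) :
    ‖x - y‖ ^ 2 = ‖x - bμ‖ ^ 2 + ‖y - bν‖ ^ 2 + ‖bμ - bν‖ ^ 2
      - 2 * ⟪x - bμ, y - bν⟫ + 2 * ⟪x - bμ, bμ - bν⟫ - 2 * ⟪y - bν, bμ - bν⟫ := by
  have hxy : x - y = (x - bμ) - (y - bν) + (bμ - bν) := by abel
  set u := x - bμ
  set v := y - bν
  set d := bμ - bν
  rw [hxy, ← real_inner_self_eq_norm_sq, ← real_inner_self_eq_norm_sq,
    ← real_inner_self_eq_norm_sq, ← real_inner_self_eq_norm_sq]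
  simp only [inner_add_left, inner_add_right, inner_sub_left, inner_sub_right]
  rw [real_inner_comm v u, real_inner_comm d u, real_inner_comm d v]
  ring

lemma integrable_id'' [IsProbabilityMeasure μ] (hμ2 : ∫⁻ x, edist x bμ ^ 2 ∂μ ≠ ⊤) :
    Integrable (fun x : E => x) μ := by
  have h := (integrable_sub_const μ bμ hμ2).add (integrable_const bμ)
  have e : (fun x : E => x) = fun x => (x - bμ) + bμ := by funext x; abel
  rw [e]; exact h

lemma integral_sub_barycenter [IsProbabilityMeasure μ] (hbμ : bμ = ∫ x, x ∂μ)
    (hμ2 : ∫⁻ x, edist x bμ ^ 2 ∂μ ≠ ⊤) :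
    ∫ x, (x - bμ) ∂μ = 0 := by
  rw [integral_sub (integrable_id'' bμ hμ2) (integrable_const bμ), integral_const]
  simp [hbμ]

lemma integral_inner_sub_const [IsProbabilityMeasure μ] (hbμ : bμ = ∫ x, x ∂μ)
    (hμ2 : ∫⁻ x, edist x bμ ^ 2 ∂μ ≠ ⊤) (d : E) :
    ∫ x, ⟪x - bμ, d⟫ ∂μ = 0 := by
  have h : ∫ x, ⟪d, x - bμ⟫ ∂μ = ⟪d, ∫ x, (x - bμ) ∂μ⟫ :=
    integral_inner (integrable_sub_const μ bμ hμ2) d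
  calc ∫ x, ⟪x - bμ, d⟫ ∂μ = ∫ x, ⟪d, x - bμ⟫ ∂μ := by simp_rw [real_inner_comm]
    _ = 0 := by rw [h, integral_sub_barycenter bμ hbμ hμ2, inner_zero_right]

section Decomp
variable [IsProbabilityMeasure μ] [IsProbabilityMeasure ν]
  (hπ1 : π.map Prod.fst = μ) (hπ2 : π.map Prod.snd = ν)
  (hμ2 : ∫⁻ x, edist x bμ ^ 2 ∂μ ≠ ⊤) (hν2 : ∫⁻ y, edist y bν ^ 2 ∂ν ≠ ⊤)

include hπ1 hπ2 hμ2 hν2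

lemma integrable_inner_coupling :
    Integrable (fun z : E × E => ⟪z.1 - bμ, z.2 - bν⟫) π := by
  haveI := coupling_isProb hπ1
  have h1 : Integrable (fun z : E × E => ‖z.1 - bμ‖ ^ 2) π :=
    integrable_comp_fst hπ1 (integrable_norm_sq μ bμ hμ2)
  have h2 : Integrable (fun z : E × E => ‖z.2 - bν‖ ^ 2) π :=
    integrable_comp_snd hπ2 (integrable_norm_sq ν bν hν2)
  refine Integrable.mono' (((h1.add h2).const_mul (1/2 : ℝ)))
    (Continuous.aestronglyMeasurable (((continuous_fst.sub continuous_const).inner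
      (continuous_snd.sub continuous_const)))) ?_
  filter_upwards with z
  have h0 := abs_real_inner_le_norm (z.1 - bμ) (z.2 - bν)
  rw [Real.norm_eq_abs]
  calc |⟪z.1 - bμ, z.2 - bν⟫| ≤ ‖z.1 - bμ‖ * ‖z.2 - bν‖ := h0
    _ ≤ 1/2 * (‖z.1 - bμ‖ ^ 2 + ‖z.2 - bν‖ ^ 2) := by
        nlinarith [sq_nonneg (‖z.1 - bμ‖ - ‖z.2 - bν‖)]

lemma integrable_cost_coupling :
    Integrable (fun z : E × E => ‖z.1 - z.2‖ ^ 2) π := by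
  haveI := coupling_isProb hπ1
  have h1 : Integrable (fun z : E × E => ‖z.1 - bμ‖ ^ 2) π :=
    integrable_comp_fst hπ1 (integrable_norm_sq μ bμ hμ2)
  have h2 : Integrable (fun z : E × E => ‖z.2 - bν‖ ^ 2) π :=
    integrable_comp_snd hπ2 (integrable_norm_sq ν bν hν2)
  have hg := integrable_inner_coupling bμ bν hπ1 hπ2 hμ2 hν2
  have h3 : Integrable (fun z : E × E => ⟪z.1 - bμ, bμ - bν⟫) π :=
    integrable_comp_fst hπ1 (f := fun x => ⟪x - bμ, bμ - bν⟫) ((integrable_sub_const μ bμ hμ2).inner_const _)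
  have h4 : Integrable (fun z : E × E => ⟪z.2 - bν, bμ - bν⟫) π :=
    integrable_comp_snd hπ2 (f := fun y => ⟪y - bν, bμ - bν⟫) ((integrable_sub_const ν bν hν2).inner_const _)
  have key : (fun z : E × E => ‖z.1 - z.2‖ ^ 2) = fun z =>
      ‖z.1 - bμ‖ ^ 2 + ‖z.2 - bν‖ ^ 2 + ‖bμ - bν‖ ^ 2
      - 2 * ⟪z.1 - bμ, z.2 - bν⟫ + 2 * ⟪z.1 - bμ, bμ - bν⟫ - 2 * ⟪z.2 - bν, bμ - bν⟫ :=
    funext fun z => norm_sub_sq_expand bμ bν z.1 z.2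
  rw [key]
  exact (((((h1.add h2).add (integrable_const _)).sub (hg.const_mul 2)).add
    (h3.const_mul 2)).sub (h4.const_mul 2))

lemma integral_cost_decomp (hbμ : bμ = ∫ x, x ∂μ) (hbν : bν = ∫ y, y ∂ν) :
    ∫ z, ‖z.1 - z.2‖ ^ 2 ∂π = (∫ x, ‖x - bμ‖ ^ 2 ∂μ) + (∫ y, ‖y - bν‖ ^ 2 ∂ν)
      + ‖bμ - bν‖ ^ 2 - 2 * ∫ z : E × E, ⟪z.1 - bμ, z.2 - bν⟫ ∂π := by
  haveI := coupling_isProb hπ1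
  have h1 : Integrable (fun z : E × E => ‖z.1 - bμ‖ ^ 2) π :=
    integrable_comp_fst hπ1 (integrable_norm_sq μ bμ hμ2)
  have h2 : Integrable (fun z : E × E => ‖z.2 - bν‖ ^ 2) π :=
    integrable_comp_snd hπ2 (integrable_norm_sq ν bν hν2)
  have hg := integrable_inner_coupling bμ bν hπ1 hπ2 hμ2 hν2
  have h3 : Integrable (fun z : E × E => ⟪z.1 - bμ, bμ - bν⟫) π :=
    integrable_comp_fst hπ1 (f := fun x => ⟪x - bμ, bμ - bν⟫) ((integrable_sub_const μ bμ hμ2).inner_const _)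
  have h4 : Integrable (fun z : E × E => ⟪z.2 - bν, bμ - bν⟫) π :=
    integrable_comp_snd hπ2 (f := fun y => ⟪y - bν, bμ - bν⟫) ((integrable_sub_const ν bν hν2).inner_const _)
  have key : (fun z : E × E => ‖z.1 - z.2‖ ^ 2) = fun z =>
      ‖z.1 - bμ‖ ^ 2 + ‖z.2 - bν‖ ^ 2 + ‖bμ - bν‖ ^ 2
      - 2 * ⟪z.1 - bμ, z.2 - bν⟫ + 2 * ⟪z.1 - bμ, bμ - bν⟫ - 2 * ⟪z.2 - bν, bμ - bν⟫ :=
    funext fun z => norm_sub_sq_expand bμ bν z.1 z.2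
  have Ia : Integrable (fun z : E × E => ‖z.1 - bμ‖ ^ 2 + ‖z.2 - bν‖ ^ 2) π := h1.add h2
  have Ib : Integrable (fun z : E × E => ‖z.1 - bμ‖ ^ 2 + ‖z.2 - bν‖ ^ 2 + ‖bμ - bν‖ ^ 2) π :=
    Ia.add (integrable_const _)
  have Ic : Integrable (fun z : E × E => ‖z.1 - bμ‖ ^ 2 + ‖z.2 - bν‖ ^ 2 + ‖bμ - bν‖ ^ 2
      - 2 * ⟪z.1 - bμ, z.2 - bν⟫) π := Ib.sub (hg.const_mul 2)
  have Id : Integrable (fun z : E × E => ‖z.1 - bμ‖ ^ 2 + ‖z.2 - bν‖ ^ 2 + ‖bμ - bν‖ ^ 2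
      - 2 * ⟪z.1 - bμ, z.2 - bν⟫ + 2 * ⟪z.1 - bμ, bμ - bν⟫) π := Ic.add (h3.const_mul 2)
  rw [key, integral_sub Id (h4.const_mul 2), integral_add Ic (h3.const_mul 2),
    integral_sub Ib (hg.const_mul 2), integral_add Ia (integrable_const _),
    integral_add h1 h2, integral_const, integral_const_mul, integral_const_mul, integral_const_mul]
  rw [integral_comp_fst hπ1 (f := fun x => ‖x - bμ‖ ^ 2)
      (Continuous.aestronglyMeasurable ((continuous_id.sub continuous_const).norm.pow 2)),
    integral_comp_snd hπ2 (f := fun y => ‖y - bν‖ ^ 2)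
      (Continuous.aestronglyMeasurable ((continuous_id.sub continuous_const).norm.pow 2)),
    integral_comp_fst hπ1 (f := fun x => ⟪x - bμ, bμ - bν⟫)
      (Continuous.aestronglyMeasurable ((continuous_id.sub continuous_const).inner continuous_const)),
    integral_comp_snd hπ2 (f := fun y => ⟪y - bν, bμ - bν⟫)
      (Continuous.aestronglyMeasurable ((continuous_id.sub continuous_const).inner continuous_const)),
    integral_inner_sub_const bμ hbμ hμ2, integral_inner_sub_const bν hbν hν2]
  simp [measure_univ]

end Decomp
end Coupling

lemma wassersteinDist_two {X : Type*} [MeasurableSpace X] [PseudoEMetricSpace X]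
    (μ ν : Measure X) :
    wassersteinDist 2 μ ν =
      (⨅ π ∈ {π : Measure (X × X) | π.map Prod.fst = μ ∧ π.map Prod.snd = ν},
        ∫⁻ z, edist z.1 z.2 ^ (2 : ℕ) ∂π) ^ (2⁻¹ : ℝ) := by
  have h : ∀ x : ℝ≥0∞, x ^ (2 : ℝ) = x ^ (2 : ℕ) := fun x => by
    rw [← ENNReal.rpow_natCast]; norm_num
  simp_rw [wassersteinDist, h]
  norm_num

lemma toReal_rpow_half_sq {c : ℝ} (hc : 0 ≤ c) :
    (((ENNReal.ofReal c) ^ (2⁻¹ : ℝ)).toReal) ^ 2 = c := by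
  rw [← ENNReal.toReal_rpow, ENNReal.toReal_ofReal hc,
    ← Real.rpow_natCast (c ^ (2⁻¹ : ℝ)) 2, ← Real.rpow_mul hc]
  norm_num

section Wp
variable {E : Type*} [NormedAddCommGroup E] [InnerProductSpace ℝ E] [CompleteSpace E]
  [SecondCountableTopology E] [MeasurableSpace E] [BorelSpace E]

lemma lintegral_edist_sq {α : Type*} [MeasurableSpace α] (ρ : Measure α) (f g : α → E)
    (hint : Integrable (fun a => ‖f a - g a‖ ^ 2) ρ) :
    ∫⁻ a, edist (f a) (g a) ^ (2 : ℕ) ∂ρ = ENNReal.ofReal (∫ a, ‖f a - g a‖ ^ 2 ∂ρ) := by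
  rw [ofReal_integral_eq_lintegral_ofReal hint
    (Filter.Eventually.of_forall fun a => sq_nonneg _)]
  refine lintegral_congr fun a => ?_
  rw [edist_dist, dist_eq_norm, ← ENNReal.ofReal_pow (norm_nonneg _)]

variable (μ ν : Measure E) [IsProbabilityMeasure μ] [IsProbabilityMeasure ν]

lemma wasserstein_to_dirac (b : E) (hμ2 : ∫⁻ x, edist x b ^ 2 ∂μ ≠ ⊤) :
    wassersteinDist 2 μ (Measure.dirac b) =
      (ENNReal.ofReal (∫ x, ‖x - b‖ ^ 2 ∂μ)) ^ (2⁻¹ : ℝ) := by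
  rw [wassersteinDist_two]
  congr 1
  have hval : ∀ π : Measure (E × E), π.map Prod.fst = μ → π.map Prod.snd = Measure.dirac b →
      ∫⁻ z, edist z.1 z.2 ^ (2 : ℕ) ∂π = ENNReal.ofReal (∫ x, ‖x - b‖ ^ 2 ∂μ) := by
    intro π h1 h2
    haveI := coupling_isProb h1
    have hae : ∀ᵐ z ∂π, z.2 = b := by
      have h0 : π.map Prod.snd {b}ᶜ = 0 := by rw [h2]; simp
      rw [Measure.map_apply measurable_snd (measurableSet_singleton b).compl] at h0
      exact h0
    calc ∫⁻ z, edist z.1 z.2 ^ (2 : ℕ) ∂π = ∫⁻ z, edist z.1 b ^ (2 : ℕ) ∂π :=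
        lintegral_congr_ae (hae.mono fun z hz => by simp only [hz])
      _ = ∫⁻ x, edist x b ^ (2 : ℕ) ∂μ := by
        rw [← h1]
        exact (lintegral_map (f := fun x : E => edist x b ^ (2 : ℕ))
          (by measurability) measurable_fst).symm
      _ = ENNReal.ofReal (∫ x, ‖x - b‖ ^ 2 ∂μ) :=
        lintegral_edist_sq μ _ _ (integrable_norm_sq μ b hμ2)
  refine le_antisymm ?_ (le_iInf₂ fun π hπ => (hval π hπ.1 hπ.2).ge)
  have hmem : μ.prod (Measure.dirac b) ∈
      {π : Measure (E × E) | π.map Prod.fst = μ ∧ π.map Prod.snd = Measure.dirac b} := by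
    constructor
    · rw [Measure.map_fst_prod]; simp
    · rw [Measure.map_snd_prod]; simp
  exact (iInf₂_le _ hmem).trans_eq (hval _ hmem.1 hmem.2)

lemma integrable_id_of_sub {κ : Measure E} [IsProbabilityMeasure κ] {c : E}
    (h : Integrable (fun x => x - c) κ) : Integrable (fun x : E => x) κ := by
  have h2 := h.add (integrable_const c)
  have e : (fun x : E => x) = fun x => (x - c) + c := by funext x; abel
  rw [e]; exact h2

lemma integral_sub_const_eq {κ : Measure E} [IsProbabilityMeasure κ] {c : E}
    (h : Integrable (fun x => x - c) κ) : ∫ x, (x - c) ∂κ = (∫ x, x ∂κ) - c := by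
  rw [integral_sub (integrable_id_of_sub h) (integrable_const c), integral_const]
  simp

variable (bμ bν : E)

lemma integral_inner_prod_eq (κ lam : Measure E) [IsProbabilityMeasure κ]
    [IsProbabilityMeasure lam] (hκ : Integrable (fun x => x - bμ) κ)
    (hlam : Integrable (fun y => y - bν) lam) :
    ∫ z : E × E, ⟪z.1 - bμ, z.2 - bν⟫ ∂(κ.prod lam) =
      ⟪(∫ x, x ∂κ) - bμ, (∫ y, y ∂lam) - bν⟫ := by
  have hint : Integrable (fun z : E × E => ⟪z.1 - bμ, z.2 - bν⟫) (κ.prod lam) := by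
    refine Integrable.mono' (hκ.norm.mul_prod hlam.norm)
      (Continuous.aestronglyMeasurable ((continuous_fst.sub continuous_const).inner
        (continuous_snd.sub continuous_const))) ?_
    filter_upwards with z
    rw [Real.norm_eq_abs]
    exact abs_real_inner_le_norm _ _
  rw [integral_prod _ hint]
  have inner1 : ∀ x : E, ∫ y, ⟪x - bμ, y - bν⟫ ∂lam = ⟪x - bμ, (∫ y, y ∂lam) - bν⟫ := fun x => by
    rw [integral_inner hlam (x - bμ), integral_sub_const_eq hlam]
  simp_rw [inner1]
  calc ∫ x, ⟪x - bμ, (∫ y, y ∂lam) - bν⟫ ∂κ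
      = ∫ x, ⟪(∫ y, y ∂lam) - bν, x - bμ⟫ ∂κ := by simp_rw [real_inner_comm]
    _ = ⟪(∫ y, y ∂lam) - bν, ∫ x, (x - bμ) ∂κ⟫ := integral_inner hκ _
    _ = ⟪(∫ x, x ∂κ) - bμ, (∫ y, y ∂lam) - bν⟫ := by
        rw [integral_sub_const_eq hκ, real_inner_comm]

end Wp

section Main
variable {E : Type*} [NormedAddCommGroup E] [InnerProductSpace ℝ E] [CompleteSpace E]
  [SecondCountableTopology E] [MeasurableSpace E] [BorelSpace E]
  {μ ν : Measure E} [IsProbabilityMeasure μ] [IsProbabilityMeasure ν] {bμ bν : E}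

lemma cost_coupling_eq {π : Measure (E × E)}
    (hπ1 : π.map Prod.fst = μ) (hπ2 : π.map Prod.snd = ν)
    (hμ2 : ∫⁻ x, edist x bμ ^ 2 ∂μ ≠ ⊤) (hν2 : ∫⁻ y, edist y bν ^ 2 ∂ν ≠ ⊤)
    (hbμ : bμ = ∫ x, x ∂μ) (hbν : bν = ∫ y, y ∂ν) :
    ∫⁻ z, edist z.1 z.2 ^ (2 : ℕ) ∂π =
      ENNReal.ofReal ((∫ x, ‖x - bμ‖ ^ 2 ∂μ) + (∫ y, ‖y - bν‖ ^ 2 ∂ν) + ‖bμ - bν‖ ^ 2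
        - 2 * ∫ z : E × E, ⟪z.1 - bμ, z.2 - bν⟫ ∂π) := by
  rw [← integral_cost_decomp bμ bν hπ1 hπ2 hμ2 hν2 hbμ hbν]
  exact lintegral_edist_sq π Prod.fst Prod.snd
    (integrable_cost_coupling bμ bν hπ1 hπ2 hμ2 hν2)

lemma wasserstein_sq_eq_iff
    (hμ2 : ∫⁻ x, edist x bμ ^ 2 ∂μ ≠ ⊤) (hν2 : ∫⁻ y, edist y bν ^ 2 ∂ν ≠ ⊤)
    (hbμ : bμ = ∫ x, x ∂μ) (hbν : bν = ∫ y, y ∂ν) :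
    ((wassersteinDist 2 μ ν).toReal ^ 2
        = ‖bμ - bν‖ ^ 2 + (∫ x, ‖x - bμ‖ ^ 2 ∂μ) + (∫ y, ‖y - bν‖ ^ 2 ∂ν)) ↔
      (∀ π : Measure (E × E), π.map Prod.fst = μ → π.map Prod.snd = ν →
        ∫ z : E × E, ⟪z.1 - bμ, z.2 - bν⟫ ∂π ≤ 0) := by
  set A := ∫ x, ‖x - bμ‖ ^ 2 ∂μ with hA
  set B := ∫ y, ‖y - bν‖ ^ 2 ∂ν with hB
  set D := ‖bμ - bν‖ ^ 2 with hD
  have hA0 : 0 ≤ A := integral_nonneg fun x => sq_nonneg _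
  have hB0 : 0 ≤ B := integral_nonneg fun y => sq_nonneg _
  have hD0 : 0 ≤ D := sq_nonneg _
  set S := {π : Measure (E × E) | π.map Prod.fst = μ ∧ π.map Prod.snd = ν} with hS
  set I := ⨅ π ∈ S, ∫⁻ z : E × E, edist z.1 z.2 ^ (2 : ℕ) ∂π with hI
  -- the product coupling
  have hmem : μ.prod ν ∈ S := by
    constructor
    · rw [Measure.map_fst_prod]; simp
    · rw [Measure.map_snd_prod]; simp
  have hXprod : ∫ z : E × E, ⟪z.1 - bμ, z.2 - bν⟫ ∂(μ.prod ν) = 0 := by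
    rw [integral_inner_prod_eq bμ bν μ ν (integrable_sub_const μ bμ hμ2)
      (integrable_sub_const ν bν hν2), ← hbμ, ← hbν]
    simp
  have hIle : I ≤ ENNReal.ofReal (A + B + D) := by
    refine (iInf₂_le _ hmem).trans_eq ?_
    rw [cost_coupling_eq hmem.1 hmem.2 hμ2 hν2 hbμ hbν, hXprod]
    norm_num
    rfl
  have hIne : I ≠ ⊤ := ne_top_of_le_ne_top ofReal_ne_top hIle
  have hcost : ∀ π ∈ S, ∫⁻ z : E × E, edist z.1 z.2 ^ (2 : ℕ) ∂π =
      ENNReal.ofReal (A + B + D - 2 * ∫ z : E × E, ⟪z.1 - bμ, z.2 - bν⟫ ∂π) :=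
    fun π hπ => cost_coupling_eq hπ.1 hπ.2 hμ2 hν2 hbμ hbν
  have hnn : ∀ π ∈ S, (0:ℝ) ≤ A + B + D - 2 * ∫ z : E × E, ⟪z.1 - bμ, z.2 - bν⟫ ∂π := by
    intro π hπ
    have := integral_cost_decomp bμ bν hπ.1 hπ.2 hμ2 hν2 hbμ hbν
    have h0 : 0 ≤ ∫ z : E × E, ‖z.1 - z.2‖ ^ 2 ∂π := integral_nonneg fun z => sq_nonneg _
    linarith [this ▸ h0]
  have hLHS : (wassersteinDist 2 μ ν).toReal ^ 2 = I.toReal := by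
    rw [wassersteinDist_two, ← hS, ← hI, ← ENNReal.toReal_rpow,
      ← Real.rpow_natCast (I.toReal ^ (2⁻¹ : ℝ)) 2, ← Real.rpow_mul ENNReal.toReal_nonneg]
    norm_num
  rw [hLHS]
  constructor
  · intro hEq π hπ1 hπ2
    have hIval : I = ENNReal.ofReal (A + B + D) := by
      rw [← ENNReal.ofReal_toReal hIne, hEq]
      congr 1
      ring
    have hle : ENNReal.ofReal (A + B + D) ≤
        ENNReal.ofReal (A + B + D - 2 * ∫ z : E × E, ⟪z.1 - bμ, z.2 - bν⟫ ∂π) := by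
      have hle0 : I ≤ ∫⁻ z : E × E, edist z.1 z.2 ^ (2 : ℕ) ∂π :=
        iInf₂_le _ (show π ∈ S from ⟨hπ1, hπ2⟩)
      rwa [hIval, hcost π ⟨hπ1, hπ2⟩] at hle0
    rw [ENNReal.ofReal_le_ofReal_iff (hnn π ⟨hπ1, hπ2⟩)] at hle
    linarith
  · intro hX
    have hge : ENNReal.ofReal (A + B + D) ≤ I := by
      refine le_iInf₂ fun π hπ => ?_
      rw [hcost π hπ]
      refine ENNReal.ofReal_le_ofReal ?_
      have := hX π hπ.1 hπ.2
      linarith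
    have : I = ENNReal.ofReal (A + B + D) := le_antisymm hIle hge
    rw [this, ENNReal.toReal_ofReal (by linarith)]
    ring

end Main

section Perturb
variable {E : Type*} [NormedAddCommGroup E] [InnerProductSpace ℝ E] [CompleteSpace E]
  [SecondCountableTopology E] [MeasurableSpace E] [BorelSpace E]

lemma isProb_smul_restrict (μ : Measure E) [IsProbabilityMeasure μ] {A : Set E}
    (h0 : μ A ≠ 0) : IsProbabilityMeasure ((μ A)⁻¹ • μ.restrict A) := by
  constructor
  rw [Measure.smul_apply, Measure.restrict_apply_univ, smul_eq_mul,
    ENNReal.inv_mul_cancel h0 (measure_ne_top μ A)]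

lemma moment_smul_restrict (μ : Measure E) [IsFiniteMeasure μ] {A : Set E} {c : E} (hA0 : μ A ≠ 0)
    (hμ2 : ∫⁻ x, edist x c ^ 2 ∂μ ≠ ⊤) :
    ∫⁻ x, edist x c ^ 2 ∂((μ A)⁻¹ • μ.restrict A) ≠ ⊤ := by
  rw [lintegral_smul_measure]
  refine ENNReal.mul_ne_top (by simp [hA0]) ?_
  exact ne_top_of_le_ne_top hμ2 (lintegral_mono' Measure.restrict_le_self le_rfl)

lemma integrable_inner_prod (bμ bν : E) (κ lam : Measure E) [IsProbabilityMeasure κ]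
    [IsProbabilityMeasure lam] (hκ : Integrable (fun x => x - bμ) κ)
    (hlam : Integrable (fun y => y - bν) lam) :
    Integrable (fun z : E × E => ⟪z.1 - bμ, z.2 - bν⟫) (κ.prod lam) := by
  refine Integrable.mono' (hκ.norm.mul_prod hlam.norm)
    (Continuous.aestronglyMeasurable ((continuous_fst.sub continuous_const).inner
      (continuous_snd.sub continuous_const))) ?_
  filter_upwards with z
  rw [Real.norm_eq_abs]
  exact abs_real_inner_le_norm _ _

variable {μ ν : Measure E} [IsProbabilityMeasure μ] [IsProbabilityMeasure ν] {bμ bν : E}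

lemma restrict_eq_self_of_compl_null {μ : Measure E} {s : Set E} (h : μ sᶜ = 0) :
    μ.restrict s = μ :=
  Measure.restrict_eq_self_of_ae_mem (by rw [MeasureTheory.ae_iff]; exact h)

set_option maxHeartbeats 2000000 in
lemma inner_cond_barycenter_eq_zero
    (hX : ∀ π : Measure (E × E), π.map Prod.fst = μ → π.map Prod.snd = ν →
      ∫ z : E × E, ⟪z.1 - bμ, z.2 - bν⟫ ∂π ≤ 0)
    (hμ2 : ∫⁻ x, edist x bμ ^ 2 ∂μ ≠ ⊤) (hν2 : ∫⁻ y, edist y bν ^ 2 ∂ν ≠ ⊤)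
    (hbμ : bμ = ∫ x, x ∂μ) (hbν : bν = ∫ y, y ∂ν)
    {A B : Set E} (hAm : MeasurableSet A) (hBm : MeasurableSet B)
    (hA0 : μ A ≠ 0) (hB0 : ν B ≠ 0) :
    ⟪(∫ x, x ∂((μ A)⁻¹ • μ.restrict A)) - bμ, (∫ y, y ∂((ν B)⁻¹ • ν.restrict B)) - bν⟫ = 0 := by
  by_cases hA1 : μ Aᶜ = 0
  · have hful : (μ A)⁻¹ • μ.restrict A = μ := by
      rw [restrict_eq_self_of_compl_null hA1, (prob_compl_eq_zero_iff hAm).1 hA1]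
      simp
    rw [hful, ← hbμ, sub_self, inner_zero_left]
  by_cases hB1 : ν Bᶜ = 0
  · have hful : (ν B)⁻¹ • ν.restrict B = ν := by
      rw [restrict_eq_self_of_compl_null hB1, (prob_compl_eq_zero_iff hBm).1 hB1]
      simp
    rw [hful, ← hbν, sub_self, inner_zero_right]
  -- main case
  set κ₁ := (μ A)⁻¹ • μ.restrict A with hκ₁def
  set κ₂ := (μ Aᶜ)⁻¹ • μ.restrict Aᶜ with hκ₂def
  set lam₁ := (ν B)⁻¹ • ν.restrict B with hlam₁def
  set lam₂ := (ν Bᶜ)⁻¹ • ν.restrict Bᶜ with hlam₂def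
  haveI pκ₁ : IsProbabilityMeasure κ₁ := isProb_smul_restrict μ hA0
  haveI pκ₂ : IsProbabilityMeasure κ₂ := isProb_smul_restrict μ hA1
  haveI plam₁ : IsProbabilityMeasure lam₁ := isProb_smul_restrict ν hB0
  haveI plam₂ : IsProbabilityMeasure lam₂ := isProb_smul_restrict ν hB1
  have hκ₁2 : ∫⁻ x, edist x bμ ^ 2 ∂κ₁ ≠ ⊤ := moment_smul_restrict μ hA0 hμ2
  have hκ₂2 : ∫⁻ x, edist x bμ ^ 2 ∂κ₂ ≠ ⊤ := moment_smul_restrict μ hA1 hμ2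
  have hlam₁2 : ∫⁻ y, edist y bν ^ 2 ∂lam₁ ≠ ⊤ := moment_smul_restrict ν hB0 hν2
  have hlam₂2 : ∫⁻ y, edist y bν ^ 2 ∂lam₂ ≠ ⊤ := moment_smul_restrict ν hB1 hν2
  have iκ₁ : Integrable (fun x => x - bμ) κ₁ := integrable_sub_const κ₁ bμ hκ₁2
  have iκ₂ : Integrable (fun x => x - bμ) κ₂ := integrable_sub_const κ₂ bμ hκ₂2
  have ilam₁ : Integrable (fun y => y - bν) lam₁ := integrable_sub_const lam₁ bν hlam₁2
  have ilam₂ : Integrable (fun y => y - bν) lam₂ := integrable_sub_const lam₂ bν hlam₂2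
  set α : ℝ := (μ A).toReal with hαdef
  set β : ℝ := (ν B).toReal with hβdef
  set m₁ := ∫ x, x ∂κ₁ with hm₁
  set m₂ := ∫ x, x ∂κ₂ with hm₂
  set n₁ := ∫ y, y ∂lam₁ with hn₁
  set n₂ := ∫ y, y ∂lam₂ with hn₂
  have hαpos : 0 < α := ENNReal.toReal_pos hA0 (measure_ne_top μ A)
  have hβpos : 0 < β := ENNReal.toReal_pos hB0 (measure_ne_top ν B)
  have hα₂ : (μ Aᶜ).toReal = 1 - α := by
    have h := measure_add_measure_compl (μ := μ) hAm
    rw [measure_univ] at h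
    have := ENNReal.toReal_add (measure_ne_top μ A) (measure_ne_top μ Aᶜ)
    rw [h] at this
    simp only [ENNReal.toReal_one] at this
    linarith [this.symm]
  have hβ₂ : (ν Bᶜ).toReal = 1 - β := by
    have h := measure_add_measure_compl (μ := ν) hBm
    rw [measure_univ] at h
    have := ENNReal.toReal_add (measure_ne_top ν B) (measure_ne_top ν Bᶜ)
    rw [h] at this
    simp only [ENNReal.toReal_one] at this
    linarith [this.symm]
  have hα₂pos : 0 < 1 - α := by
    rw [← hα₂]; exact ENNReal.toReal_pos hA1 (measure_ne_top μ Aᶜ)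
  have hβ₂pos : 0 < 1 - β := by
    rw [← hβ₂]; exact ENNReal.toReal_pos hB1 (measure_ne_top ν Bᶜ)
  have hrA : μ.restrict A = μ A • κ₁ := by
    rw [hκ₁def, smul_smul, ENNReal.mul_inv_cancel hA0 (measure_ne_top μ A), one_smul]
  have hrA₂ : μ.restrict Aᶜ = μ Aᶜ • κ₂ := by
    rw [hκ₂def, smul_smul, ENNReal.mul_inv_cancel hA1 (measure_ne_top μ Aᶜ), one_smul]
  have hrB : ν.restrict B = ν B • lam₁ := by
    rw [hlam₁def, smul_smul, ENNReal.mul_inv_cancel hB0 (measure_ne_top ν B), one_smul]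
  have hrB₂ : ν.restrict Bᶜ = ν Bᶜ • lam₂ := by
    rw [hlam₂def, smul_smul, ENNReal.mul_inv_cancel hB1 (measure_ne_top ν Bᶜ), one_smul]
  have hid : Integrable (fun x : E => x) μ := integrable_id'' bμ hμ2
  have hidν : Integrable (fun y : E => y) ν := integrable_id'' bν hν2
  have hIA : ∫ x, x ∂(μ.restrict A) = α • m₁ := by
    rw [hrA, integral_smul_measure, ← hαdef, hm₁]
  have hIA₂ : ∫ x, x ∂(μ.restrict Aᶜ) = (1 - α) • m₂ := by
    rw [hrA₂, integral_smul_measure, hα₂, hm₂]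
  have hIB : ∫ y, y ∂(ν.restrict B) = β • n₁ := by
    rw [hrB, integral_smul_measure, ← hβdef, hn₁]
  have hIB₂ : ∫ y, y ∂(ν.restrict Bᶜ) = (1 - β) • n₂ := by
    rw [hrB₂, integral_smul_measure, hβ₂, hn₂]
  have hbdecμ : bμ = α • m₁ + (1 - α) • m₂ := by
    rw [hbμ, ← Measure.restrict_add_restrict_compl (μ := μ) hAm,
      integral_add_measure hid.restrict hid.restrict, hIA, hIA₂]
  have hbdecν : bν = β • n₁ + (1 - β) • n₂ := by
    rw [hbν, ← Measure.restrict_add_restrict_compl (μ := ν) hBm,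
      integral_add_measure hidν.restrict hidν.restrict, hIB, hIB₂]
  have huzero : α • (m₁ - bμ) + (1 - α) • (m₂ - bμ) = 0 := by
    calc α • (m₁ - bμ) + (1 - α) • (m₂ - bμ)
        = (α • m₁ + (1 - α) • m₂) - (α + (1 - α)) • bμ := by
          rw [add_smul, smul_sub, smul_sub]; abel
      _ = bμ - (1 : ℝ) • bμ := by rw [← hbdecμ]; norm_num
      _ = 0 := by simp
  have hvzero : β • (n₁ - bν) + (1 - β) • (n₂ - bν) = 0 := by
    calc β • (n₁ - bν) + (1 - β) • (n₂ - bν)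
        = (β • n₁ + (1 - β) • n₂) - (β + (1 - β)) • bν := by
          rw [add_smul, smul_sub, smul_sub]; abel
      _ = bν - (1 : ℝ) • bν := by rw [← hbdecν]; norm_num
      _ = 0 := by simp
  have hinnerL : ∀ w : E, (1 - α) * ⟪m₂ - bμ, w⟫ = -(α * ⟪m₁ - bμ, w⟫) := fun w => by
    have h3 : (1 - α) • (m₂ - bμ) = -(α • (m₁ - bμ)) := eq_neg_of_add_eq_zero_right huzero
    calc (1 - α) * ⟪m₂ - bμ, w⟫ = ⟪(1 - α) • (m₂ - bμ), w⟫ := (real_inner_smul_left _ _ _).symm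
      _ = ⟪-(α • (m₁ - bμ)), w⟫ := by rw [h3]
      _ = -(α * ⟪m₁ - bμ, w⟫) := by rw [inner_neg_left, real_inner_smul_left]
  have hinnerR : ∀ w : E, (1 - β) * ⟪w, n₂ - bν⟫ = -(β * ⟪w, n₁ - bν⟫) := fun w => by
    have h3 : (1 - β) • (n₂ - bν) = -(β • (n₁ - bν)) := eq_neg_of_add_eq_zero_right hvzero
    calc (1 - β) * ⟪w, n₂ - bν⟫ = ⟪w, (1 - β) • (n₂ - bν)⟫ := (real_inner_smul_right _ _ _).symm
      _ = ⟪w, -(β • (n₁ - bν))⟫ := by rw [h3]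
      _ = -(β * ⟪w, n₁ - bν⟫) := by rw [inner_neg_right, real_inner_smul_right]
  set p11 := ⟪m₁ - bμ, n₁ - bν⟫ with hp11
  set p12 := ⟪m₁ - bμ, n₂ - bν⟫ with hp12
  set p21 := ⟪m₂ - bμ, n₁ - bν⟫ with hp21
  set p22 := ⟪m₂ - bμ, n₂ - bν⟫ with hp22
  have e12 : p12 = -(β * p11) / (1 - β) := by
    rw [eq_div_iff (ne_of_gt hβ₂pos), mul_comm]
    exact hinnerR (m₁ - bμ)
  have e21 : p21 = -(α * p11) / (1 - α) := by
    rw [eq_div_iff (ne_of_gt hα₂pos), mul_comm]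
    exact hinnerL (n₁ - bν)
  have e22 : p22 = -(α * p12) / (1 - α) := by
    rw [eq_div_iff (ne_of_gt hα₂pos), mul_comm]
    exact hinnerL (n₂ - bν)
  have key : ∀ s : ℝ, 0 ≤ α * β + s → 0 ≤ α * (1 - β) - s → 0 ≤ (1 - α) * β - s →
      0 ≤ (1 - α) * (1 - β) + s → s * p11 ≤ 0 := by
    intro s h11 h12 h21 h22
    set π := ENNReal.ofReal (α * β + s) • (κ₁.prod lam₁)
      + ENNReal.ofReal (α * (1 - β) - s) • (κ₁.prod lam₂)
      + ENNReal.ofReal ((1 - α) * β - s) • (κ₂.prod lam₁)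
      + ENNReal.ofReal ((1 - α) * (1 - β) + s) • (κ₂.prod lam₂) with hπdef
    have hμA : ENNReal.ofReal α = μ A := by
      rw [hαdef]; exact ENNReal.ofReal_toReal (measure_ne_top μ A)
    have hμA₂ : ENNReal.ofReal (1 - α) = μ Aᶜ := by
      rw [← hα₂]; exact ENNReal.ofReal_toReal (measure_ne_top μ Aᶜ)
    have hνB : ENNReal.ofReal β = ν B := by
      rw [hβdef]; exact ENNReal.ofReal_toReal (measure_ne_top ν B)
    have hνB₂ : ENNReal.ofReal (1 - β) = ν Bᶜ := by
      rw [← hβ₂]; exact ENNReal.ofReal_toReal (measure_ne_top ν Bᶜ)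
    have hfst : π.map Prod.fst = μ := by
      rw [hπdef, Measure.map_add _ _ measurable_fst, Measure.map_add _ _ measurable_fst,
        Measure.map_add _ _ measurable_fst, Measure.map_smul, Measure.map_smul,
        Measure.map_smul, Measure.map_smul, Measure.map_fst_prod, Measure.map_fst_prod,
        Measure.map_fst_prod, Measure.map_fst_prod]
      simp only [measure_univ, one_smul]
      rw [← add_smul, add_assoc, ← add_smul, ← ENNReal.ofReal_add h11 h12,
        ← ENNReal.ofReal_add h21 h22]
      have e1 : α * β + s + (α * (1 - β) - s) = α := by ring
      have e2 : (1 - α) * β - s + ((1 - α) * (1 - β) + s) = 1 - α := by ring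
      rw [e1, e2, hμA, hμA₂, ← hrA, ← hrA₂, Measure.restrict_add_restrict_compl hAm]
    have hsnd : π.map Prod.snd = ν := by
      rw [hπdef, Measure.map_add _ _ measurable_snd, Measure.map_add _ _ measurable_snd,
        Measure.map_add _ _ measurable_snd, Measure.map_smul, Measure.map_smul,
        Measure.map_smul, Measure.map_smul, Measure.map_snd_prod, Measure.map_snd_prod,
        Measure.map_snd_prod, Measure.map_snd_prod]
      simp only [measure_univ, one_smul]
      have hre : ENNReal.ofReal (α * β + s) • lam₁ + ENNReal.ofReal (α * (1 - β) - s) • lam₂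
          + ENNReal.ofReal ((1 - α) * β - s) • lam₁ + ENNReal.ofReal ((1 - α) * (1 - β) + s) • lam₂
          = (ENNReal.ofReal (α * β + s) + ENNReal.ofReal ((1 - α) * β - s)) • lam₁
            + (ENNReal.ofReal (α * (1 - β) - s) + ENNReal.ofReal ((1 - α) * (1 - β) + s)) • lam₂ := by
        rw [add_smul, add_smul]
        abel
      rw [hre, ← ENNReal.ofReal_add h11 h21, ← ENNReal.ofReal_add h12 h22]
      have e1 : α * β + s + ((1 - α) * β - s) = β := by ring
      have e2 : α * (1 - β) - s + ((1 - α) * (1 - β) + s) = 1 - β := by ring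
      rw [e1, e2, hνB, hνB₂, ← hrB, ← hrB₂, Measure.restrict_add_restrict_compl hBm]
    have hXle := hX π hfst hsnd
    have i11 : Integrable (fun z : E × E => ⟪z.1 - bμ, z.2 - bν⟫) (κ₁.prod lam₁) :=
      integrable_inner_prod bμ bν κ₁ lam₁ iκ₁ ilam₁
    have i12 : Integrable (fun z : E × E => ⟪z.1 - bμ, z.2 - bν⟫) (κ₁.prod lam₂) :=
      integrable_inner_prod bμ bν κ₁ lam₂ iκ₁ ilam₂
    have i21 : Integrable (fun z : E × E => ⟪z.1 - bμ, z.2 - bν⟫) (κ₂.prod lam₁) :=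
      integrable_inner_prod bμ bν κ₂ lam₁ iκ₂ ilam₁
    have i22 : Integrable (fun z : E × E => ⟪z.1 - bμ, z.2 - bν⟫) (κ₂.prod lam₂) :=
      integrable_inner_prod bμ bν κ₂ lam₂ iκ₂ ilam₂
    have j11 := i11.smul_measure (c := ENNReal.ofReal (α * β + s)) ENNReal.ofReal_ne_top
    have j12 := i12.smul_measure (c := ENNReal.ofReal (α * (1 - β) - s)) ENNReal.ofReal_ne_top
    have j21 := i21.smul_measure (c := ENNReal.ofReal ((1 - α) * β - s)) ENNReal.ofReal_ne_top
    have j22 := i22.smul_measure (c := ENNReal.ofReal ((1 - α) * (1 - β) + s)) ENNReal.ofReal_ne_top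
    rw [hπdef, integral_add_measure ((j11.add_measure j12).add_measure j21) j22,
      integral_add_measure (j11.add_measure j12) j21, integral_add_measure j11 j12,
      integral_smul_measure, integral_smul_measure, integral_smul_measure,
      integral_smul_measure,
      integral_inner_prod_eq bμ bν κ₁ lam₁ iκ₁ ilam₁,
      integral_inner_prod_eq bμ bν κ₁ lam₂ iκ₁ ilam₂,
      integral_inner_prod_eq bμ bν κ₂ lam₁ iκ₂ ilam₁,
      integral_inner_prod_eq bμ bν κ₂ lam₂ iκ₂ ilam₂,
      ENNReal.toReal_ofReal h11, ENNReal.toReal_ofReal h12, ENNReal.toReal_ofReal h21,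
      ENNReal.toReal_ofReal h22] at hXle
    rw [← hm₁, ← hm₂, ← hn₁, ← hn₂, ← hp11, ← hp12, ← hp21, ← hp22] at hXle
    simp only [smul_eq_mul] at hXle
    rw [e12, e21, e22, e12] at hXle
    have hc : 0 < (1 - α) * (1 - β) := mul_pos hα₂pos hβ₂pos
    have hkey : (α * β + s) * p11 + (α * (1 - β) - s) * (-(β * p11) / (1 - β))
        + ((1 - α) * β - s) * (-(α * p11) / (1 - α))
        + ((1 - α) * (1 - β) + s) * (-(α * (-(β * p11) / (1 - β))) / (1 - α))
        = s * p11 / ((1 - α) * (1 - β)) := by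
      field_simp
      ring
    rw [hkey] at hXle
    have : s * p11 = (s * p11 / ((1 - α) * (1 - β))) * ((1 - α) * (1 - β)) := by
      field_simp
    rw [this]
    exact mul_nonpos_iff.2 (Or.inr ⟨hXle, hc.le⟩)
  have hab : 0 < α * β := mul_pos hαpos hβpos
  have hab₂ : 0 < α * (1 - β) := mul_pos hαpos hβ₂pos
  have ha₂b : 0 < (1 - α) * β := mul_pos hα₂pos hβpos
  have ha₂b₂ : 0 < (1 - α) * (1 - β) := mul_pos hα₂pos hβ₂pos
  have hg1 : p11 ≤ 0 := by
    set s := min (α * (1 - β)) ((1 - α) * β) with hsdef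
    have hs : 0 < s := lt_min hab₂ ha₂b
    have hl1 : s ≤ α * (1 - β) := min_le_left _ _
    have hl2 : s ≤ (1 - α) * β := min_le_right _ _
    have h := key s (by linarith) (by linarith) (by linarith) (by linarith)
    nlinarith
  have hg2 : 0 ≤ p11 := by
    set s := min (α * β) ((1 - α) * (1 - β)) with hsdef
    have hs : 0 < s := lt_min hab ha₂b₂
    have hl1 : s ≤ α * β := min_le_left _ _
    have hl2 : s ≤ (1 - α) * (1 - β) := min_le_right _ _
    have h := key (-s) (by linarith) (by linarith) (by linarith) (by linarith)
    nlinarith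
  exact le_antisymm hg1 hg2

end Perturb

section Geometry
variable {E : Type*} [NormedAddCommGroup E] [InnerProductSpace ℝ E] [CompleteSpace E]
  [SecondCountableTopology E] [MeasurableSpace E] [BorelSpace E]
  {μ ν : Measure E} [IsProbabilityMeasure μ] [IsProbabilityMeasure ν] {bμ bν : E}

lemma cond_barycenter_close {x₀ : E} {ε : ℝ} (hε : 0 < ε)
    (hA0 : μ (closedBall x₀ ε) ≠ 0) (hμ2 : ∫⁻ x, edist x bμ ^ 2 ∂μ ≠ ⊤) :
    ‖(∫ x, x ∂((μ (closedBall x₀ ε))⁻¹ • μ.restrict (closedBall x₀ ε))) - x₀‖ ≤ ε := by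
  set A := closedBall x₀ ε with hA
  set κ := (μ A)⁻¹ • μ.restrict A with hκ
  haveI : IsProbabilityMeasure κ := isProb_smul_restrict μ hA0
  have hκ2 : ∫⁻ x, edist x bμ ^ 2 ∂κ ≠ ⊤ := moment_smul_restrict μ hA0 hμ2
  have hid : Integrable (fun x : E => x) κ := integrable_id'' bμ hκ2
  have hsub : ∫ x, (x - x₀) ∂κ = (∫ x, x ∂κ) - x₀ := by
    rw [integral_sub hid (integrable_const x₀), integral_const]
    simp
  rw [← hsub]
  have haeA : ∀ᵐ x ∂κ, x ∈ A := by
    rw [MeasureTheory.ae_iff]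
    have : κ Aᶜ = 0 := by
      rw [hκ, Measure.smul_apply, Measure.restrict_apply (measurableSet_closedBall.compl)]
      simp [hA]
    exact this
  have := norm_integral_le_of_norm_le_const (μ := κ) (f := fun x => x - x₀) (C := ε)
    (haeA.mono fun x hx => by
      rw [← dist_eq_norm]
      exact mem_closedBall.1 hx)
  simpa [measure_univ] using this

lemma inner_support_eq_zero
    (hX : ∀ π : Measure (E × E), π.map Prod.fst = μ → π.map Prod.snd = ν →
      ∫ z : E × E, ⟪z.1 - bμ, z.2 - bν⟫ ∂π ≤ 0)
    (hμ2 : ∫⁻ x, edist x bμ ^ 2 ∂μ ≠ ⊤) (hν2 : ∫⁻ y, edist y bν ^ 2 ∂ν ≠ ⊤)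
    (hbμ : bμ = ∫ x, x ∂μ) (hbν : bν = ∫ y, y ∂ν)
    {x₀ y₀ : E} (hx₀ : x₀ ∈ msupport μ) (hy₀ : y₀ ∈ msupport ν) :
    ⟪x₀ - bμ, y₀ - bν⟫ = 0 := by
  have hbound : ∀ ε : ℝ, 0 < ε → ε ≤ 1 →
      |⟪x₀ - bμ, y₀ - bν⟫| ≤ ε * (‖y₀ - bν‖ + ‖x₀ - bμ‖ + 1) := by
    intro ε hε hε1
    have hA0 : μ (closedBall x₀ ε) ≠ 0 := measure_closedBall_ne_zero μ hx₀ hε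
    have hB0 : ν (closedBall y₀ ε) ≠ 0 := measure_closedBall_ne_zero ν hy₀ hε
    set mA := ∫ x, x ∂((μ (closedBall x₀ ε))⁻¹ • μ.restrict (closedBall x₀ ε)) with hmA
    set nB := ∫ y, y ∂((ν (closedBall y₀ ε))⁻¹ • ν.restrict (closedBall y₀ ε)) with hnB
    have hzero : ⟪mA - bμ, nB - bν⟫ = 0 :=
      inner_cond_barycenter_eq_zero hX hμ2 hν2 hbμ hbν measurableSet_closedBall
        measurableSet_closedBall hA0 hB0
    have hdA : ‖mA - x₀‖ ≤ ε := cond_barycenter_close hε hA0 hμ2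
    have hdB : ‖nB - y₀‖ ≤ ε := cond_barycenter_close hε hB0 hν2
    have hsplit : ⟪x₀ - bμ, y₀ - bν⟫
        = ⟪x₀ - mA, y₀ - bν⟫ + ⟪mA - bμ, y₀ - nB⟫ + ⟪mA - bμ, nB - bν⟫ := by
      have e1 : x₀ - bμ = (x₀ - mA) + (mA - bμ) := by abel
      have e2 : y₀ - bν = (y₀ - nB) + (nB - bν) := by abel
      rw [e1, inner_add_left]
      nth_rewrite 2 [e2]
      rw [inner_add_right]
      ring
    rw [hsplit, hzero, add_zero]
    have h1 : |⟪x₀ - mA, y₀ - bν⟫| ≤ ε * ‖y₀ - bν‖ := by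
      refine (abs_real_inner_le_norm _ _).trans ?_
      have : ‖x₀ - mA‖ ≤ ε := by rwa [norm_sub_rev]
      exact mul_le_mul_of_nonneg_right this (norm_nonneg _)
    have h2 : |⟪mA - bμ, y₀ - nB⟫| ≤ (‖x₀ - bμ‖ + ε) * ε := by
      refine (abs_real_inner_le_norm _ _).trans ?_
      have ha : ‖mA - bμ‖ ≤ ‖x₀ - bμ‖ + ε := by
        calc ‖mA - bμ‖ = ‖(x₀ - bμ) + (mA - x₀)‖ := by rw [show (x₀ - bμ) + (mA - x₀) = mA - bμ by abel]
          _ ≤ ‖x₀ - bμ‖ + ‖mA - x₀‖ := norm_add_le _ _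
          _ ≤ ‖x₀ - bμ‖ + ε := by linarith
      have hb : ‖y₀ - nB‖ ≤ ε := by rwa [norm_sub_rev]
      exact mul_le_mul ha hb (norm_nonneg _) (by positivity)
    calc |⟪x₀ - mA, y₀ - bν⟫ + ⟪mA - bμ, y₀ - nB⟫|
        ≤ |⟪x₀ - mA, y₀ - bν⟫| + |⟪mA - bμ, y₀ - nB⟫| := abs_add_le _ _
      _ ≤ ε * ‖y₀ - bν‖ + (‖x₀ - bμ‖ + ε) * ε := by linarith
      _ ≤ ε * (‖y₀ - bν‖ + ‖x₀ - bμ‖ + 1) := by nlinarith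
  by_contra hne
  have hpos : 0 < |⟪x₀ - bμ, y₀ - bν⟫| := abs_pos.2 hne
  set c := ‖y₀ - bν‖ + ‖x₀ - bμ‖ + 1 with hc
  have hcpos : 0 < c := by positivity
  set ε := min 1 (|⟪x₀ - bμ, y₀ - bν⟫| / (2 * c)) with hεdef
  have hεpos : 0 < ε := lt_min one_pos (by positivity)
  have h := hbound ε hεpos (min_le_left _ _)
  have hle : ε ≤ |⟪x₀ - bμ, y₀ - bν⟫| / (2 * c) := min_le_right _ _
  rw [le_div_iff₀ (by positivity)] at hle
  nlinarith

lemma backward_X_eq_zero (hbμ : bμ = ∫ x, x ∂μ) (hbν : bν = ∫ y, y ∂ν)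
    (hμ2 : ∫⁻ x, edist x bμ ^ 2 ∂μ ≠ ⊤) (hν2 : ∫⁻ y, edist y bν ^ 2 ∂ν ≠ ⊤)
    (L M : AffineSubspace ℝ E) (hLc : IsClosed (L : Set E)) (hMc : IsClosed (M : Set E))
    (horth : ∀ u ∈ L, ∀ u' ∈ L, ∀ w ∈ M, ∀ w' ∈ M, (inner ℝ (u - u') (w - w') : ℝ) = 0)
    (hsμ : msupport μ ⊆ (L : Set E)) (hsν : msupport ν ⊆ (M : Set E))
    {π : Measure (E × E)} (hπ1 : π.map Prod.fst = μ) (hπ2 : π.map Prod.snd = ν) :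
    ∫ z : E × E, ⟪z.1 - bμ, z.2 - bν⟫ ∂π = 0 := by
  have hLnull : μ (L : Set E)ᶜ = 0 := compl_null_of_msupport_subset μ hsμ
  have hMnull : ν (M : Set E)ᶜ = 0 := compl_null_of_msupport_subset ν hsν
  have hbμL : bμ ∈ L := by
    rw [hbμ]
    exact Convex.integral_mem (L.convex) hLc
      (by rw [MeasureTheory.ae_iff]; exact hLnull) (integrable_id'' bμ hμ2)
  have hbνM : bν ∈ M := by
    rw [hbν]
    exact Convex.integral_mem (M.convex) hMc
      (by rw [MeasureTheory.ae_iff]; exact hMnull) (integrable_id'' bν hν2)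
  have hae1 : ∀ᵐ z : E × E ∂π, z.1 ∈ L := by
    rw [MeasureTheory.ae_iff]
    have : π (Prod.fst ⁻¹' (L : Set E)ᶜ) = 0 := by
      rw [← Measure.map_apply measurable_fst hLc.measurableSet.compl, hπ1]
      exact hLnull
    simpa [Set.preimage] using this
  have hae2 : ∀ᵐ z : E × E ∂π, z.2 ∈ M := by
    rw [MeasureTheory.ae_iff]
    have : π (Prod.snd ⁻¹' (M : Set E)ᶜ) = 0 := by
      rw [← Measure.map_apply measurable_snd hMc.measurableSet.compl, hπ2]
      exact hMnull
    simpa [Set.preimage] using this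
  have : ∫ z : E × E, ⟪z.1 - bμ, z.2 - bν⟫ ∂π = ∫ _z : E × E, (0 : ℝ) ∂π := by
    refine integral_congr_ae ?_
    filter_upwards [hae1, hae2] with z h1 h2
    exact horth z.1 h1 bμ hbμL z.2 h2 bν hbνM
  rw [this, integral_zero]

lemma forward_exists
    (hinner : ∀ x ∈ msupport μ, ∀ y ∈ msupport ν, ⟪x - bμ, y - bν⟫ = 0) :
    ∃ L M : AffineSubspace ℝ E, IsClosed (L : Set E) ∧ IsClosed (M : Set E) ∧
      (∀ u ∈ L, ∀ u' ∈ L, ∀ w ∈ M, ∀ w' ∈ M, (inner ℝ (u - u') (w - w') : ℝ) = 0) ∧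
      msupport μ ⊆ (L : Set E) ∧ msupport ν ⊆ (M : Set E) := by
  set Vμ := Submodule.span ℝ ((fun x => x - bμ) '' msupport μ) with hVμ
  set Vν := Submodule.span ℝ ((fun y => y - bν) '' msupport ν) with hVν
  have hortho0 : ∀ u ∈ Vμ, ∀ v ∈ Vν, ⟪u, v⟫ = 0 := by
    have := Submodule.isOrtho_span (𝕜 := ℝ) (E := E)
      (s := (fun x => x - bμ) '' msupport μ) (t := (fun y => y - bν) '' msupport ν)
    have hgen : ∀ ⦃u : E⦄, u ∈ (fun x => x - bμ) '' msupport μ →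
        ∀ ⦃v : E⦄, v ∈ (fun y => y - bν) '' msupport ν → ⟪u, v⟫ = 0 := by
      rintro u ⟨x, hx, rfl⟩ v ⟨y, hy, rfl⟩
      exact hinner x hx y hy
    have h := this.2 hgen
    exact fun u hu v hv => Submodule.isOrtho_iff_inner_eq.1 h u hu v hv
  have hortho1 : ∀ u ∈ Vμ, ∀ v ∈ Vν.topologicalClosure, ⟪u, v⟫ = 0 := by
    intro u hu v hv
    have hsub : (Vν : Set E) ⊆ {w : E | ⟪u, w⟫ = 0} := fun w hw => hortho0 u hu w hw
    have hcl : closure (Vν : Set E) ⊆ {w : E | ⟪u, w⟫ = 0} :=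
      closure_minimal hsub (isClosed_eq (continuous_const.inner continuous_id) continuous_const)
    have : v ∈ closure (Vν : Set E) := by rwa [← Submodule.topologicalClosure_coe]
    exact hcl this
  have hortho2 : ∀ u ∈ Vμ.topologicalClosure, ∀ v ∈ Vν.topologicalClosure, ⟪u, v⟫ = 0 := by
    intro u hu v hv
    have hsub : (Vμ : Set E) ⊆ {w : E | ⟪w, v⟫ = 0} := fun w hw => hortho1 w hw v hv
    have hcl : closure (Vμ : Set E) ⊆ {w : E | ⟪w, v⟫ = 0} :=
      closure_minimal hsub (isClosed_eq (continuous_id.inner continuous_const) continuous_const)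
    have : u ∈ closure (Vμ : Set E) := by rwa [← Submodule.topologicalClosure_coe]
    exact hcl this
  refine ⟨AffineSubspace.mk' bμ Vμ.topologicalClosure,
    AffineSubspace.mk' bν Vν.topologicalClosure, ?_, ?_, ?_, ?_, ?_⟩
  · have : (AffineSubspace.mk' bμ Vμ.topologicalClosure : Set E)
        = (fun x => x - bμ) ⁻¹' (Vμ.topologicalClosure : Set E) := by
      ext x
      simp only [Set.mem_preimage, SetLike.mem_coe, AffineSubspace.mem_coe]
      rw [AffineSubspace.mem_mk', vsub_eq_sub]
    rw [this]
    exact (Submodule.isClosed_topologicalClosure _).preimage (continuous_id.sub continuous_const)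
  · have : (AffineSubspace.mk' bν Vν.topologicalClosure : Set E)
        = (fun y => y - bν) ⁻¹' (Vν.topologicalClosure : Set E) := by
      ext y
      simp only [Set.mem_preimage, SetLike.mem_coe, AffineSubspace.mem_coe]
      rw [AffineSubspace.mem_mk', vsub_eq_sub]
    rw [this]
    exact (Submodule.isClosed_topologicalClosure _).preimage (continuous_id.sub continuous_const)
  · intro u hu u' hu' w hw w' hw'
    have h1 : u - u' ∈ Vμ.topologicalClosure := by
      rw [← vsub_eq_sub, ← AffineSubspace.direction_mk' bμ Vμ.topologicalClosure]
      exact AffineSubspace.vsub_mem_direction hu hu'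
    have h2 : w - w' ∈ Vν.topologicalClosure := by
      rw [← vsub_eq_sub, ← AffineSubspace.direction_mk' bν Vν.topologicalClosure]
      exact AffineSubspace.vsub_mem_direction hw hw'
    exact hortho2 _ h1 _ h2
  · intro x hx
    have hmem : x - bμ ∈ Vμ.topologicalClosure :=
      Vμ.le_topologicalClosure (Submodule.subset_span ⟨x, hx, rfl⟩)
    exact (AffineSubspace.mem_coe _ _).2 ((AffineSubspace.mem_mk').2
      (by rw [vsub_eq_sub]; exact hmem))
  · intro y hy
    have hmem : y - bν ∈ Vν.topologicalClosure :=
      Vν.le_topologicalClosure (Submodule.subset_span ⟨y, hy, rfl⟩)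
    exact (AffineSubspace.mem_coe _ _).2 ((AffineSubspace.mem_mk').2
      (by rw [vsub_eq_sub]; exact hmem))

end Geometry


/-- Pythagorean-type identity for `W₂` characterizing measures supported on
orthogonal closed affine subspaces; here `bμ = m(μ)`, `bν = m(ν)` are the barycenters and
`σ = d_{W₂}(μ, δ_{m(μ)})`, `τ = d_{W₂}(ν, δ_{m(ν)})`. -/
theorem W2_pythagoras_iff_orthogonal_supports
    {E : Type*} [NormedAddCommGroup E] [InnerProductSpace ℝ E] [CompleteSpace E]
    [SecondCountableTopology E] [MeasurableSpace E] [BorelSpace E]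
    (μ ν : Measure E) (hμ : MemWp 2 μ) (hν : MemWp 2 ν)
    (bμ bν : E) (hbμ : bμ = ∫ x, x ∂μ) (hbν : bν = ∫ x, x ∂ν)
    (σ τ : ℝ)
    (hσ : σ = (wassersteinDist 2 μ (Measure.dirac bμ)).toReal)
    (hτ : τ = (wassersteinDist 2 ν (Measure.dirac bν)).toReal) :
    (wassersteinDist 2 μ ν).toReal ^ 2 = ‖bμ - bν‖ ^ 2 + σ ^ 2 + τ ^ 2 ↔
      ∃ L M : AffineSubspace ℝ E, IsClosed (L : Set E) ∧ IsClosed (M : Set E) ∧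
        (∀ u ∈ L, ∀ u' ∈ L, ∀ w ∈ M, ∀ w' ∈ M, (inner ℝ (u - u') (w - w') : ℝ) = 0) ∧
        msupport μ ⊆ (L : Set E) ∧ msupport ν ⊆ (M : Set E) := by
  obtain ⟨hprobμ, x₀, hx₀⟩ := hμ
  obtain ⟨hprobν, y₀, hy₀⟩ := hν
  haveI := hprobμ
  haveI := hprobν
  have hpow : ∀ c x : E, edist x c ^ (2 : ℝ) = edist x c ^ (2 : ℕ) := fun c x => by
    rw [← ENNReal.rpow_natCast]; norm_num
  simp_rw [hpow] at hx₀ hy₀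
  have hμ2 : ∫⁻ x, edist x bμ ^ 2 ∂μ ≠ ⊤ := moment_transfer μ hx₀ bμ
  have hν2 : ∫⁻ y, edist y bν ^ 2 ∂ν ≠ ⊤ := moment_transfer ν hy₀ bν
  have hA0 : 0 ≤ ∫ x, ‖x - bμ‖ ^ 2 ∂μ := integral_nonneg fun x => sq_nonneg _
  have hB0 : 0 ≤ ∫ y, ‖y - bν‖ ^ 2 ∂ν := integral_nonneg fun y => sq_nonneg _
  have hσ2 : σ ^ 2 = ∫ x, ‖x - bμ‖ ^ 2 ∂μ := by
    rw [hσ, wasserstein_to_dirac μ bμ hμ2, toReal_rpow_half_sq hA0]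
  have hτ2 : τ ^ 2 = ∫ y, ‖y - bν‖ ^ 2 ∂ν := by
    rw [hτ, wasserstein_to_dirac ν bν hν2, toReal_rpow_half_sq hB0]
  rw [hσ2, hτ2, wasserstein_sq_eq_iff hμ2 hν2 hbμ hbν]
  constructor
  · intro hXc
    exact forward_exists fun x hx y hy =>
      inner_support_eq_zero hXc hμ2 hν2 hbμ hbν hx hy
  · rintro ⟨L, M, hLc, hMc, horth, hsμ, hsν⟩ π hπ1 hπ2
    rw [backward_X_eq_zero hbμ hbν hμ2 hν2 L M hLc hMc horth hsμ hsν hπ1 hπ2]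
end
end

section
/- Let E be a separable real Hilbert space, 0 < p < ∞, μ ∈ W_p(E), x ∈ E with x ≠ 0, and a, b ∈ ℝ with a ≠ b. For α ∈ [0,1] let ζ_{a,b}^α(x) = α·δ_{ax} + (1−α)·δ_{bx}, and set m = min{ d_{W_p}(μ, ζ_{a,b}^α(x)) : α ∈ [0,1] }. Then μ(B(ax,bx)) = max{α ∈ [0,1] : d_{W_p}(μ, ζ_{a,b}^α(x)) = m} − min{α ∈ [0,1] : d_{W_p}(μ, ζ_{a,b}^α(x)) = m}, where B(u,v) = {z ∈ E : ‖u−z‖ = ‖v−z‖} is the bisector of u and v. -/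
open MeasureTheory ENNReal Topology Filter
open scoped RealInnerProductSpace

noncomputable section

open Set

namespace WassHelper

variable {X : Type*} [MeasurableSpace X] [PseudoMetricSpace X]
  [OpensMeasurableSpace X] [SecondCountableTopology X] [MeasurableSingletonClass X]

def cpl (μ ν : Measure X) : Set (Measure (X × X)) :=
  {π : Measure (X × X) | π.map Prod.fst = μ ∧ π.map Prod.snd = ν}

def cost (p : ℝ) (π : Measure (X × X)) : ℝ≥0∞ := ∫⁻ z, edist z.1 z.2 ^ p ∂π

def cinf (p : ℝ) (μ ν : Measure X) : ℝ≥0∞ := ⨅ π ∈ cpl μ ν, cost p π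

def zeta (u v : X) (α : ℝ) : Measure X :=
  ENNReal.ofReal α • Measure.dirac u + ENNReal.ofReal (1 - α) • Measure.dirac v

lemma meas_g (p : ℝ) (u : X) : Measurable (fun z : X => edist z u ^ p) :=
  (measurable_id.edist measurable_const).pow_const p

lemma meas_f (p : ℝ) : Measurable (fun z : X × X => edist z.1 z.2 ^ p) :=
  measurable_edist.pow_const p

lemma zeta_compl_null {u v : X} (huv : u ≠ v) (α : ℝ) :
    zeta u v α ({u, v}ᶜ) = 0 := by
  have hm : MeasurableSet ({u, v} : Set X) :=
    (measurableSet_singleton u).union (measurableSet_singleton v)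
  simp [zeta, Measure.dirac_apply' _ hm.compl, Set.indicator_of_notMem,
    Set.mem_compl_iff] 

lemma zeta_singleton_u {u v : X} (huv : u ≠ v) (α : ℝ) :
    zeta u v α {u} = ENNReal.ofReal α := by
  rw [zeta]
  simp [Measure.dirac_apply' _ (measurableSet_singleton u),
    Set.indicator_apply, Set.mem_singleton_iff, Ne.symm huv]

lemma zeta_singleton_v {u v : X} (huv : u ≠ v) (α : ℝ) :
    zeta u v α {v} = ENNReal.ofReal (1 - α) := by
  rw [zeta]
  simp [Measure.dirac_apply' _ (measurableSet_singleton v),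
    Set.indicator_apply, Set.mem_singleton_iff, huv]

set_option linter.unusedSectionVars false

lemma marg_fst {μ ν : Measure X} {π : Measure (X × X)} (hπ : π ∈ cpl μ ν)
    {s : Set X} (hs : MeasurableSet s) : π (s ×ˢ (univ : Set X)) = μ s := by
  have : s ×ˢ (univ : Set X) = Prod.fst ⁻¹' s := by ext z; simp
  rw [this, ← Measure.map_apply measurable_fst hs, hπ.1]

lemma marg_snd {μ ν : Measure X} {π : Measure (X × X)} (hπ : π ∈ cpl μ ν)
    {s : Set X} (hs : MeasurableSet s) : π ((univ : Set X) ×ˢ s) = ν s := by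
  have : (univ : Set X) ×ˢ s = Prod.snd ⁻¹' s := by ext z; simp
  rw [this, ← Measure.map_apply measurable_snd hs, hπ.2]

/-- All `p`-th moments are finite if one is. -/
lemma moment_all {p : ℝ} (hp : 0 < p) {μ : Measure X} [IsFiniteMeasure μ] {x₀ : X}
    (h : ∫⁻ z, edist z x₀ ^ p ∂μ ≠ ⊤) (w : X) : ∫⁻ z, edist z w ^ p ∂μ ≠ ⊤ := by
  have hb : ∀ z : X, edist z w ^ p ≤ 2 ^ p * (edist z x₀ ^ p + edist x₀ w ^ p) := by
    intro z
    have h1 : edist z w ≤ 2 * max (edist z x₀) (edist x₀ w) := by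
      calc edist z w ≤ edist z x₀ + edist x₀ w := edist_triangle _ _ _
        _ ≤ max (edist z x₀) (edist x₀ w) + max (edist z x₀) (edist x₀ w) :=
            add_le_add (le_max_left _ _) (le_max_right _ _)
        _ = 2 * max (edist z x₀) (edist x₀ w) := (two_mul _).symm
    calc edist z w ^ p ≤ (2 * max (edist z x₀) (edist x₀ w)) ^ p :=
          ENNReal.rpow_le_rpow h1 hp.le
      _ = 2 ^ p * max (edist z x₀) (edist x₀ w) ^ p :=
          ENNReal.mul_rpow_of_nonneg _ _ hp.le
      _ ≤ 2 ^ p * (edist z x₀ ^ p + edist x₀ w ^ p) := by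
          gcongr
          rcases max_cases (edist z x₀) (edist x₀ w) with ⟨he, _⟩ | ⟨he, _⟩ <;> rw [he]
          · exact le_self_add
          · exact le_add_self
  refine ne_top_of_le_ne_top ?_ (lintegral_mono hb)
  rw [lintegral_const_mul (f := fun z => edist z x₀ ^ p + edist x₀ w ^ p) _ ((meas_g p x₀).add measurable_const), lintegral_add_right _
    measurable_const, lintegral_const]
  have h2 : (2 : ℝ≥0∞) ^ p ≠ ⊤ := by
    simp [ENNReal.rpow_eq_top_iff, hp, hp.not_gt]
  have h3 : edist x₀ w ^ p ≠ ⊤ :=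
    ENNReal.rpow_ne_top_of_nonneg hp.le (edist_ne_top _ _)
  exact ENNReal.mul_ne_top h2 (by
    exact ENNReal.add_ne_top.2 ⟨h, ENNReal.mul_ne_top h3 (measure_ne_top μ _)⟩)

/-- A coupling with `ζ` lives on `univ ×ˢ {u,v}` a.e. -/
lemma ae_mem_S {u v : X} (huv : u ≠ v) {μ : Measure X} {α : ℝ} {π : Measure (X × X)}
    (hπ : π ∈ cpl μ (zeta u v α)) :
    ∀ᵐ z ∂π, z ∈ (univ : Set X) ×ˢ ({u, v} : Set X) := by
  have hm : MeasurableSet ({u, v} : Set X) :=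
    (measurableSet_singleton u).union (measurableSet_singleton v)
  have h0 : π ((univ : Set X) ×ˢ ({u, v}ᶜ : Set X)) = 0 := by
    rw [marg_snd hπ hm.compl]; exact zeta_compl_null huv α
  rw [← compl_mem_ae_iff] at h0
  filter_upwards [h0] with z hz
  simp only [Set.mem_compl_iff, Set.mem_prod, Set.mem_univ, true_and,
    Set.mem_insert_iff, Set.mem_singleton_iff] at hz ⊢
  tauto

/-- Generic lower bound: every coupling costs at least `∫ min g h dμ`. -/
lemma cost_ge_min {p : ℝ} {u v : X} (huv : u ≠ v) {μ : Measure X} {α : ℝ}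
    {π : Measure (X × X)} (hπ : π ∈ cpl μ (zeta u v α)) :
    ∫⁻ z, min (edist z u ^ p) (edist z v ^ p) ∂μ ≤ cost p π := by
  have hmeas : Measurable fun z : X => min (edist z u ^ p) (edist z v ^ p) :=
    (meas_g p u).min (meas_g p v)
  have h1 : ∫⁻ z, min (edist z u ^ p) (edist z v ^ p) ∂μ
      = ∫⁻ z : X × X, min (edist z.1 u ^ p) (edist z.1 v ^ p) ∂π := by
    rw [← hπ.1, lintegral_map hmeas measurable_fst]
  rw [h1, cost]
  refine lintegral_mono_ae ?_
  filter_upwards [ae_mem_S huv hπ] with z hz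
  rcases hz.2 with h | h
  · rw [h]; exact min_le_left _ _
  · rw [show z.2 = v from h]; exact min_le_right _ _

/-- Strict lower bound when `α` is below `μ {g < h}`. -/
lemma cost_strict {p : ℝ} (hp : 0 < p) {u v : X} (huv : u ≠ v) {μ : Measure X}
    [IsProbabilityMeasure μ] {α : ℝ}
    (hlt : ENNReal.ofReal α < μ {z | edist z u ^ p < edist z v ^ p}) :
    ∃ ε : ℝ≥0∞, 0 < ε ∧ ε ≠ ⊤ ∧ ∀ π ∈ cpl μ (zeta u v α),
      (∫⁻ z, min (edist z u ^ p) (edist z v ^ p) ∂μ) + ε ≤ cost p π := by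
  set g : X → ℝ≥0∞ := fun z => edist z u ^ p with hg
  set h : X → ℝ≥0∞ := fun z => edist z v ^ p with hh
  have hgm : Measurable g := meas_g p u
  have hhm : Measurable h := meas_g p v
  have hgfin : ∀ z, g z ≠ ⊤ := fun z =>
    ENNReal.rpow_ne_top_of_nonneg hp.le (edist_ne_top _ _)
  have hhfin : ∀ z, h z ≠ ⊤ := fun z =>
    ENNReal.rpow_ne_top_of_nonneg hp.le (edist_ne_top _ _)
  set A : ℕ → Set X := fun n => {z | g z + ((n : ℝ≥0∞))⁻¹ ≤ h z} with hA
  have hAm : ∀ n, MeasurableSet (A n) := fun n =>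
    measurableSet_le (hgm.add measurable_const) hhm
  have hAmono : Monotone A := by
    intro i j hij z hz
    refine le_trans (add_le_add le_rfl (ENNReal.inv_le_inv' ?_)) hz
    exact_mod_cast hij
  have hAU : (⋃ n, A n) = {z | g z < h z} := by
    ext z
    simp only [Set.mem_iUnion, hA, Set.mem_setOf_eq]
    constructor
    · rintro ⟨n, hn⟩
      rcases eq_or_ne (n : ℝ≥0∞) 0 with h0 | h0
      · rw [h0] at hn; simp at hn
        exact absurd hn (by simpa using hhfin z)
      · exact lt_of_lt_of_le (ENNReal.lt_add_right (hgfin z)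
          (by simpa using h0)) hn
    · intro hzlt
      have hne : h z - g z ≠ 0 := by
        simpa [tsub_eq_zero_iff_le] using not_le.2 hzlt
      obtain ⟨n, hn⟩ := ENNReal.exists_inv_nat_lt hne
      exact ⟨n, by
        calc g z + ((n : ℝ≥0∞))⁻¹ ≤ g z + (h z - g z) := add_le_add le_rfl hn.le
          _ = h z := add_tsub_cancel_of_le hzlt.le⟩
  have hsup : μ {z | g z < h z} = ⨆ n, μ (A n) := by
    rw [← hAU]; exact hAmono.measure_iUnion
  rw [hsup] at hlt
  obtain ⟨n, hn⟩ := lt_iSup_iff.1 hlt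
  have hn0 : (n : ℝ≥0∞) ≠ 0 := by
    rintro h0
    have : A n = ∅ := by
      ext z; simp only [hA, Set.mem_setOf_eq, h0, ENNReal.inv_zero, Set.mem_empty_iff_false,
        iff_false]
      intro hc
      exact hhfin z (top_le_iff.1 (le_trans (by simp) hc))
    rw [this] at hn; simp at hn
  refine ⟨((n : ℝ≥0∞))⁻¹ * (μ (A n) - ENNReal.ofReal α), ?_, ?_, ?_⟩
  · exact ENNReal.mul_pos (by simp) (by simpa [tsub_eq_zero_iff_le] using not_le.2 hn)
  · exact ENNReal.mul_ne_top (by simpa using hn0) (by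
      exact ne_top_of_le_ne_top (measure_ne_top μ _) (tsub_le_self))
  intro π hπ
  -- pointwise bound
  set F : X × X → ℝ≥0∞ := fun z => min (g z.1) (h z.1)
    + ((A n) ×ˢ ({v} : Set X)).indicator (fun _ => ((n : ℝ≥0∞))⁻¹) z with hF
  have hpoint : ∀ᵐ z ∂π, F z ≤ edist z.1 z.2 ^ p := by
    filter_upwards [ae_mem_S huv hπ] with z hz
    rcases hz.2 with hzu | hzv
    · have : z ∉ (A n) ×ˢ ({v} : Set X) := by
        rintro ⟨-, h2⟩
        exact huv (hzu.symm.trans h2)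
      rw [hF]; simp only [Set.indicator_of_notMem this, add_zero, hzu]
      exact min_le_left _ _
    · rw [show z.2 = v from hzv]
      by_cases hzA : z.1 ∈ A n
      · have hmem : z ∈ (A n) ×ˢ ({v} : Set X) := ⟨hzA, hzv⟩
        rw [hF]; simp only [Set.indicator_of_mem hmem]
        calc min (g z.1) (h z.1) + ((n : ℝ≥0∞))⁻¹
            ≤ g z.1 + ((n : ℝ≥0∞))⁻¹ := add_le_add (min_le_left _ _) le_rfl
          _ ≤ h z.1 := hzA
      · have : z ∉ (A n) ×ˢ ({v} : Set X) := fun hc => hzA hc.1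
        rw [hF]; simp only [Set.indicator_of_notMem this, add_zero]
        exact min_le_right _ _
  have hcost : ∫⁻ z, F z ∂π ≤ cost p π := lintegral_mono_ae hpoint
  have hsplit : ∫⁻ z, F z ∂π = (∫⁻ z, min (g z) (h z) ∂μ)
      + ((n : ℝ≥0∞))⁻¹ * π ((A n) ×ˢ ({v} : Set X)) := by
    have e1 : ∫⁻ z, F z ∂π = (∫⁻ z : X × X, min (g z.1) (h z.1) ∂π)
        + ∫⁻ z, ((A n) ×ˢ ({v} : Set X)).indicator (fun _ => ((n : ℝ≥0∞))⁻¹) z ∂π :=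
      lintegral_add_left ((hgm.comp measurable_fst).min (hhm.comp measurable_fst)) _
    have e2 : (∫⁻ z : X × X, min (g z.1) (h z.1) ∂π) = ∫⁻ z, min (g z) (h z) ∂μ := by
      rw [← hπ.1]
      exact (lintegral_map (hgm.min hhm) measurable_fst).symm
    have e3 : ∫⁻ z, ((A n) ×ˢ ({v} : Set X)).indicator (fun _ => ((n : ℝ≥0∞))⁻¹) z ∂π
        = ((n : ℝ≥0∞))⁻¹ * π ((A n) ×ˢ ({v} : Set X)) := by
      rw [lintegral_indicator ((hAm n).prod (measurableSet_singleton v)),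
        setLIntegral_const]
    rw [e1, e2, e3]
  -- measure bound
  have hprodbd : μ (A n) ≤ ENNReal.ofReal α + π ((A n) ×ˢ ({v} : Set X)) := by
    have h1 : μ (A n) = π ((A n) ×ˢ (univ : Set X)) := (marg_fst hπ (hAm n)).symm
    have hnull : π ((A n) ×ˢ ({u, v}ᶜ : Set X)) = 0 :=
      measure_mono_null (fun z hz => Set.mem_prod.2 ⟨Set.mem_univ _, hz.2⟩)
        (by rw [marg_snd hπ (show MeasurableSet ({u, v} : Set X) from
          (measurableSet_singleton u).union (measurableSet_singleton v)).compl]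
            exact zeta_compl_null huv α)
    have h2 : π ((A n) ×ˢ (univ : Set X)) ≤ π ((A n) ×ˢ ({u} : Set X))
        + π ((A n) ×ˢ ({v} : Set X)) := by
      calc π ((A n) ×ˢ (univ : Set X))
          ≤ π (((A n) ×ˢ ({u} : Set X)) ∪ ((A n) ×ˢ ({v} : Set X))
              ∪ ((A n) ×ˢ ({u, v}ᶜ : Set X))) := by
            refine measure_mono ?_
            rintro ⟨z1, z2⟩ ⟨hz1, -⟩
            by_cases h2u : z2 = u
            · exact Or.inl (Or.inl ⟨hz1, h2u⟩)
            by_cases h2v : z2 = v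
            · exact Or.inl (Or.inr ⟨hz1, h2v⟩)
            · exact Or.inr ⟨hz1, by simp [h2u, h2v]⟩
        _ ≤ π (((A n) ×ˢ ({u} : Set X)) ∪ ((A n) ×ˢ ({v} : Set X)))
              + π ((A n) ×ˢ ({u, v}ᶜ : Set X)) := measure_union_le _ _
        _ = π (((A n) ×ˢ ({u} : Set X)) ∪ ((A n) ×ˢ ({v} : Set X))) := by
              rw [hnull, add_zero]
        _ ≤ _ := measure_union_le _ _
    have h3 : π ((A n) ×ˢ ({u} : Set X)) ≤ ENNReal.ofReal α := by
      calc π ((A n) ×ˢ ({u} : Set X)) ≤ π ((univ : Set X) ×ˢ ({u} : Set X)) :=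
            measure_mono (fun z hz => Set.mem_prod.2 ⟨Set.mem_univ _, hz.2⟩)
        _ = ENNReal.ofReal α := by
            rw [marg_snd hπ (measurableSet_singleton u)]; exact zeta_singleton_u huv α
    calc μ (A n) = π ((A n) ×ˢ (univ : Set X)) := h1
      _ ≤ π ((A n) ×ˢ ({u} : Set X)) + π ((A n) ×ˢ ({v} : Set X)) := h2
      _ ≤ ENNReal.ofReal α + π ((A n) ×ˢ ({v} : Set X)) := add_le_add h3 le_rfl
  have hge : μ (A n) - ENNReal.ofReal α ≤ π ((A n) ×ˢ ({v} : Set X)) :=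
    tsub_le_iff_left.2 hprodbd
  calc (∫⁻ z, min (g z) (h z) ∂μ) + ((n : ℝ≥0∞))⁻¹ * (μ (A n) - ENNReal.ofReal α)
      ≤ (∫⁻ z, min (g z) (h z) ∂μ) + ((n : ℝ≥0∞))⁻¹ * π ((A n) ×ˢ ({v} : Set X)) := by
        gcongr
    _ = ∫⁻ z, F z ∂π := hsplit.symm
    _ ≤ cost p π := hcost

/-- Building a coupling from a decomposition `μ = μ₁ + μ₂`. -/
lemma cinf_le_of_split (p : ℝ) {u v : X} (huv : u ≠ v) {μ : Measure X}
    [IsProbabilityMeasure μ] {α : ℝ} (hα : α ∈ Set.Icc (0:ℝ) 1)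
    (μ₁ μ₂ : Measure X) (hsum : μ₁ + μ₂ = μ) (h1 : μ₁ Set.univ = ENNReal.ofReal α) :
    cinf p μ (zeta u v α) ≤ (∫⁻ z, edist z u ^ p ∂μ₁) + ∫⁻ z, edist z v ^ p ∂μ₂ := by
  have hmu : Measurable (fun z : X => (z, u)) := measurable_id.prodMk measurable_const
  have hmv : Measurable (fun z : X => (z, v)) := measurable_id.prodMk measurable_const
  set π : Measure (X × X) := μ₁.map (fun z => (z, u)) + μ₂.map (fun z => (z, v)) with hπdef
  have h2 : μ₂ Set.univ = ENNReal.ofReal (1 - α) := by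
    have hu : (1 : ℝ≥0∞) = ENNReal.ofReal α + μ₂ Set.univ := by
      rw [← h1, ← Measure.add_apply, hsum, measure_univ]
    rw [ENNReal.ofReal_sub _ hα.1, ENNReal.ofReal_one]
    rw [hu, ENNReal.add_sub_cancel_left ENNReal.ofReal_ne_top]
  have hmem : π ∈ cpl μ (zeta u v α) := by
    constructor
    · rw [hπdef, Measure.map_add _ _ measurable_fst, Measure.map_map measurable_fst hmu,
        Measure.map_map measurable_fst hmv]
      have : (Prod.fst ∘ fun z : X => (z, u)) = id := rfl
      rw [this]
      have : (Prod.fst ∘ fun z : X => (z, v)) = id := rfl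
      rw [this, Measure.map_id, Measure.map_id, hsum]
    · rw [hπdef, Measure.map_add _ _ measurable_snd, Measure.map_map measurable_snd hmu,
        Measure.map_map measurable_snd hmv]
      have e1 : (Prod.snd ∘ fun z : X => (z, u)) = fun _ => u := rfl
      have e2 : (Prod.snd ∘ fun z : X => (z, v)) = fun _ => v := rfl
      rw [e1, e2, Measure.map_const, Measure.map_const, h1, h2, zeta]
  have hcost : cost p π = (∫⁻ z, edist z u ^ p ∂μ₁) + ∫⁻ z, edist z v ^ p ∂μ₂ := by
    rw [cost, hπdef, lintegral_add_measure, lintegral_map (meas_f p) hmu,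
      lintegral_map (meas_f p) hmv]
  calc cinf p μ (zeta u v α) ≤ cost p π := biInf_le _ hmem
    _ = _ := hcost

/-- The optimal value is attained for `α` between `μ {g < h}` and `μ {g ≤ h}`. -/
lemma cinf_eq_min {p : ℝ} (hp : 0 < p) {u v : X} (huv : u ≠ v) {μ : Measure X}
    [IsProbabilityMeasure μ] {α : ℝ} (hα : α ∈ Set.Icc (0:ℝ) 1)
    (h0 : μ {z | edist z u ^ p < edist z v ^ p} ≤ ENNReal.ofReal α)
    (h1 : ENNReal.ofReal α ≤ μ {z | edist z u ^ p ≤ edist z v ^ p}) :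
    cinf p μ (zeta u v α) = ∫⁻ z, min (edist z u ^ p) (edist z v ^ p) ∂μ := by
  set g : X → ℝ≥0∞ := fun z => edist z u ^ p with hg
  set h : X → ℝ≥0∞ := fun z => edist z v ^ p with hh
  have hgm : Measurable g := meas_g p u
  have hhm : Measurable h := meas_g p v
  set L : Set X := {z | g z < h z} with hL
  set Q : Set X := {z | g z = h z} with hQ
  set G : Set X := {z | h z < g z} with hG
  have hLm : MeasurableSet L := measurableSet_lt hgm hhm
  have hQm : MeasurableSet Q := measurableSet_eq_fun hgm hhm
  have hGm : MeasurableSet G := measurableSet_lt hhm hgm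
  have hLQ : L ∪ Q = {z | g z ≤ h z} := by
    ext z; simp only [Set.mem_union, hL, hQ, Set.mem_setOf_eq]
    exact ⟨fun hz => hz.elim le_of_lt le_of_eq, fun hz => hz.lt_or_eq⟩
  have hLQdisj : Disjoint L Q := by
    rw [Set.disjoint_left]; intro z hz1 hz2; exact absurd hz2 (ne_of_lt hz1)
  have hGcompl : G = {z | g z ≤ h z}ᶜ := by
    ext z; simp [hG, not_le]
  -- choose the weight c
  have hQfin : μ Q ≠ ⊤ := measure_ne_top μ _
  have hμLQ : μ {z | g z ≤ h z} ≤ μ L + μ Q := hLQ ▸ measure_union_le L Q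
  obtain ⟨c, hc1, hc2⟩ : ∃ c : ℝ≥0∞, c ≤ 1 ∧ μ L + c * μ Q = ENNReal.ofReal α := by
    rcases eq_or_ne (μ Q) 0 with hQ0 | hQ0
    · refine ⟨0, zero_le_one, ?_⟩
      rw [zero_mul, add_zero]
      exact le_antisymm h0 (le_trans h1 (by rw [hQ0, add_zero] at hμLQ; exact hμLQ))
    · refine ⟨(ENNReal.ofReal α - μ L) / μ Q, ?_, ?_⟩
      · rw [ENNReal.div_le_iff hQ0 hQfin, one_mul]
        exact tsub_le_iff_left.2 (le_trans h1 hμLQ)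
      · rw [ENNReal.div_mul_cancel hQ0 hQfin, add_tsub_cancel_of_le h0]
  set μ₁ : Measure X := μ.restrict L + c • μ.restrict Q with hμ₁
  set μ₂ : Measure X := μ.restrict G + (1 - c) • μ.restrict Q with hμ₂
  have hcc : c • μ.restrict Q + (1 - c) • μ.restrict Q = μ.restrict Q := by
    rw [← add_smul, add_tsub_cancel_of_le hc1, one_smul]
  have hsum : μ₁ + μ₂ = μ := by
    have : μ₁ + μ₂ = μ.restrict L + μ.restrict Q + μ.restrict G := by
      rw [hμ₁, hμ₂]
      calc μ.restrict L + c • μ.restrict Q + (μ.restrict G + (1 - c) • μ.restrict Q)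
          = μ.restrict L + (c • μ.restrict Q + (1 - c) • μ.restrict Q) + μ.restrict G := by
            rw [add_comm (μ.restrict G) ((1 - c) • μ.restrict Q), ← add_assoc,
              add_assoc (μ.restrict L)]
        _ = μ.restrict L + μ.restrict Q + μ.restrict G := by rw [hcc]
    rw [this, ← Measure.restrict_union hLQdisj hQm, hLQ, hGcompl,
      Measure.restrict_add_restrict_compl (measurableSet_le hgm hhm)]
  have h1univ : μ₁ Set.univ = ENNReal.ofReal α := by
    rw [hμ₁, Measure.add_apply, Measure.smul_apply, Measure.restrict_apply_univ,
      Measure.restrict_apply_univ, smul_eq_mul, hc2]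
  -- the support facts
  have hμ₁ae : ∀ᵐ z ∂μ₁, g z ≤ h z := by
    have hnull : μ₁ {z | g z ≤ h z}ᶜ = 0 := by
      rw [hμ₁, Measure.add_apply, Measure.smul_apply,
        Measure.restrict_apply (measurableSet_le hgm hhm).compl,
        Measure.restrict_apply (measurableSet_le hgm hhm).compl]
      have e1 : {z | g z ≤ h z}ᶜ ∩ L = ∅ := by
        ext z
        simp only [Set.mem_inter_iff, Set.mem_compl_iff, Set.mem_setOf_eq, hL,
          Set.mem_empty_iff_false, iff_false, not_and, not_lt]
        exact fun hz => le_of_not_ge hz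
      have e2 : {z | g z ≤ h z}ᶜ ∩ Q = ∅ := by
        ext z
        simp only [Set.mem_inter_iff, Set.mem_compl_iff, Set.mem_setOf_eq, hQ,
          Set.mem_empty_iff_false, iff_false, not_and]
        exact fun hz hq => absurd hq.le hz
      rw [e1, e2]; simp
    rw [ae_iff]; simpa [Set.compl_setOf, not_le] using hnull
  have hμ₂ae : ∀ᵐ z ∂μ₂, h z ≤ g z := by
    have hnull : μ₂ {z | h z ≤ g z}ᶜ = 0 := by
      rw [hμ₂, Measure.add_apply, Measure.smul_apply,
        Measure.restrict_apply (measurableSet_le hhm hgm).compl,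
        Measure.restrict_apply (measurableSet_le hhm hgm).compl]
      have e1 : {z | h z ≤ g z}ᶜ ∩ G = ∅ := by
        ext z
        simp only [Set.mem_inter_iff, Set.mem_compl_iff, Set.mem_setOf_eq, hG,
          Set.mem_empty_iff_false, iff_false, not_and, not_lt]
        exact fun hz => le_of_not_ge hz
      have e2 : {z | h z ≤ g z}ᶜ ∩ Q = ∅ := by
        ext z
        simp only [Set.mem_inter_iff, Set.mem_compl_iff, Set.mem_setOf_eq, hQ,
          Set.mem_empty_iff_false, iff_false, not_and]
        exact fun hz hq => absurd hq.ge hz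
      rw [e1, e2]; simp
    rw [ae_iff]; simpa [Set.compl_setOf, not_le] using hnull
  have eg : ∫⁻ z, g z ∂μ₁ = ∫⁻ z, min (g z) (h z) ∂μ₁ :=
    lintegral_congr_ae (by filter_upwards [hμ₁ae] with z hz; exact (min_eq_left hz).symm)
  have eh : ∫⁻ z, h z ∂μ₂ = ∫⁻ z, min (g z) (h z) ∂μ₂ :=
    lintegral_congr_ae (by filter_upwards [hμ₂ae] with z hz; exact (min_eq_right hz).symm)
  refine le_antisymm ?_ (le_iInf₂ fun π hπ => cost_ge_min huv hπ)
  calc cinf p μ (zeta u v α) ≤ (∫⁻ z, g z ∂μ₁) + ∫⁻ z, h z ∂μ₂ :=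
        cinf_le_of_split p huv hα μ₁ μ₂ hsum h1univ
    _ = (∫⁻ z, min (g z) (h z) ∂μ₁) + ∫⁻ z, min (g z) (h z) ∂μ₂ := by rw [eg, eh]
    _ = ∫⁻ z, min (g z) (h z) ∂(μ₁ + μ₂) := (lintegral_add_measure _ _ _).symm
    _ = ∫⁻ z, min (g z) (h z) ∂μ := by rw [hsum]

lemma cinf_ne_top (p : ℝ) {u v : X} (huv : u ≠ v) {μ : Measure X}
    [IsProbabilityMeasure μ] {α : ℝ} (hα : α ∈ Set.Icc (0:ℝ) 1)
    (hg : ∫⁻ z, edist z u ^ p ∂μ ≠ ⊤) (hh : ∫⁻ z, edist z v ^ p ∂μ ≠ ⊤) :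
    cinf p μ (zeta u v α) ≠ ⊤ := by
  have hsum : (ENNReal.ofReal α • μ) + (ENNReal.ofReal (1 - α) • μ) = μ := by
    have e : α + (1 - α) = 1 := by ring
    rw [← add_smul, ← ENNReal.ofReal_add hα.1 (by linarith [hα.2]), e,
      ENNReal.ofReal_one, one_smul]
  have h1 : (ENNReal.ofReal α • μ) Set.univ = ENNReal.ofReal α := by
    simp [measure_univ]
  refine ne_top_of_le_ne_top ?_ (cinf_le_of_split p huv hα _ _ hsum h1)
  rw [lintegral_smul_measure, lintegral_smul_measure]
  exact ENNReal.add_ne_top.2 ⟨ENNReal.mul_ne_top ENNReal.ofReal_ne_top hg,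
    ENNReal.mul_ne_top ENNReal.ofReal_ne_top hh⟩

lemma zeta_symm (u v : X) (α : ℝ) : zeta u v α = zeta v u (1 - α) := by
  rw [zeta, zeta, show (1 : ℝ) - (1 - α) = α by ring, add_comm]

end WassHelper

open WassHelper

/-- recovering the measure of the bisector `B(ax, bx)` from the Wasserstein
distances to the two-point measures `ζ_{a,b}^α(x) = α δ_{ax} + (1-α) δ_{bx}`. -/
theorem measure_of_bisector
    {E : Type*} [NormedAddCommGroup E] [InnerProductSpace ℝ E] [CompleteSpace E]
    [SecondCountableTopology E] [MeasurableSpace E] [BorelSpace E]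
    (p : ℝ) (hp : 0 < p)
    (μ : Measure E) (hμ : MemWp p μ)
    (x : E) (hx : x ≠ 0) (a b : ℝ) (hab : a ≠ b)
    (dW : ℝ → ℝ)
    (hdW : ∀ α : ℝ, dW α = (wassersteinDist p μ
      (ENNReal.ofReal α • Measure.dirac (a • x)
        + ENNReal.ofReal (1 - α) • Measure.dirac (b • x))).toReal)
    (m : ℝ) (hm : m = sInf (dW '' Set.Icc (0:ℝ) 1)) :
    (μ {z : E | ‖a • x - z‖ = ‖b • x - z‖}).toReal
      = sSup {α : ℝ | α ∈ Set.Icc (0:ℝ) 1 ∧ dW α = m}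
        - sInf {α : ℝ | α ∈ Set.Icc (0:ℝ) 1 ∧ dW α = m} := by
  classical
  obtain ⟨hprob, x₀, hmom⟩ := hμ
  haveI := hprob
  set u : E := a • x with hu
  set v : E := b • x with hv
  have huv : u ≠ v := by
    intro hc
    apply hab
    have h1 : (a - b) • x = 0 := by rw [sub_smul, hu, hv] at *; rw [hc, sub_self]
    rcases smul_eq_zero.1 h1 with h | h
    · exact sub_eq_zero.1 h
    · exact absurd h hx
  set g : E → ℝ≥0∞ := fun z => edist z u ^ p with hgdef
  set h : E → ℝ≥0∞ := fun z => edist z v ^ p with hhdef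
  have hgm : Measurable g := meas_g p u
  have hhm : Measurable h := meas_g p v
  have hgfin : ∫⁻ z, g z ∂μ ≠ ⊤ := moment_all hp hmom u
  have hhfin : ∫⁻ z, h z ∂μ ≠ ⊤ := moment_all hp hmom v
  set M : ℝ≥0∞ := ∫⁻ z, min (g z) (h z) ∂μ with hM
  have hMfin : M ≠ ⊤ :=
    ne_top_of_le_ne_top hgfin (lintegral_mono fun z => min_le_left _ _)
  set θ : ℝ := min p⁻¹ 1 with hθdef
  have hθ : 0 < θ := lt_min (by positivity) one_pos
  have hWD : ∀ α : ℝ, dW α = ((cinf p μ (zeta u v α)) ^ θ).toReal := fun α => hdW α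
  set L : Set E := {z | g z < h z} with hL
  set Lle : Set E := {z | g z ≤ h z} with hLle
  set Q : Set E := {z | g z = h z} with hQ
  have hLm : MeasurableSet L := measurableSet_lt hgm hhm
  have hQm : MeasurableSet Q := measurableSet_eq_fun hgm hhm
  have hLlem : MeasurableSet Lle := measurableSet_le hgm hhm
  set α₀ : ℝ := (μ L).toReal with hα₀
  set α₁ : ℝ := (μ Lle).toReal with hα₁
  have hround0 : ENNReal.ofReal α₀ = μ L := ENNReal.ofReal_toReal (measure_ne_top μ _)
  have hround1 : ENNReal.ofReal α₁ = μ Lle := ENNReal.ofReal_toReal (measure_ne_top μ _)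
  have h01 : α₀ ≤ α₁ :=
    ENNReal.toReal_mono (measure_ne_top μ _) (measure_mono fun z hz => show g z ≤ h z from le_of_lt hz)
  have hα₀mem : α₀ ∈ Set.Icc (0:ℝ) 1 :=
    ⟨ENNReal.toReal_nonneg, by simpa using ENNReal.toReal_mono one_ne_top prob_le_one⟩
  have hα₁mem : α₁ ∈ Set.Icc (0:ℝ) 1 :=
    ⟨ENNReal.toReal_nonneg, by simpa using ENNReal.toReal_mono one_ne_top prob_le_one⟩
  have hcinf_ge : ∀ α : ℝ, M ≤ cinf p μ (zeta u v α) :=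
    fun α => le_iInf₂ fun π hπ => cost_ge_min huv hπ
  have hfin : ∀ α ∈ Set.Icc (0:ℝ) 1, cinf p μ (zeta u v α) ≠ ⊤ :=
    fun α hα => cinf_ne_top p huv hα hgfin hhfin
  have heq : ∀ α ∈ Set.Icc α₀ α₁, cinf p μ (zeta u v α) = M := by
    intro α hα
    have hmem : α ∈ Set.Icc (0:ℝ) 1 := ⟨le_trans hα₀mem.1 hα.1, le_trans hα.2 hα₁mem.2⟩
    refine cinf_eq_min hp huv hmem ?_ ?_
    · rw [← hround0]; exact ENNReal.ofReal_le_ofReal hα.1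
    · rw [← hround1]; exact ENNReal.ofReal_le_ofReal hα.2
  have hstrict : ∀ α ∈ Set.Icc (0:ℝ) 1, α ∉ Set.Icc α₀ α₁ →
      M < cinf p μ (zeta u v α) := by
    intro α hα hnot
    rcases lt_or_ge α α₀ with hlt | hge
    · have hofR : ENNReal.ofReal α < μ {z | edist z u ^ p < edist z v ^ p} := by
        rw [show {z : E | edist z u ^ p < edist z v ^ p} = L from rfl, ← hround0]
        exact (ENNReal.ofReal_lt_ofReal_iff (lt_of_le_of_lt hα.1 hlt)).2 hlt
      obtain ⟨ε, hε0, hεtop, hK⟩ := cost_strict hp huv hofR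
      have hge : M + ε ≤ cinf p μ (zeta u v α) := le_iInf₂ fun π hπ => hK π hπ
      exact lt_of_lt_of_le (ENNReal.lt_add_right hMfin hε0.ne') hge
    · have hgt : α₁ < α := by
        by_contra hle
        exact hnot ⟨hge, le_of_not_gt hle⟩
      have hα₁1 : α₁ < 1 := lt_of_lt_of_le hgt hα.2
      have hcompl : {z : E | edist z v ^ p < edist z u ^ p} = Lleᶜ := by
        ext z; simp [hLle, not_le]; exact Iff.rfl
      have hofR : ENNReal.ofReal (1 - α) < μ {z | edist z v ^ p < edist z u ^ p} := by
        rw [hcompl, measure_compl hLlem (measure_ne_top μ _), measure_univ, ← hround1,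
          show (1:ℝ≥0∞) = ENNReal.ofReal 1 from ENNReal.ofReal_one.symm,
          ← ENNReal.ofReal_sub 1 hα₁mem.1]
        exact (ENNReal.ofReal_lt_ofReal_iff (by linarith)).2 (by linarith)
      obtain ⟨ε, hε0, hεtop, hK⟩ := cost_strict hp huv.symm hofR
      have hge : M + ε ≤ cinf p μ (zeta u v α) := by
        refine le_iInf₂ fun π hπ => ?_
        have hπ' : π ∈ cpl μ (zeta v u (1 - α)) := by
          rw [← zeta_symm u v α]; exact hπ
        have hcost := hK π hπ'
        rwa [show (∫⁻ z, min (edist z v ^ p) (edist z u ^ p) ∂μ) = M from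
          lintegral_congr fun z => min_comm _ _] at hcost
      exact lt_of_lt_of_le (ENNReal.lt_add_right hMfin hε0.ne') hge
  have hdWval : ∀ α ∈ Set.Icc α₀ α₁, dW α = (M ^ θ).toReal := by
    intro α hα; rw [hWD, heq α hα]
  have hlower : ∀ α ∈ Set.Icc (0:ℝ) 1, (M ^ θ).toReal ≤ dW α := by
    intro α hα
    rw [hWD]
    exact ENNReal.toReal_mono (ENNReal.rpow_ne_top_of_nonneg hθ.le (hfin α hα))
      (ENNReal.rpow_le_rpow (hcinf_ge α) hθ.le)
  have hmval : m = (M ^ θ).toReal := by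
    rw [hm]
    apply le_antisymm
    · exact csInf_le ⟨(M ^ θ).toReal, by rintro y ⟨β, hβ, rfl⟩; exact hlower β hβ⟩
        ⟨α₀, hα₀mem, hdWval α₀ ⟨le_refl _, h01⟩⟩
    · exact le_csInf ⟨dW α₀, ⟨α₀, hα₀mem, rfl⟩⟩ (by rintro y ⟨β, hβ, rfl⟩; exact hlower β hβ)
  have hSeq : {α : ℝ | α ∈ Set.Icc (0:ℝ) 1 ∧ dW α = m} = Set.Icc α₀ α₁ := by
    ext α
    simp only [Set.mem_setOf_eq]
    constructor
    · rintro ⟨hα, hdm⟩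
      by_contra hnot
      have hstr := hstrict α hα hnot
      have ht : ((cinf p μ (zeta u v α)) ^ θ).toReal = (M ^ θ).toReal := by
        rw [← hWD, hdm, hmval]
      have hpow : (cinf p μ (zeta u v α)) ^ θ = M ^ θ :=
        (ENNReal.toReal_eq_toReal_iff' (ENNReal.rpow_ne_top_of_nonneg hθ.le (hfin α hα))
          (ENNReal.rpow_ne_top_of_nonneg hθ.le hMfin)).1 ht
      exact absurd (ENNReal.rpow_left_injective hθ.ne' hpow).symm (ne_of_lt hstr)
    · intro hα
      exact ⟨⟨le_trans hα₀mem.1 hα.1, le_trans hα.2 hα₁mem.2⟩,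
        (hdWval α hα).trans hmval.symm⟩
  rw [hSeq, csSup_Icc h01, csInf_Icc h01]
  -- identify the bisector with Q
  have hbis : {z : E | ‖a • x - z‖ = ‖b • x - z‖} = Q := by
    ext z
    simp only [Set.mem_setOf_eq, hQ, hgdef, hhdef]
    constructor
    · intro hz
      have hd : edist z u = edist z v := by
        rw [edist_dist, edist_dist, dist_eq_norm, dist_eq_norm,
          norm_sub_rev z u, norm_sub_rev z v, hz]
      rw [hd]
    · intro hz
      have hd : edist z u = edist z v := ENNReal.rpow_left_injective hp.ne' hz
      rw [edist_dist, edist_dist,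
        ENNReal.ofReal_eq_ofReal_iff dist_nonneg dist_nonneg] at hd
      rw [← norm_sub_rev z u, ← norm_sub_rev z v, ← dist_eq_norm, ← dist_eq_norm, hd]
  rw [hbis]
  have hLQ : Lle = L ∪ Q := by
    ext z; simp only [Set.mem_union, hL, hQ, hLle, Set.mem_setOf_eq]
    exact ⟨fun hz => hz.lt_or_eq, fun hz => hz.elim le_of_lt le_of_eq⟩
  have hLQdisj : Disjoint L Q := by
    rw [Set.disjoint_left]; intro z hz1 hz2; exact absurd hz2 (ne_of_lt hz1)
  have hadd : μ Lle = μ L + μ Q := by rw [hLQ, measure_union hLQdisj hQm]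
  have : α₁ = α₀ + (μ Q).toReal := by
    rw [hα₁, hadd, ENNReal.toReal_add (measure_ne_top μ _) (measure_ne_top μ _)]
  linarith
end
end

section
/- Let (X,ρ) be a complete separable metric space that satisfies the strict triangle inequality: ρ(x,y) < ρ(x,z) + ρ(z,y) whenever z ∉ {x,y}. Let D = {(x,x) : x ∈ X} denote the diagonal in X×X. If μ, ν ∈ W_1(X) and π is an optimal coupling of μ and ν (i.e. π is a coupling attaining the infimum defining d_{W_1}(μ,ν)), then the restriction of π to D equals the push-forward of μ∧ν under the map x ↦ (x,x). In particular, setting μ⁰ = (μ−ν)₊ and ν⁰ = (μ−ν)₋, one has d_{W_1}(μ,ν) = inf{ ∫_{X×X} ρ(x,y) dθ(x,y) : θ a positive measure on X×X with marginals μ⁰ and ν⁰ }. -/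
open MeasureTheory ENNReal Topology Filter ProbabilityTheory
open scoped RealInnerProductSpace

noncomputable section

namespace OptCouplingAux

variable {X : Type*} [MeasurableSpace X]

/-- transport cost of a plan for the metric cost -/
noncomputable def cst [PseudoEMetricSpace X] (ρ : Measure (X × X)) : ℝ≥0∞ :=
  ∫⁻ z, edist z.1 z.2 ∂ρ

lemma hedm [PseudoEMetricSpace X] [OpensMeasurableSpace X] [SecondCountableTopology X] :
    Measurable fun z : X × X => edist z.1 z.2 :=
  measurable_fst.edist measurable_snd

lemma cst_add [PseudoEMetricSpace X] (ρ ρ' : Measure (X × X)) :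
    cst (ρ + ρ') = cst ρ + cst ρ' := lintegral_add_measure _ _ _

lemma cst_mono [PseudoEMetricSpace X] {ρ ρ' : Measure (X × X)} (h : ρ ≤ ρ') :
    cst ρ ≤ cst ρ' := lintegral_mono' h le_rfl

lemma cst_diag_map [PseudoEMetricSpace X] [OpensMeasurableSpace X] [SecondCountableTopology X] (η : Measure X) :
    cst (η.map fun x => (x, x)) = 0 := by
  have hdm : Measurable fun x : X => (x, x) := measurable_id.prodMk measurable_id
  unfold cst
  rw [lintegral_map (measurable_fst.edist measurable_snd) hdm]
  simp

/-- A measure restricted to the diagonal is the pushforward under `x ↦ (x,x)` of its first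
marginal. -/
lemma restrict_diag_eq (_hD : MeasurableSet (Set.diagonal X)) (ρ : Measure (X × X)) :
    ρ.restrict (Set.diagonal X)
      = ((ρ.restrict (Set.diagonal X)).map Prod.fst).map (fun x => (x, x)) := by
  have hdm : Measurable fun x : X => (x, x) := measurable_id.prodMk measurable_id
  ext s hs
  rw [Measure.map_apply hdm hs, Measure.map_apply measurable_fst (hdm hs),
    Measure.restrict_apply (measurable_fst (hdm hs)), Measure.restrict_apply hs]
  congr 1
  ext ⟨a, b⟩
  simp only [Set.mem_inter_iff, Set.mem_preimage, Set.mem_diagonal_iff]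
  constructor
  · rintro ⟨h1, h2⟩; exact ⟨by simpa [← h2] using h1, h2⟩
  · rintro ⟨h1, h2⟩; exact ⟨by simpa [h2] using h1, h2⟩

/-- pushing a `withDensity` whose density factors through a map -/
lemma map_withDensity {B : Type*} [MeasurableSpace B]
    (ρ : Measure X) {φ : X → B} (hφ : Measurable φ) {h : B → ℝ≥0∞} (hh : Measurable h) :
    (ρ.withDensity fun a => h (φ a)).map φ = (ρ.map φ).withDensity h := by
  ext s hs
  rw [Measure.map_apply hφ hs, withDensity_apply _ hs, withDensity_apply _ (hφ hs),
    Measure.restrict_map hφ hs, lintegral_map hh hφ]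

lemma lint_diag [PseudoEMetricSpace X] [OpensMeasurableSpace X] [SecondCountableTopology X]
    (η : Measure X) :
    ∫⁻ z : X × X, edist z.1 z.2 ∂(η.map fun x => (x, x)) = 0 := cst_diag_map η

end OptCouplingAux

/-- under the strict triangle inequality, any optimal coupling restricted to
the diagonal is the push-forward of `μ ⊓ ν` under `x ↦ (x,x)`; in particular the
`W₁`-distance equals the optimal transport cost between `μ⁰ = μ - μ ⊓ ν` and
`ν⁰ = ν - μ ⊓ ν`. -/
theorem optimal_coupling_fixes_common_mass
    {X : Type*} [MetricSpace X] [CompleteSpace X] [SecondCountableTopology X]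
    [MeasurableSpace X] [BorelSpace X]
    (hstrict : ∀ x y z : X, z ≠ x → z ≠ y → dist x y < dist x z + dist z y)
    (μ ν : Measure X) (hμ : MemWp 1 μ) (hν : MemWp 1 ν)
    (π : Measure (X × X))
    (hπ : π.map Prod.fst = μ ∧ π.map Prod.snd = ν)
    (hopt : ∫⁻ z, edist z.1 z.2 ∂π
      = ⨅ θ ∈ {θ : Measure (X × X) | θ.map Prod.fst = μ ∧ θ.map Prod.snd = ν},
          ∫⁻ z, edist z.1 z.2 ∂θ) :
    π.restrict (Set.diagonal X) = (μ ⊓ ν).map (fun x => (x, x)) ∧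
    wassersteinDist 1 μ ν
      = ⨅ θ ∈ {θ : Measure (X × X) |
            θ.map Prod.fst = μ - μ ⊓ ν ∧ θ.map Prod.snd = ν - μ ⊓ ν},
          ∫⁻ z, edist z.1 z.2 ∂θ := by
  classical
  obtain ⟨hπ1, hπ2⟩ := hπ
  have hμp : IsProbabilityMeasure μ := hμ.1
  have hνp : IsProbabilityMeasure ν := hν.1
  have hDm : MeasurableSet (Set.diagonal X) := isClosed_diagonal.measurableSet
  have hdm : Measurable fun x : X => (x, x) := measurable_id.prodMk measurable_id
  have hem : Measurable fun z : X × X => edist z.1 z.2 := measurable_fst.edist measurable_snd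
  haveI : IsProbabilityMeasure π := by
    constructor
    have h1 := hμp.measure_univ
    rwa [← hπ1, Measure.map_apply measurable_fst MeasurableSet.univ, Set.preimage_univ] at h1
  haveI : Nonempty X := by
    rcases isEmpty_or_nonempty X with hX | hX
    · exfalso
      have h1 := hμp.measure_univ
      rw [Set.univ_eq_empty_iff.mpr hX, measure_empty] at h1
      exact zero_ne_one h1
    · exact hX
  set σ := μ ⊓ ν with hσdef
  set η := (π.restrict (Set.diagonal X)).map Prod.fst with hηdef
  have hrd : π.restrict (Set.diagonal X) = η.map (fun x => (x, x)) :=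
    OptCouplingAux.restrict_diag_eq hDm π
  have hrd' : (π.restrict (Set.diagonal X)).map Prod.snd = η := by
    rw [hrd, Measure.map_map measurable_snd hdm]
    have h2 : (Prod.snd ∘ fun x : X => (x, x)) = id := rfl
    rw [h2, Measure.map_id]
  have hημ : η ≤ μ := by
    rw [Measure.le_iff]; intro s hs
    rw [hηdef, Measure.map_apply measurable_fst hs,
      Measure.restrict_apply (measurable_fst hs), ← hπ1, Measure.map_apply measurable_fst hs]
    exact measure_mono Set.inter_subset_left
  have hην : η ≤ ν := by
    rw [Measure.le_iff]; intro s hs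
    rw [hηdef, Measure.map_apply measurable_fst hs,
      Measure.restrict_apply (measurable_fst hs), ← hπ2, Measure.map_apply measurable_snd hs]
    have hset : Prod.fst ⁻¹' s ∩ Set.diagonal X = Prod.snd ⁻¹' s ∩ Set.diagonal X := by
      ext ⟨a, b⟩
      simp only [Set.mem_inter_iff, Set.mem_preimage, Set.mem_diagonal_iff]
      constructor
      · rintro ⟨h1, h2⟩; exact ⟨h2 ▸ h1, h2⟩
      · rintro ⟨h1, h2⟩; exact ⟨h2 ▸ h1, h2⟩
    rw [hset]; exact measure_mono Set.inter_subset_left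
  haveI : IsFiniteMeasure η := isFiniteMeasure_of_le μ hημ
  haveI : IsFiniteMeasure σ := isFiniteMeasure_of_le μ inf_le_left
  have hησ : η ≤ σ := le_inf hημ hην
  have hfin : (∫⁻ z : X × X, edist z.1 z.2 ∂π) ≠ ⊤ := by
    obtain ⟨-, x₀, hx₀⟩ := hμ
    obtain ⟨-, x₁, hx₁⟩ := hν
    simp only [ENNReal.rpow_one] at hx₀ hx₁
    have hmem : (μ.prod ν) ∈ {θ : Measure (X × X) | θ.map Prod.fst = μ ∧ θ.map Prod.snd = ν} :=
      ⟨Measure.fst_prod, Measure.snd_prod⟩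
    have hle : (∫⁻ z : X × X, edist z.1 z.2 ∂(μ.prod ν))
        ≤ (∫⁻ x, edist x x₀ ∂μ) + (edist x₀ x₁ + ∫⁻ y, edist y x₁ ∂ν) := by
      rw [lintegral_prod _ hem.aemeasurable]
      calc ∫⁻ x, ∫⁻ y, edist x y ∂ν ∂μ
          ≤ ∫⁻ x, ∫⁻ y, (edist x x₀ + (edist x₀ x₁ + edist y x₁)) ∂ν ∂μ := by
            refine lintegral_mono fun x => lintegral_mono fun y => ?_
            calc edist x y ≤ edist x x₀ + edist x₀ y := edist_triangle _ _ _
              _ ≤ edist x x₀ + (edist x₀ x₁ + edist x₁ y) := by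
                  gcongr
                  exact edist_triangle _ _ _
              _ = edist x x₀ + (edist x₀ x₁ + edist y x₁) := by rw [edist_comm x₁ y]
        _ = ∫⁻ x, (edist x x₀ + (edist x₀ x₁ + ∫⁻ y, edist y x₁ ∂ν)) ∂μ := by
            refine lintegral_congr fun x => ?_
            rw [lintegral_add_left measurable_const, lintegral_add_left measurable_const,
              lintegral_const]
            simp [measure_univ]
        _ = (∫⁻ x, edist x x₀ ∂μ) + (edist x₀ x₁ + ∫⁻ y, edist y x₁ ∂ν) := by
            rw [lintegral_add_right _ measurable_const, lintegral_const]
            simp [measure_univ]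
    have hb : (∫⁻ x, edist x x₀ ∂μ) + (edist x₀ x₁ + ∫⁻ y, edist y x₁ ∂ν) ≠ ⊤ :=
      ENNReal.add_ne_top.mpr ⟨hx₀, ENNReal.add_ne_top.mpr ⟨edist_ne_top _ _, hx₁⟩⟩
    exact ne_top_of_le_ne_top hb ((hopt.le.trans (iInf₂_le _ hmem)).trans hle)
  have key : η = σ := by
    by_contra hne
    set τ := σ - η with hτdef
    haveI : IsFiniteMeasure τ := isFiniteMeasure_of_le σ Measure.sub_le
    have hτη : τ + η = σ := Measure.sub_add_cancel_of_le hησ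
    have hτ0 : τ ≠ 0 := by
      intro h0
      rw [h0, zero_add] at hτη
      exact hne hτη
    set π₀ := π.restrict (Set.diagonal X)ᶜ with hπ₀def
    have hdecomp : π.restrict (Set.diagonal X) + π₀ = π :=
      Measure.restrict_add_restrict_compl hDm
    haveI : IsFiniteMeasure π₀ := by rw [hπ₀def]; infer_instance
    set μ' := π₀.map Prod.fst with hμ'def
    set ν' := π₀.map Prod.snd with hν'def
    haveI : IsFiniteMeasure μ' := by rw [hμ'def]; exact Measure.isFiniteMeasure_map _ _
    haveI : IsFiniteMeasure ν' := by rw [hν'def]; exact Measure.isFiniteMeasure_map _ _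
    have haddμ : η + μ' = μ := by
      rw [← hπ1]
      conv_rhs => rw [← hdecomp]
      rw [Measure.map_add _ _ measurable_fst]
    have haddν : η + ν' = ν := by
      rw [← hπ2]
      conv_rhs => rw [← hdecomp]
      rw [Measure.map_add _ _ measurable_snd, hrd']
    have hτμ' : τ ≤ μ' := by
      rw [Measure.le_iff]; intro s hs
      have h1 : τ s + η s = σ s := by rw [← hτη]; simp
      have h2 : η s + μ' s = μ s := by rw [← haddμ]; simp
      have h3 : σ s ≤ μ s := Measure.le_iff.mp inf_le_left s hs
      have h4 : τ s + η s ≤ μ' s + η s := by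
        rw [h1, ← h2, add_comm (η s)] at *
        exact h3
      exact (ENNReal.add_le_add_iff_right (measure_ne_top η s)).mp h4
    have hτν' : τ ≤ ν' := by
      rw [Measure.le_iff]; intro s hs
      have h1 : τ s + η s = σ s := by rw [← hτη]; simp
      have h2 : η s + ν' s = ν s := by rw [← haddν]; simp
      have h3 : σ s ≤ ν s := Measure.le_iff.mp inf_le_right s hs
      have h4 : τ s + η s ≤ ν' s + η s := by
        rw [h1, ← h2, add_comm (η s)] at *
        exact h3
      exact (ENNReal.add_le_add_iff_right (measure_ne_top η s)).mp h4
    set f := τ.rnDeriv μ' with hfdef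
    set g := τ.rnDeriv ν' with hgdef
    have hfm : Measurable f := Measure.measurable_rnDeriv _ _
    have hgm : Measurable g := Measure.measurable_rnDeriv _ _
    have hfd : μ'.withDensity f = τ :=
      Measure.withDensity_rnDeriv_eq _ _ (Measure.absolutelyContinuous_of_le hτμ')
    have hgd : ν'.withDensity g = τ :=
      Measure.withDensity_rnDeriv_eq _ _ (Measure.absolutelyContinuous_of_le hτν')
    have hf1 : f ≤ᵐ[μ'] 1 := Measure.rnDeriv_le_one_of_le hτμ'
    have hg1 : g ≤ᵐ[ν'] 1 := Measure.rnDeriv_le_one_of_le hτν'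
    set F : X × X → ℝ≥0∞ := fun p => 2⁻¹ * f p.1 with hFdef
    set G : X × X → ℝ≥0∞ := fun p => 2⁻¹ * g p.2 with hGdef
    have hFm : Measurable F := (hfm.comp measurable_fst).const_mul 2⁻¹
    have hGm : Measurable G := (hgm.comp measurable_snd).const_mul 2⁻¹
    set τ2 := (2⁻¹ : ℝ≥0∞) • τ with hτ2def
    haveI : IsFiniteMeasure τ2 := by
      constructor
      rw [hτ2def]
      simp only [Measure.smul_apply, smul_eq_mul]
      exact ENNReal.mul_lt_top (by norm_num) (measure_lt_top τ _)
    set π₁ := π₀.withDensity F with hπ₁def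
    set π₂ := π₀.withDensity G with hπ₂def
    have hmapF : π₁.map Prod.fst = τ2 := by
      have h1 := OptCouplingAux.map_withDensity π₀ measurable_fst (hfm.const_mul 2⁻¹)
      have h2 : μ'.withDensity (fun x => 2⁻¹ * f x) = (2⁻¹ : ℝ≥0∞) • (μ'.withDensity f) := by
        rw [← withDensity_smul (2⁻¹ : ℝ≥0∞) hfm]; rfl
      rw [hπ₁def, hFdef]
      rw [show (fun p : X × X => 2⁻¹ * f p.1) = (fun a : X × X => (fun x => 2⁻¹ * f x) a.1)
        from rfl]
      rw [h1, ← hμ'def, h2, hfd]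
    have hmapG : π₂.map Prod.snd = τ2 := by
      have h1 := OptCouplingAux.map_withDensity π₀ measurable_snd (hgm.const_mul 2⁻¹)
      have h2 : ν'.withDensity (fun x => 2⁻¹ * g x) = (2⁻¹ : ℝ≥0∞) • (ν'.withDensity g) := by
        rw [← withDensity_smul (2⁻¹ : ℝ≥0∞) hgm]; rfl
      rw [hπ₂def, hGdef]
      rw [show (fun p : X × X => 2⁻¹ * g p.2) = (fun a : X × X => (fun x => 2⁻¹ * g x) a.2)
        from rfl]
      rw [h1, ← hν'def, h2, hgd]
    set α := π₂.map Prod.fst with hαdef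
    set β := π₁.map Prod.snd with hβdef
    -- density bound and decomposition of π₀
    have hFae : ∀ᵐ p : X × X ∂π₀, f p.1 ≤ 1 := by
      have h1 : ∀ᵐ y ∂μ', f y ≤ 1 := hf1
      rw [hμ'def] at h1
      exact (ae_map_iff measurable_fst.aemeasurable
        (measurableSet_le hfm measurable_const)).mp h1
    have hGae : ∀ᵐ p : X × X ∂π₀, g p.2 ≤ 1 := by
      have h1 : ∀ᵐ y ∂ν', g y ≤ 1 := hg1
      rw [hν'def] at h1
      exact (ae_map_iff measurable_snd.aemeasurable
        (measurableSet_le hgm measurable_const)).mp h1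
    have hFGle : ∀ᵐ p : X × X ∂π₀, F p + G p ≤ 1 := by
      filter_upwards [hFae, hGae] with p h1 h2
      have hFG : F p + G p = 2⁻¹ * f p.1 + 2⁻¹ * g p.2 := rfl
      rw [hFG]
      calc 2⁻¹ * f p.1 + 2⁻¹ * g p.2 ≤ 2⁻¹ * 1 + 2⁻¹ * 1 := by gcongr
        _ = 1 := by simp [ENNReal.inv_two_add_inv_two]
    set π₃ := π₀.withDensity (fun p => 1 - (F p + G p)) with hπ₃def
    have hsum : π₃ + (π₁ + π₂) = π₀ := by
      rw [hπ₃def, hπ₁def, hπ₂def, ← withDensity_add_right _ hGm,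
        ← withDensity_add_right _ (show Measurable (F + G) from hFm.add hGm)]
      have hae : ((fun p : X × X => 1 - (F p + G p)) + (F + G)) =ᵐ[π₀] (fun _ => 1) := by
        filter_upwards [hFGle] with p hp
        simp only [Pi.add_apply]
        exact tsub_add_cancel_of_le hp
      rw [withDensity_congr_ae hae]
      exact withDensity_one
    haveI : IsFiniteMeasure π₁ := by
      constructor
      have h1 : π₁ Set.univ = τ2 Set.univ := by
        rw [← hmapF, Measure.map_apply measurable_fst MeasurableSet.univ, Set.preimage_univ]
      rw [h1]; exact measure_lt_top _ _
    haveI : IsFiniteMeasure π₂ := by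
      constructor
      have h1 : π₂ Set.univ = τ2 Set.univ := by
        rw [← hmapG, Measure.map_apply measurable_snd MeasurableSet.univ, Set.preimage_univ]
      rw [h1]; exact measure_lt_top _ _
    set π₂' := π₂.map Prod.swap with hπ₂'def
    haveI : IsFiniteMeasure π₂' := by rw [hπ₂'def]; exact Measure.isFiniteMeasure_map _ _
    have hπ₂'fst : π₂'.fst = τ2 := by
      rw [hπ₂'def, Measure.fst_map_swap]; exact hmapG
    have hπ₁fst : π₁.fst = τ2 := hmapF
    set K := π₂'.condKernel with hKdef
    set L := π₁.condKernel with hLdef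
    have hK : τ2 ⊗ₘ K = π₂' := by rw [hKdef, ← hπ₂'fst]; exact π₂'.disintegrate _
    have hL : τ2 ⊗ₘ L = π₁ := by rw [hLdef, ← hπ₁fst]; exact π₁.disintegrate _
    set κ := τ2 ⊗ₘ (K ×ₖ L) with hκdef
    have hφ₂m : Measurable fun p : X × X × X => (p.1, p.2.1) :=
      measurable_fst.prodMk (measurable_fst.comp measurable_snd)
    have hφ₁m : Measurable fun p : X × X × X => (p.1, p.2.2) :=
      measurable_fst.prodMk (measurable_snd.comp measurable_snd)
    have hM₂ : κ.map (fun p : X × X × X => (p.1, p.2.1)) = π₂' := by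
      rw [← hK, hκdef]
      ext s hs
      rw [Measure.map_apply hφ₂m hs, Measure.compProd_apply (hφ₂m hs), Measure.compProd_apply hs]
      refine lintegral_congr fun z => ?_
      rw [Kernel.prod_apply]
      have hset : (Prod.mk z ⁻¹' ((fun p : X × X × X => (p.1, p.2.1)) ⁻¹' s))
          = (Prod.mk z ⁻¹' s) ×ˢ (Set.univ : Set X) := by
        ext ⟨a, b⟩; simp
      rw [hset, Measure.prod_prod, measure_univ, mul_one]
    have hM₁ : κ.map (fun p : X × X × X => (p.1, p.2.2)) = π₁ := by
      rw [← hL, hκdef]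
      ext s hs
      rw [Measure.map_apply hφ₁m hs, Measure.compProd_apply (hφ₁m hs), Measure.compProd_apply hs]
      refine lintegral_congr fun z => ?_
      rw [Kernel.prod_apply]
      have hset : (Prod.mk z ⁻¹' ((fun p : X × X × X => (p.1, p.2.2)) ⁻¹' s))
          = (Set.univ : Set X) ×ˢ (Prod.mk z ⁻¹' s) := by
        ext ⟨a, b⟩; simp
      rw [hset, Measure.prod_prod, measure_univ, one_mul]
    set Q := κ.map (Prod.snd : X × X × X → X × X) with hQdef
    have hQfst : Q.map Prod.fst = α := by
      rw [hQdef, Measure.map_map measurable_fst measurable_snd,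
        show (Prod.fst ∘ (Prod.snd : X × X × X → X × X))
          = Prod.snd ∘ (fun p : X × X × X => (p.1, p.2.1)) from rfl,
        ← Measure.map_map measurable_snd hφ₂m, hM₂, hπ₂'def,
        Measure.map_map measurable_snd measurable_swap,
        show ((Prod.snd : X × X → X) ∘ Prod.swap) = Prod.fst from rfl, hαdef]
    have hQsnd : Q.map Prod.snd = β := by
      rw [hQdef, Measure.map_map measurable_snd measurable_snd,
        show ((Prod.snd : X × X → X) ∘ (Prod.snd : X × X × X → X × X))
          = Prod.snd ∘ (fun p : X × X × X => (p.1, p.2.2)) from rfl,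
        ← Measure.map_map measurable_snd hφ₁m, hM₁, hβdef]
    -- cost identities
    have hc₂ : ∫⁻ p : X × X × X, edist p.2.1 p.1 ∂κ = ∫⁻ z : X × X, edist z.1 z.2 ∂π₂ := by
      have e1 : ∫⁻ z : X × X, edist z.2 z.1 ∂π₂' = ∫⁻ p : X × X × X, edist p.2.1 p.1 ∂κ := by
        rw [← hM₂, lintegral_map (measurable_snd.edist measurable_fst) hφ₂m]
      have e2 : ∫⁻ z : X × X, edist z.2 z.1 ∂π₂' = ∫⁻ z : X × X, edist z.1 z.2 ∂π₂ := by
        rw [hπ₂'def, lintegral_map (measurable_snd.edist measurable_fst) measurable_swap]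
        rfl
      exact e1.symm.trans e2
    have hc₁ : ∫⁻ p : X × X × X, edist p.1 p.2.2 ∂κ = ∫⁻ z : X × X, edist z.1 z.2 ∂π₁ := by
      rw [← hM₁, lintegral_map (measurable_fst.edist measurable_snd) hφ₁m]
    have hcQ : ∫⁻ z : X × X, edist z.1 z.2 ∂Q = ∫⁻ p : X × X × X, edist p.2.1 p.2.2 ∂κ := by
      rw [hQdef, lintegral_map hem measurable_snd]
    -- off-diagonal a.e. statements
    have hπ₀D : π₀ (Set.diagonal X) = 0 := by
      rw [hπ₀def, Measure.restrict_apply hDm]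
      simp
    have hπ₁le : π₁ ≤ π₀ := by
      conv_rhs => rw [← hsum]
      rw [Measure.le_iff]; intro s hs
      simp only [Measure.coe_add, Pi.add_apply]
      calc π₁ s ≤ π₁ s + π₂ s := le_self_add
        _ ≤ π₃ s + (π₁ s + π₂ s) := le_add_self
    have hπ₂le : π₂ ≤ π₀ := by
      conv_rhs => rw [← hsum]
      rw [Measure.le_iff]; intro s hs
      simp only [Measure.coe_add, Pi.add_apply]
      calc π₂ s ≤ π₁ s + π₂ s := le_add_self
        _ ≤ π₃ s + (π₁ s + π₂ s) := le_add_self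
    have hπ₂D : π₂ (Set.diagonal X) = 0 :=
      le_antisymm ((Measure.le_iff.mp hπ₂le _ hDm).trans hπ₀D.le) zero_le
    have hπ₁D : π₁ (Set.diagonal X) = 0 :=
      le_antisymm ((Measure.le_iff.mp hπ₁le _ hDm).trans hπ₀D.le) zero_le
    have hπ₂'D : π₂' (Set.diagonal X) = 0 := by
      rw [hπ₂'def, Measure.map_apply measurable_swap hDm,
        show Prod.swap ⁻¹' (Set.diagonal X) = Set.diagonal X by
          ext ⟨a, b⟩; simp [eq_comm]]
      exact hπ₂D
    have hae₂ : ∀ᵐ p : X × X × X ∂κ, p.1 ≠ p.2.1 := by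
      have h0 : κ ((fun p : X × X × X => (p.1, p.2.1)) ⁻¹' (Set.diagonal X)) = 0 := by
        rw [← Measure.map_apply hφ₂m hDm, hM₂]; exact hπ₂'D
      rw [ae_iff]
      convert h0 using 2
      ext p
      simp [Set.mem_diagonal_iff]
    have hae₁ : ∀ᵐ p : X × X × X ∂κ, p.1 ≠ p.2.2 := by
      have h0 : κ ((fun p : X × X × X => (p.1, p.2.2)) ⁻¹' (Set.diagonal X)) = 0 := by
        rw [← Measure.map_apply hφ₁m hDm, hM₁]; exact hπ₁D
      rw [ae_iff]
      convert h0 using 2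
      ext p
      simp [Set.mem_diagonal_iff]
    have haestrict : ∀ᵐ p : X × X × X ∂κ,
        edist p.2.1 p.2.2 < edist p.2.1 p.1 + edist p.1 p.2.2 := by
      filter_upwards [hae₂, hae₁] with p h2 h1
      have hd : dist p.2.1 p.2.2 < dist p.2.1 p.1 + dist p.1 p.2.2 := hstrict _ _ _ h2 h1
      rw [edist_dist, edist_dist, edist_dist, ← ENNReal.ofReal_add dist_nonneg dist_nonneg]
      exact (ENNReal.ofReal_lt_ofReal_iff_of_nonneg dist_nonneg).mpr hd
    have hκ0 : κ ≠ 0 := by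
      intro h0
      have h1 : κ Set.univ = τ2 Set.univ := by
        rw [hκdef, Measure.compProd_apply MeasurableSet.univ]
        simp [measure_univ]
      rw [h0, Measure.coe_zero, Pi.zero_apply] at h1
      have h2 : τ Set.univ = 0 := by
        have h3 : τ2 Set.univ = 2⁻¹ * τ Set.univ := by rw [hτ2def]; simp
        rw [h3] at h1
        rcases mul_eq_zero.mp h1.symm with h | h
        · exact absurd h (by norm_num)
        · exact h
      exact hτ0 (Measure.measure_univ_eq_zero.mp h2)
    -- strict cost comparison
    have hmc0 : Measurable fun p : X × X × X => edist p.2.1 p.2.2 :=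
      (measurable_fst.comp measurable_snd).edist (measurable_snd.comp measurable_snd)
    have hmc2 : Measurable fun p : X × X × X => edist p.2.1 p.1 :=
      (measurable_fst.comp measurable_snd).edist measurable_fst
    have hmc1 : Measurable fun p : X × X × X => edist p.1 p.2.2 :=
      measurable_fst.edist (measurable_snd.comp measurable_snd)
    have hcπ₂fin : (∫⁻ z : X × X, edist z.1 z.2 ∂π₂) ≠ ⊤ :=
      ne_top_of_le_ne_top hfin
        ((lintegral_mono' hπ₂le le_rfl).trans
          (lintegral_mono' (Measure.restrict_le_self) le_rfl))
    have hcπ₁fin : (∫⁻ z : X × X, edist z.1 z.2 ∂π₁) ≠ ⊤ :=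
      ne_top_of_le_ne_top hfin
        ((lintegral_mono' hπ₁le le_rfl).trans
          (lintegral_mono' (Measure.restrict_le_self) le_rfl))
    have hRHSfin : (∫⁻ p : X × X × X, edist p.2.1 p.1 + edist p.1 p.2.2 ∂κ) ≠ ⊤ := by
      rw [lintegral_add_left hmc2, hc₂, hc₁]
      exact ENNReal.add_ne_top.mpr ⟨hcπ₂fin, hcπ₁fin⟩
    have hfinQ : (∫⁻ p : X × X × X, edist p.2.1 p.2.2 ∂κ) ≠ ⊤ := by
      refine ne_top_of_le_ne_top hRHSfin (lintegral_mono_ae ?_)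
      filter_upwards [haestrict] with p hp
      exact hp.le
    have hQlt : (∫⁻ z : X × X, edist z.1 z.2 ∂Q)
        < (∫⁻ z : X × X, edist z.1 z.2 ∂π₂) + ∫⁻ z : X × X, edist z.1 z.2 ∂π₁ := by
      rw [hcQ, ← hc₂, ← hc₁, ← lintegral_add_left hmc2]
      exact lintegral_strict_mono hκ0 (hmc2.add hmc1).aemeasurable hfinQ haestrict
    -- the competitor plan
    set ρ' := (π.restrict (Set.diagonal X) + π₃) + (Q + τ2.map (fun x => (x, x))) with hρ'def
    have hτ2d_fst : (τ2.map fun x : X => (x, x)).map Prod.fst = τ2 := by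
      rw [Measure.map_map measurable_fst hdm,
        show (Prod.fst ∘ fun x : X => (x, x)) = id from rfl, Measure.map_id]
    have hτ2d_snd : (τ2.map fun x : X => (x, x)).map Prod.snd = τ2 := by
      rw [Measure.map_map measurable_snd hdm,
        show (Prod.snd ∘ fun x : X => (x, x)) = id from rfl, Measure.map_id]
    have hρfst : ρ'.map Prod.fst = μ := by
      rw [hρ'def, Measure.map_add _ _ measurable_fst, Measure.map_add _ _ measurable_fst,
        Measure.map_add _ _ measurable_fst, hQfst, hτ2d_fst]
      have hsum' : π₃.map Prod.fst + (τ2 + α) = μ' := by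
        rw [hμ'def]
        conv_rhs => rw [← hsum]
        rw [Measure.map_add _ _ measurable_fst, Measure.map_add _ _ measurable_fst,
          hmapF, hαdef]
      rw [← haddμ, ← hsum']
      abel
    have hρsnd : ρ'.map Prod.snd = ν := by
      rw [hρ'def, Measure.map_add _ _ measurable_snd, Measure.map_add _ _ measurable_snd,
        Measure.map_add _ _ measurable_snd, hQsnd, hτ2d_snd, hrd']
      have hsum' : π₃.map Prod.snd + (β + τ2) = ν' := by
        rw [hν'def]
        conv_rhs => rw [← hsum]
        rw [Measure.map_add _ _ measurable_snd, Measure.map_add _ _ measurable_snd,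
          hmapG, hβdef]
      rw [← haddν, ← hsum']
      abel
    have hCπ : (∫⁻ z : X × X, edist z.1 z.2 ∂π)
        = (∫⁻ z : X × X, edist z.1 z.2 ∂π₃)
          + ((∫⁻ z : X × X, edist z.1 z.2 ∂π₁) + ∫⁻ z : X × X, edist z.1 z.2 ∂π₂) := by
      conv_lhs => rw [← hdecomp]
      rw [lintegral_add_measure, hrd, OptCouplingAux.lint_diag, zero_add]
      conv_lhs => rw [← hsum]
      rw [lintegral_add_measure, lintegral_add_measure]
    have hπ₃fin : (∫⁻ z : X × X, edist z.1 z.2 ∂π₃) ≠ ⊤ := by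
      refine ne_top_of_le_ne_top hfin ?_
      rw [hCπ]
      exact le_self_add
    have hρcost : (∫⁻ z : X × X, edist z.1 z.2 ∂ρ') < ∫⁻ z : X × X, edist z.1 z.2 ∂π := by
      rw [hρ'def, lintegral_add_measure, lintegral_add_measure, lintegral_add_measure,
        hrd, OptCouplingAux.lint_diag, OptCouplingAux.lint_diag, zero_add, add_zero, hCπ]
      calc (∫⁻ z : X × X, edist z.1 z.2 ∂π₃) + ∫⁻ z : X × X, edist z.1 z.2 ∂Q
          < (∫⁻ z : X × X, edist z.1 z.2 ∂π₃)
            + ((∫⁻ z : X × X, edist z.1 z.2 ∂π₂) + ∫⁻ z : X × X, edist z.1 z.2 ∂π₁) :=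
            ENNReal.add_lt_add_left hπ₃fin hQlt
        _ = (∫⁻ z : X × X, edist z.1 z.2 ∂π₃)
            + ((∫⁻ z : X × X, edist z.1 z.2 ∂π₁) + ∫⁻ z : X × X, edist z.1 z.2 ∂π₂) := by
            rw [add_comm (∫⁻ z : X × X, edist z.1 z.2 ∂π₂)]
    have hle : (∫⁻ z : X × X, edist z.1 z.2 ∂π) ≤ ∫⁻ z : X × X, edist z.1 z.2 ∂ρ' := by
      rw [hopt]
      exact iInf₂_le ρ' ⟨hρfst, hρsnd⟩
    exact absurd hle (not_le.mpr hρcost)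
  refine ⟨by rw [hrd, key], ?_⟩
  -- Part 2
  set π₀ := π.restrict (Set.diagonal X)ᶜ with hπ₀def
  have hdecomp : π.restrict (Set.diagonal X) + π₀ = π :=
    Measure.restrict_add_restrict_compl hDm
  have hfst₀ : π₀.map Prod.fst = μ - σ := by
    have hadd : η + π₀.map Prod.fst = μ := by
      rw [← hπ1]
      conv_rhs => rw [← hdecomp]
      rw [Measure.map_add _ _ measurable_fst]
    ext s hs
    rw [Measure.sub_apply hs inf_le_left]
    have h1 : η s + (π₀.map Prod.fst) s = μ s := by rw [← hadd]; simp
    rw [key] at h1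
    exact ENNReal.eq_sub_of_add_eq (measure_ne_top σ s) (by rw [add_comm]; exact h1)
  have hsnd₀ : π₀.map Prod.snd = ν - σ := by
    have hadd : η + π₀.map Prod.snd = ν := by
      rw [← hπ2]
      conv_rhs => rw [← hdecomp]
      rw [Measure.map_add _ _ measurable_snd, hrd']
    ext s hs
    rw [Measure.sub_apply hs inf_le_right]
    have h1 : η s + (π₀.map Prod.snd) s = ν s := by rw [← hadd]; simp
    rw [key] at h1
    exact ENNReal.eq_sub_of_add_eq (measure_ne_top σ s) (by rw [add_comm]; exact h1)
  have hcost₀ : (∫⁻ z : X × X, edist z.1 z.2 ∂π₀) = ∫⁻ z : X × X, edist z.1 z.2 ∂π := by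
    conv_rhs => rw [← hdecomp]
    rw [lintegral_add_measure, hrd, OptCouplingAux.lint_diag, zero_add]
  have hW : wassersteinDist 1 μ ν = ∫⁻ z : X × X, edist z.1 z.2 ∂π := by
    rw [wassersteinDist]
    simp only [inv_one, min_self, ENNReal.rpow_one]
    exact hopt.symm
  rw [hW]
  refine le_antisymm (le_iInf₂ fun θ hθ => ?_) ?_
  · obtain ⟨hθ1, hθ2⟩ := hθ
    have hmem' : (θ + σ.map fun x => (x, x)) ∈
        {θ : Measure (X × X) | θ.map Prod.fst = μ ∧ θ.map Prod.snd = ν} := by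
      constructor
      · rw [Measure.map_add _ _ measurable_fst, hθ1, Measure.map_map measurable_fst hdm,
          show (Prod.fst ∘ fun x : X => (x, x)) = id from rfl, Measure.map_id]
        exact Measure.sub_add_cancel_of_le inf_le_left
      · rw [Measure.map_add _ _ measurable_snd, hθ2, Measure.map_map measurable_snd hdm,
          show (Prod.snd ∘ fun x : X => (x, x)) = id from rfl, Measure.map_id]
        exact Measure.sub_add_cancel_of_le inf_le_right
    calc (∫⁻ z : X × X, edist z.1 z.2 ∂π)
        ≤ ∫⁻ z : X × X, edist z.1 z.2 ∂(θ + σ.map fun x => (x, x)) := by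
          rw [hopt]; exact iInf₂_le _ hmem'
      _ = ∫⁻ z : X × X, edist z.1 z.2 ∂θ := by
          rw [lintegral_add_measure, OptCouplingAux.lint_diag, add_zero]
  · rw [← hcost₀]
    exact iInf₂_le π₀ ⟨hfst₀, hsnd₀⟩

end
end

section
/- Fix 1 ≤ p < ∞ and let X = ([0,1], ρ) with ρ(x,y) = |x−y|^{1/p}, a complete separable metric space. Then: (1) for all Borel probability measures μ, ν on [0,1], d_{W_p(X)}^p(μ,ν) = d_{W_1(Y)}(μ,ν), where Y = ([0,1], |·|); (2) the flip map j, defined on Borel probability measures on [0,1] by the requirement that the cumulative distribution function of j(μ) equals the (right-continuous) quantile function of μ, is a bijective isometry of W_p(X) satisfying j(δ_t) = t·δ_0 + (1−t)·δ_1 for all t ∈ (0,1); consequently W_p(X) possesses an isometry that does not preserve the set of Dirac measures. -/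
open MeasureTheory ENNReal

noncomputable section

/-- The unit interval, underlying set of both metric spaces
`X = ([0,1], |x-y|^{1/p})` and `Y = ([0,1], |x-y|)`. -/
abbrev I01 : Type := Set.Icc (0:ℝ) 1

/-- Cumulative distribution function `F_μ(x) = μ([0,x])` of a Borel probability measure on
`[0,1]`. -/
noncomputable def cdf01 (μ : Measure I01) (x : ℝ) : ℝ :=
  (μ {z : I01 | (z : ℝ) ≤ x}).toReal

/-- The (right-continuous) quantile function `F_μ^{-1}` of a Borel probability measure on
`[0,1]`: `F_μ^{-1}(y) = sup {x ∈ ℝ : F_μ(x) ≤ y}` for `y ∈ (0,1)`, extended by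
right-continuity at `0` and by `F_μ^{-1}(1) = 1`. -/
noncomputable def quantile01 (μ : Measure I01) (y : ℝ) : ℝ :=
  if y = 1 then 1
  else if y = 0 then
    sInf ((fun y' => sSup {x : ℝ | cdf01 μ x ≤ y'}) '' Set.Ioo (0:ℝ) 1)
  else sSup {x : ℝ | cdf01 μ x ≤ y}

/-- The `p`-Wasserstein distance on `X = ([0,1], ρ)` with `ρ(x,y) = |x-y|^{1/p}`:
the cost is `ρ(x,y)^p = (|x-y|^{1/p})^p` and the outer exponent is `min(1/p,1) = 1/p`.
(Here `edist z.1 z.2 = |z.1 - z.2|` is the standard distance on `[0,1]`.) -/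
noncomputable def dWX (p : ℝ) (μ ν : Measure I01) : ℝ≥0∞ :=
  (⨅ π ∈ {π : Measure (I01 × I01) | π.map Prod.fst = μ ∧ π.map Prod.snd = ν},
    ∫⁻ z, (edist z.1 z.2 ^ (1/p)) ^ p ∂π) ^ min (1/p) 1

/-- The `1`-Wasserstein distance on `Y = ([0,1], |·|)`. -/
noncomputable def dWY (μ ν : Measure I01) : ℝ≥0∞ :=
  ⨅ π ∈ {π : Measure (I01 × I01) | π.map Prod.fst = μ ∧ π.map Prod.snd = ν},
    ∫⁻ z, edist z.1 z.2 ∂π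

open Set

namespace FlipAux

def cSet (x : ℝ) : Set I01 := {z : I01 | (z : ℝ) ≤ x}

lemma meas_cSet (x : ℝ) : MeasurableSet (cSet x) :=
  measurableSet_le measurable_subtype_coe measurable_const

lemma cdf_eq (μ : Measure I01) (x : ℝ) : cdf01 μ x = (μ (cSet x)).toReal := rfl

variable {μ ν : Measure I01}

lemma ne_top (hμ : IsProbabilityMeasure μ) (s : Set I01) : μ s ≠ ⊤ :=
  (lt_of_le_of_lt (measure_mono (subset_univ s)) (by simp [hμ.measure_univ])).ne

lemma cdf_nonneg (x : ℝ) : 0 ≤ cdf01 μ x := ENNReal.toReal_nonneg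

lemma cdf_le_one (hμ : IsProbabilityMeasure μ) (x : ℝ) : cdf01 μ x ≤ 1 := by
  rw [cdf_eq]
  have : μ (cSet x) ≤ 1 := (measure_mono (subset_univ _)).trans (by simp [hμ.measure_univ])
  simpa using ENNReal.toReal_mono one_ne_top this

lemma cdf_mono (hμ : IsProbabilityMeasure μ) : Monotone (cdf01 μ) := by
  intro a b hab
  exact ENNReal.toReal_mono (ne_top hμ _) (measure_mono (fun z hz => le_trans hz hab))

lemma cdf_neg (hx : x < 0) : cdf01 μ x = 0 := by
  have : cSet x = ∅ := by
    ext z; simp only [cSet, mem_setOf_eq, mem_empty_iff_false, iff_false, not_le]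
    exact lt_of_lt_of_le hx z.2.1
  rw [cdf_eq, this]; simp

lemma cdf_ge_one (hμ : IsProbabilityMeasure μ) (hx : (1:ℝ) ≤ x) : cdf01 μ x = 1 := by
  have : cSet x = univ := eq_univ_of_forall (fun z => le_trans z.2.2 hx)
  rw [cdf_eq, this, hμ.measure_univ]; simp

lemma vol_setOf (P : ℝ → Prop) :
    (volume : Measure I01) {u : I01 | P ↑u} = volume ({x : ℝ | P x} ∩ Icc 0 1) := by
  rw [show (volume : Measure I01) = Measure.comap Subtype.val volume from rfl,
    (MeasurableEmbedding.subtype_coe measurableSet_Icc).comap_apply]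
  congr 1
  ext x
  simp only [mem_image, mem_setOf_eq, mem_inter_iff]
  constructor
  · rintro ⟨u, hu, rfl⟩; exact ⟨hu, u.2⟩
  · rintro ⟨h1, h2⟩; exact ⟨⟨x, h2⟩, h1, rfl⟩

lemma vol_Ico (a b : ℝ) (ha : 0 ≤ a) (hb : b ≤ 1) :
    (volume : Measure I01) {u : I01 | a ≤ ↑u ∧ (u:ℝ) < b} = ENNReal.ofReal (b - a) := by
  rw [vol_setOf (fun x => a ≤ x ∧ x < b)]
  have : {x : ℝ | a ≤ x ∧ x < b} ∩ Icc 0 1 = Ico a b := by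
    ext x
    simp only [mem_inter_iff, mem_setOf_eq, mem_Icc, mem_Ico]
    constructor
    · rintro ⟨h, _⟩; exact h
    · rintro ⟨h1, h2⟩; exact ⟨⟨h1, h2⟩, le_trans ha h1, le_trans h2.le hb⟩
  rw [this, Real.volume_Ico]

lemma vol_Iic (x : ℝ) (hx : x ∈ Icc (0:ℝ) 1) :
    (volume : Measure I01) {u : I01 | (u:ℝ) ≤ x} = ENNReal.ofReal x := by
  rw [vol_setOf (fun y => y ≤ x)]
  have : {y : ℝ | y ≤ x} ∩ Icc 0 1 = Icc 0 x := by
    ext y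
    simp only [mem_inter_iff, mem_setOf_eq, mem_Icc]
    exact ⟨fun ⟨h1, h2, _⟩ => ⟨h2, h1⟩, fun ⟨h1, h2⟩ => ⟨h2, h1, le_trans h2 hx.2⟩⟩
  rw [this, Real.volume_Icc]
  norm_num

lemma vol_Iio (t : ℝ) (ht : t ∈ Icc (0:ℝ) 1) :
    (volume : Measure I01) {u : I01 | (u:ℝ) < t} = ENNReal.ofReal t := by
  rw [vol_setOf (fun y => y < t)]
  have : {y : ℝ | y < t} ∩ Icc 0 1 = Ico 0 t := by
    ext y
    simp only [mem_inter_iff, mem_setOf_eq, mem_Icc, mem_Ico]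
    exact ⟨fun ⟨h1, h2, _⟩ => ⟨h2, h1⟩, fun ⟨h1, h2⟩ => ⟨h2, h1, le_trans h2.le ht.2⟩⟩
  rw [this, Real.volume_Ico]
  norm_num

/-- measure of a lower set intersected with `[0,1]`. -/
lemma vol_lowerSet {S : Set ℝ} (hl : IsLowerSet S) (h0 : Iio 0 ⊆ S) (h1 : S ⊆ Iio 1) :
    volume (S ∩ Icc 0 1) = ENNReal.ofReal (sSup S) ∧ sSup S ∈ Icc (0:ℝ) 1 := by
  have hne : S.Nonempty := ⟨-1, h0 (by norm_num)⟩
  have hbdd : BddAbove S := ⟨1, fun x hx => (h1 hx).le⟩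
  have hs1 : sSup S ≤ 1 := csSup_le hne (fun x hx => (h1 hx).le)
  have hs0 : 0 ≤ sSup S := by
    have : sSup (Iio (0:ℝ)) ≤ sSup S := csSup_le_csSup hbdd ⟨-1, by norm_num⟩ h0
    rwa [csSup_Iio] at this
  refine ⟨?_, hs0, hs1⟩
  apply le_antisymm
  · apply le_trans (measure_mono (show S ∩ Icc 0 1 ⊆ Icc 0 (sSup S) from ?_))
    · rw [Real.volume_Icc]; simp
    · rintro x ⟨hxS, hx0, _⟩
      exact ⟨hx0, le_csSup hbdd hxS⟩
  · apply le_trans (le_of_eq ?_) (measure_mono (show Ico 0 (sSup S) ⊆ S ∩ Icc 0 1 from ?_))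
    · rw [Real.volume_Ico]; simp
    · rintro x ⟨hx0, hxs⟩
      obtain ⟨y, hyS, hxy⟩ := exists_lt_of_lt_csSup hne hxs
      exact ⟨hl hxy.le hyS, hx0, (lt_of_lt_of_le hxs hs1).le⟩

/-- `sSup {x | F x ≤ y}` for `y ∈ [0,1)`. -/
def sQ (μ : Measure I01) (y : ℝ) : ℝ := sSup {x : ℝ | cdf01 μ x ≤ y}

lemma lemA (hμ : IsProbabilityMeasure μ) {y : ℝ} (hy : y ∈ Ico (0:ℝ) 1) :
    (volume : Measure I01) {u : I01 | cdf01 μ ↑u ≤ y} = ENNReal.ofReal (sQ μ y)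
      ∧ sQ μ y ∈ Icc (0:ℝ) 1 := by
  have hl : IsLowerSet {x : ℝ | cdf01 μ x ≤ y} := fun a b hba ha => le_trans (cdf_mono hμ hba) ha
  have h0 : Iio 0 ⊆ {x : ℝ | cdf01 μ x ≤ y} := fun x hx => by
    rw [mem_setOf_eq, cdf_neg hx]; exact hy.1
  have h1 : {x : ℝ | cdf01 μ x ≤ y} ⊆ Iio 1 := fun x hx => by
    by_contra h
    simp only [mem_Iio, not_lt] at h
    rw [mem_setOf_eq, cdf_ge_one hμ h] at hx
    exact absurd (lt_of_le_of_lt hx hy.2) (lt_irrefl 1)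
  obtain ⟨hv, hm⟩ := vol_lowerSet hl h0 h1
  rw [vol_setOf (fun x => cdf01 μ x ≤ y), hv]
  exact ⟨rfl, hm⟩

lemma sQ_mono (hμ : IsProbabilityMeasure μ) {y y' : ℝ} (hy : y ∈ Ico (0:ℝ) 1)
    (hyy : y ≤ y') (hy' : y' ∈ Ico (0:ℝ) 1) : sQ μ y ≤ sQ μ y' := by
  apply csSup_le_csSup
  · refine ⟨1, fun x hx => ?_⟩
    by_contra h
    push_neg at h
    rw [mem_setOf_eq, cdf_ge_one hμ h.le] at hx
    exact absurd (lt_of_le_of_lt hx hy'.2) (lt_irrefl 1)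
  · exact ⟨-1, by rw [mem_setOf_eq, cdf_neg (by norm_num)]; exact hy.1⟩
  · exact fun x hx => le_trans hx hyy

/-- `sInf` over `(0,1)` of `sQ` equals `sQ 0`. -/
lemma sInf_sQ (hμ : IsProbabilityMeasure μ) :
    sInf ((fun y' => sSup {x : ℝ | cdf01 μ x ≤ y'}) '' Ioo (0:ℝ) 1) = sQ μ 0 := by
  have hne : ((fun y' => sSup {x : ℝ | cdf01 μ x ≤ y'}) '' Ioo (0:ℝ) 1).Nonempty :=
    ⟨_, mem_image_of_mem _ (by norm_num : (1/2 : ℝ) ∈ Ioo (0:ℝ) 1)⟩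
  apply le_antisymm
  · apply le_of_forall_gt_imp_ge_of_dense
    intro c hc
    -- find y ∈ (0,1) with sQ μ y ≤ c
    set t := (sQ μ 0 + c) / 2 with ht
    have ht1 : sQ μ 0 < t := by rw [ht]; linarith
    have ht2 : t < c := by rw [ht]; linarith
    have hFt : 0 < cdf01 μ t := by
      rcases lt_or_ge 0 (cdf01 μ t) with h | h
      · exact h
      · exfalso
        have : t ∈ {x : ℝ | cdf01 μ x ≤ 0} := le_antisymm h (cdf_nonneg t) ▸ le_of_eq (le_antisymm h (cdf_nonneg t))
        have hbdd : BddAbove {x : ℝ | cdf01 μ x ≤ (0:ℝ)} := by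
          refine ⟨1, fun x hx => ?_⟩
          by_contra hh
          push_neg at hh
          rw [mem_setOf_eq, cdf_ge_one hμ hh.le] at hx
          linarith
        exact absurd (le_csSup hbdd this) (not_le.mpr ht1)
    set y := cdf01 μ t / 2 with hy
    have hy01 : y ∈ Ioo (0:ℝ) 1 := by
      constructor
      · positivity
      · have := cdf_le_one hμ t; rw [hy]; linarith
    have hQy : sQ μ y ≤ t := by
      apply csSup_le ⟨-1, by rw [mem_setOf_eq, cdf_neg (by norm_num)]; exact hy01.1.le⟩
      intro x hx
      by_contra hh
      push_neg at hh
      have : cdf01 μ t ≤ cdf01 μ x := cdf_mono hμ hh.le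
      rw [mem_setOf_eq] at hx
      rw [hy] at hx
      linarith
    calc sInf _ ≤ sQ μ y := csInf_le (by
          refine ⟨sQ μ 0, ?_⟩
          rintro v ⟨y', hy', rfl⟩
          exact sQ_mono hμ (by norm_num) hy'.1.le ⟨hy'.1.le, hy'.2⟩) (mem_image_of_mem _ hy01)
      _ ≤ c := le_trans hQy ht2.le
  · apply le_csInf hne
    rintro v ⟨y', hy', rfl⟩
    exact sQ_mono hμ (by norm_num) hy'.1.le ⟨hy'.1.le, hy'.2⟩

end FlipAux

namespace FlipAux
variable {μ ν : Measure I01}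

/-- the flip map ingredient: `u ↦ F_μ(u)` as a map `I01 → I01`. -/
def Fm (μ : Measure I01) : I01 → I01 := fun u => projIcc 0 1 zero_le_one (cdf01 μ ↑u)

lemma Fm_coe (hμ : IsProbabilityMeasure μ) (u : I01) : (Fm μ u : ℝ) = cdf01 μ ↑u := by
  rw [Fm, projIcc_of_mem zero_le_one ⟨cdf_nonneg _, cdf_le_one hμ _⟩]

lemma measurable_Fm (hμ : IsProbabilityMeasure μ) : Measurable (Fm μ) :=
  continuous_projIcc.measurable.comp ((cdf_mono hμ).measurable.comp measurable_subtype_coe)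

/-- the flip map on measures. -/
def jmap (μ : Measure I01) : Measure I01 := Measure.map (Fm μ) volume

lemma jmap_prob (hμ : IsProbabilityMeasure μ) : IsProbabilityMeasure (jmap μ) :=
  Measure.isProbabilityMeasure_map (measurable_Fm hμ).aemeasurable

/-- the crucial cdf formula for `jmap`. -/
lemma cdf_jmap (hμ : IsProbabilityMeasure μ) (x : ℝ) :
    cdf01 (jmap μ) x = ((volume : Measure I01) {u : I01 | cdf01 μ ↑u ≤ x}).toReal := by
  rw [cdf_eq, jmap, Measure.map_apply (measurable_Fm hμ) (meas_cSet x)]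
  congr 2
  ext u
  simp only [mem_preimage, cSet, mem_setOf_eq, Fm_coe hμ]

lemma meas_cdf_le (hμ : IsProbabilityMeasure μ) (x : ℝ) :
    MeasurableSet {u : I01 | cdf01 μ ↑u ≤ x} :=
  measurableSet_le ((cdf_mono hμ).measurable.comp measurable_subtype_coe) measurable_const

/-- right continuity, quantitative form. -/
lemma rcont (hμ : IsProbabilityMeasure μ) (x c : ℝ) (hc : cdf01 μ x < c) :
    ∃ ε > 0, cdf01 μ (x + ε) < c := by
  have hinter : ⋂ n : ℕ, cSet (x + 1/(n+1)) = cSet x := by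
    ext z
    simp only [mem_iInter, cSet, mem_setOf_eq]
    constructor
    · intro h
      apply _root_.le_of_forall_pos_le_add
      intro ε hε
      obtain ⟨n, hn⟩ := exists_nat_one_div_lt hε
      exact le_trans (h n) (by linarith)
    · intro h n
      have : (0:ℝ) < 1/(n+1) := by positivity
      linarith
  have htd : Filter.Tendsto (fun n : ℕ => μ (cSet (x + 1/(n+1)))) Filter.atTop
      (nhds (μ (cSet x))) := by
    have := MeasureTheory.tendsto_measure_iInter_atTop
      (μ := μ) (s := fun n : ℕ => cSet (x + 1/(n+1)))
      (fun n => (meas_cSet _).nullMeasurableSet)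
      (fun m n hmn z hz => by
        simp only [cSet, mem_setOf_eq] at hz ⊢
        have hcast : ((m:ℝ)+1) ≤ (n:ℝ)+1 := by
          have : (m:ℝ) ≤ n := Nat.cast_le.mpr hmn
          linarith
        have h1 : (1:ℝ)/(n+1) ≤ 1/(m+1) := one_div_le_one_div_of_le (by positivity) hcast
        linarith)
      ⟨0, ne_top hμ _⟩
    rwa [hinter] at this
  have htdR : Filter.Tendsto (fun n : ℕ => cdf01 μ (x + 1/(n+1))) Filter.atTop
      (nhds (cdf01 μ x)) := by
    have : Filter.Tendsto (fun n : ℕ => (μ (cSet (x + 1/(n+1)))).toReal) Filter.atTop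
        (nhds ((μ (cSet x)).toReal)) :=
      (ENNReal.tendsto_toReal (ne_top hμ _)).comp htd
    exact this
  obtain ⟨n, hn⟩ := (htdR.eventually_lt_const hc).exists
  exact ⟨1/(n+1), by positivity, hn⟩

/-- MAIN LEMMA 1: cdf of `jmap μ` equals `quantile01 μ` on `[0,1]`. -/
lemma cdf_jmap_eq_quantile (hμ : IsProbabilityMeasure μ) {x : ℝ} (hx : x ∈ Icc (0:ℝ) 1) :
    cdf01 (jmap μ) x = quantile01 μ x := by
  rcases eq_or_lt_of_le hx.2 with h1 | h1
  · rw [h1, quantile01, if_pos rfl, cdf_jmap hμ]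
    have : {u : I01 | cdf01 μ ↑u ≤ (1:ℝ)} = univ :=
      eq_univ_of_forall (fun u => cdf_le_one hμ _)
    rw [this]
    simp
  · rw [cdf_jmap hμ, (lemA hμ ⟨hx.1, h1⟩).1, ENNReal.toReal_ofReal (lemA hμ ⟨hx.1, h1⟩).2.1]
    rcases eq_or_lt_of_le hx.1 with h0 | h0
    · rw [quantile01, if_neg (by rw [← h0]; norm_num), if_pos h0.symm, ← h0]
      exact (sInf_sQ hμ).symm
    · rw [quantile01, if_neg (by intro h; rw [h] at h1; exact lt_irrefl _ h1),
        if_neg (by intro h; rw [h] at h0; exact lt_irrefl _ h0)]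
      rfl

end FlipAux

namespace FlipAux
variable {μ ν : Measure I01}

/-- probability measures on `[0,1]` with the same cdf are equal. -/
lemma ext_cdf (hμ : IsProbabilityMeasure μ) (hν : IsProbabilityMeasure ν)
    (h : ∀ x ∈ Icc (0:ℝ) 1, cdf01 μ x = cdf01 ν x) : μ = ν := by
  apply Measure.ext_of_Iic
  intro a
  have hIic : Iic a = cSet ↑a := by
    ext z; simp [cSet, Subtype.coe_le_coe]
  have := h ↑a a.2
  rw [cdf_eq, cdf_eq] at this
  rw [hIic]
  exact (ENNReal.toReal_eq_toReal_iff' (ne_top hμ _) (ne_top hν _)).mp this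

lemma vol_prob : IsProbabilityMeasure (volume : Measure I01) := inferInstance

/-- MAIN LEMMA 2: quantile of `jmap μ` equals cdf of `μ` on `[0,1]`. -/
lemma quantile_jmap_eq_cdf (hμ : IsProbabilityMeasure μ) {x : ℝ} (hx : x ∈ Icc (0:ℝ) 1) :
    quantile01 (jmap μ) x = cdf01 μ x := by
  have hj := jmap_prob hμ
  -- the key claim, for x ∈ (0,1)
  have key : ∀ x' ∈ Ioo (0:ℝ) 1, sSup {t : ℝ | cdf01 (jmap μ) t ≤ x'} = cdf01 μ x' := by
    intro x' hx'
    have hg : ∀ t : ℝ, cdf01 (jmap μ) t = ((volume : Measure I01) {u : I01 | cdf01 μ ↑u ≤ t}).toReal :=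
      cdf_jmap hμ
    have hub : ∀ t, cdf01 (jmap μ) t ≤ x' → t ≤ cdf01 μ x' := by
      intro t ht
      by_contra hh
      push_neg at hh
      obtain ⟨ε, hε, hlt⟩ := rcont hμ x' t hh
      set ε' := min ε (1 - x') with hε'
      have hε'0 : 0 < ε' := lt_min hε (by linarith [hx'.2])
      have hFε' : cdf01 μ (x' + ε') < t :=
        lt_of_le_of_lt (cdf_mono hμ (by rw [hε']; linarith [min_le_left ε (1-x')])) hlt
      have hsub : {u : I01 | (u:ℝ) ≤ x' + ε'} ⊆ {u : I01 | cdf01 μ ↑u ≤ t} :=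
        fun u hu => le_trans (cdf_mono hμ hu) hFε'.le
      have hv : ENNReal.ofReal (x' + ε') ≤ (volume : Measure I01) {u : I01 | cdf01 μ ↑u ≤ t} := by
        rw [← vol_Iic (x' + ε') ⟨by linarith [hx'.1], by rw [hε']; linarith [min_le_right ε (1-x')]⟩]
        exact measure_mono hsub
      have : x' + ε' ≤ cdf01 (jmap μ) t := by
        rw [hg]
        have := ENNReal.toReal_mono (ne_top vol_prob _) hv
        · rwa [ENNReal.toReal_ofReal (by linarith [hx'.1])] at this
      linarith
    have hmem : ∀ t, t < cdf01 μ x' → cdf01 (jmap μ) t ≤ x' := by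
      intro t ht
      have hsub : {u : I01 | cdf01 μ ↑u ≤ t} ⊆ {u : I01 | (u:ℝ) ≤ x'} := by
        intro u hu
        by_contra hh
        simp only [mem_setOf_eq, not_le] at hh
        exact absurd (le_trans (cdf_mono hμ hh.le) hu) (not_le.mpr ht)
      rw [hg]
      have := ENNReal.toReal_mono (ne_top vol_prob _) (measure_mono hsub)
      apply le_trans this
      rw [vol_Iic x' ⟨hx'.1.le, hx'.2.le⟩, ENNReal.toReal_ofReal hx'.1.le]
    have hbdd : BddAbove {t : ℝ | cdf01 (jmap μ) t ≤ x'} := ⟨cdf01 μ x', fun t ht => hub t ht⟩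
    apply le_antisymm
    · exact csSup_le ⟨-1, by rw [mem_setOf_eq, cdf_neg (by norm_num)]; exact hx'.1.le⟩
        (fun t ht => hub t ht)
    · by_contra hh
      push_neg at hh
      set m := (sSup {t : ℝ | cdf01 (jmap μ) t ≤ x'} + cdf01 μ x') / 2 with hm
      have h1 : sSup {t : ℝ | cdf01 (jmap μ) t ≤ x'} < m := by rw [hm]; linarith
      have h2 : m < cdf01 μ x' := by rw [hm]; linarith
      exact absurd (le_csSup hbdd (hmem m h2)) (not_le.mpr h1)
  rcases eq_or_lt_of_le hx.2 with h1 | h1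
  · rw [h1, quantile01, if_pos rfl, cdf_ge_one hμ le_rfl]
  rcases eq_or_lt_of_le hx.1 with h0 | h0
  · -- x = 0
    rw [quantile01, if_neg (by rw [← h0]; norm_num), if_pos h0.symm]
    have himg : ((fun y' => sSup {t : ℝ | cdf01 (jmap μ) t ≤ y'}) '' Ioo (0:ℝ) 1)
        = cdf01 μ '' Ioo (0:ℝ) 1 := by
      apply image_congr
      intro y hy
      exact key y hy
    rw [himg, ← h0]
    -- sInf (F '' (0,1)) = F 0 by right continuity
    have hne : (cdf01 μ '' Ioo (0:ℝ) 1).Nonempty :=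
      ⟨_, mem_image_of_mem _ (by norm_num : (1/2:ℝ) ∈ Ioo (0:ℝ) 1)⟩
    apply le_antisymm
    · apply le_of_forall_gt_imp_ge_of_dense
      intro c hc
      obtain ⟨ε, hε, hlt⟩ := rcont hμ 0 c hc
      set y := min ε (1/2) with hy
      have hy01 : y ∈ Ioo (0:ℝ) 1 := ⟨lt_min hε (by norm_num), lt_of_le_of_lt (min_le_right _ _) (by norm_num)⟩
      have : cdf01 μ y ≤ cdf01 μ (0 + ε) := cdf_mono hμ (by rw [hy]; linarith [min_le_left ε (1/2:ℝ)])
      calc sInf _ ≤ cdf01 μ y := csInf_le ⟨cdf01 μ 0, by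
              rintro v ⟨y', hy', rfl⟩
              exact cdf_mono hμ hy'.1.le⟩ (mem_image_of_mem _ hy01)
        _ ≤ c := by linarith
    · apply le_csInf hne
      rintro v ⟨y', hy', rfl⟩
      exact cdf_mono hμ hy'.1.le
  · rw [quantile01, if_neg h1.ne, if_neg (ne_of_gt h0)]
    exact key x ⟨h0, h1⟩

end FlipAux

namespace FlipAux
variable {μ ν : Measure I01}

/-- `jmap` is an involution on probability measures. -/
lemma jj_eq (hμ : IsProbabilityMeasure μ) : jmap (jmap μ) = μ := by
  apply ext_cdf (jmap_prob (jmap_prob hμ)) hμ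
  intro x hx
  rw [cdf_jmap_eq_quantile (jmap_prob hμ) hx, quantile_jmap_eq_cdf hμ hx]

/-- the cdf distance. -/
def D (μ ν : Measure I01) : ℝ≥0∞ := ∫⁻ u, edist (Fm μ u) (Fm ν u) ∂(volume : Measure I01)

lemma edist_I01 (a b : I01) : edist a b = ENNReal.ofReal ((a:ℝ) - b) + ENNReal.ofReal ((b:ℝ) - a) := by
  rw [Subtype.edist_eq, edist_dist, Real.dist_eq]
  rcases le_total (b:ℝ) a with h | h
  · rw [abs_of_nonneg (sub_nonneg.mpr h),
      ENNReal.ofReal_of_nonpos (sub_nonpos.mpr h : (b:ℝ) - a ≤ 0), add_zero]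
  · rw [abs_of_nonpos (sub_nonpos.mpr h),
      ENNReal.ofReal_of_nonpos (sub_nonpos.mpr h : (a:ℝ) - b ≤ 0), zero_add, neg_sub]

/-- `A - B = ofReal (A.toReal - B.toReal)` for `B ≤ A ≠ ⊤`. -/
lemma sub_eq_ofReal {A B : ℝ≥0∞} (hA : A ≠ ⊤) (h : B ≤ A) :
    A - B = ENNReal.ofReal (A.toReal - B.toReal) := by
  rw [← ENNReal.toReal_sub_of_le h hA, ENNReal.ofReal_toReal]
  exact (tsub_le_self.trans_lt (lt_top_iff_ne_top.mpr hA)).ne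

end FlipAux

namespace FlipAux
variable {μ ν : Measure I01}

def χ (a u : I01) : ℝ≥0∞ := if (u:ℝ) < (a:ℝ) then 1 else 0

lemma G_eq (a b u : I01) (h : (b:ℝ) ≤ a) :
    (χ a u - χ b u) + (χ b u - χ a u)
      = if ((b:ℝ) ≤ ↑u ∧ (u:ℝ) < ↑a) then 1 else 0 := by
  rcases lt_or_ge (u:ℝ) b with h1 | h1
  · have h2 : (u:ℝ) < a := lt_of_lt_of_le h1 h
    simp [χ, h1, h2, not_le.mpr h1]
  · rcases lt_or_ge (u:ℝ) a with h2 | h2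
    · simp [χ, not_lt.mpr h1, h2, h1, zero_tsub, tsub_zero]
    · simp [χ, not_lt.mpr h1, not_lt.mpr h2, zero_tsub, tsub_zero]

lemma edist_eq_lint (z : I01 × I01) :
    edist z.1 z.2 = ∫⁻ u, (χ z.1 u - χ z.2 u) + (χ z.2 u - χ z.1 u) ∂(volume : Measure I01) := by
  suffices H : ∀ a b : I01, (b:ℝ) ≤ a →
      edist a b = ∫⁻ u, (χ a u - χ b u) + (χ b u - χ a u) ∂(volume : Measure I01) by
    rcases le_total (z.2:ℝ) z.1 with h | h
    · exact H _ _ h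
    · rw [edist_comm, H _ _ h]
      exact lintegral_congr (fun u => add_comm _ _)
  intro a b h
  rw [lintegral_congr (fun u => G_eq a b u h)]
  have hS : MeasurableSet {u : I01 | (b:ℝ) ≤ ↑u ∧ (u:ℝ) < ↑a} :=
    (measurableSet_le measurable_const measurable_subtype_coe).inter
      (measurableSet_lt measurable_subtype_coe measurable_const)
  have hind : (fun u : I01 => if ((b:ℝ) ≤ ↑u ∧ (u:ℝ) < ↑a) then (1:ℝ≥0∞) else 0)
      = Set.indicator {u : I01 | (b:ℝ) ≤ ↑u ∧ (u:ℝ) < ↑a} 1 := by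
    funext u
    by_cases hu : ((b:ℝ) ≤ ↑u ∧ (u:ℝ) < ↑a) <;> simp [hu, Set.indicator_apply, ← Subtype.coe_le_coe, ← Subtype.coe_lt_coe]
  rw [hind, lintegral_indicator_one hS, vol_Ico ↑b ↑a b.2.1 a.2.2, edist_I01,
    ENNReal.ofReal_of_nonpos (sub_nonpos.mpr h : (b:ℝ) - a ≤ 0), add_zero]

lemma meas_chi_fst (u : I01) : Measurable (fun z : I01 × I01 => χ z.1 u) := by
  apply Measurable.ite (measurableSet_lt measurable_const
    (measurable_subtype_coe.comp measurable_fst)) measurable_const measurable_const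

lemma meas_chi_snd (u : I01) : Measurable (fun z : I01 × I01 => χ z.2 u) := by
  apply Measurable.ite (measurableSet_lt measurable_const
    (measurable_subtype_coe.comp measurable_snd)) measurable_const measurable_const

lemma lint_chi_fst (π : Measure (I01 × I01)) (hπ : π.map Prod.fst = μ) (u : I01) :
    ∫⁻ z, χ z.1 u ∂π = μ {a : I01 | (u:ℝ) < ↑a} := by
  have hS : MeasurableSet {a : I01 | (u:ℝ) < ↑a} :=
    measurableSet_lt measurable_const measurable_subtype_coe
  have hind : (fun z : I01 × I01 => χ z.1 u)
      = Set.indicator (Prod.fst ⁻¹' {a : I01 | (u:ℝ) < ↑a}) 1 := by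
    funext z
    by_cases hz : (u:ℝ) < ↑z.1 <;> simp [χ, hz, Set.indicator_apply, mem_preimage, ← Subtype.coe_lt_coe]
  rw [hind, lintegral_indicator_one (hS.preimage measurable_fst),
    ← Measure.map_apply measurable_fst hS, hπ]

lemma lint_chi_snd (π : Measure (I01 × I01)) (hπ : π.map Prod.snd = ν) (u : I01) :
    ∫⁻ z, χ z.2 u ∂π = ν {a : I01 | (u:ℝ) < ↑a} := by
  have hS : MeasurableSet {a : I01 | (u:ℝ) < ↑a} :=
    measurableSet_lt measurable_const measurable_subtype_coe
  have hind : (fun z : I01 × I01 => χ z.2 u)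
      = Set.indicator (Prod.snd ⁻¹' {a : I01 | (u:ℝ) < ↑a}) 1 := by
    funext z
    by_cases hz : (u:ℝ) < ↑z.2 <;> simp [χ, hz, Set.indicator_apply, mem_preimage, ← Subtype.coe_lt_coe]
  rw [hind, lintegral_indicator_one (hS.preimage measurable_snd),
    ← Measure.map_apply measurable_snd hS, hπ]

lemma tail_toReal (hμ : IsProbabilityMeasure μ) (u : I01) :
    (μ {a : I01 | (u:ℝ) < ↑a}).toReal = 1 - cdf01 μ ↑u := by
  have hcompl : {a : I01 | (u:ℝ) < ↑a} = (cSet ↑u)ᶜ := by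
    ext a; simp [cSet, not_le]
  rw [hcompl, measure_compl (meas_cSet _) (ne_top hμ _), hμ.measure_univ,
    ENNReal.toReal_sub_of_le (prob_le_one) one_ne_top, ENNReal.toReal_one, cdf_eq]

lemma key_edist (hμ : IsProbabilityMeasure μ) (hν : IsProbabilityMeasure ν) (u : I01) :
    (μ {a : I01 | (u:ℝ) < ↑a} - ν {a : I01 | (u:ℝ) < ↑a})
      + (ν {a : I01 | (u:ℝ) < ↑a} - μ {a : I01 | (u:ℝ) < ↑a})
      = edist (Fm μ u) (Fm ν u) := by
  suffices H : ∀ (μ ν : Measure I01), IsProbabilityMeasure μ → IsProbabilityMeasure ν →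
      ν {a : I01 | (u:ℝ) < ↑a} ≤ μ {a : I01 | (u:ℝ) < ↑a} →
      (μ {a : I01 | (u:ℝ) < ↑a} - ν {a : I01 | (u:ℝ) < ↑a})
        + (ν {a : I01 | (u:ℝ) < ↑a} - μ {a : I01 | (u:ℝ) < ↑a})
        = edist (Fm μ u) (Fm ν u) by
    rcases le_total (ν {a : I01 | (u:ℝ) < ↑a}) (μ {a : I01 | (u:ℝ) < ↑a}) with h | h
    · exact H μ ν hμ hν h
    · rw [add_comm, H ν μ hν hμ h, edist_comm]
  clear hμ hν
  intro μ ν hμ hν h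
  have hFle : cdf01 μ ↑u ≤ cdf01 ν ↑u := by
    have := ENNReal.toReal_mono (ne_top hμ _) h
    rw [tail_toReal hμ, tail_toReal hν] at this
    linarith
  rw [tsub_eq_zero_of_le h, add_zero, sub_eq_ofReal (ne_top hμ _) h,
    tail_toReal hμ, tail_toReal hν, edist_I01, Fm_coe hμ, Fm_coe hν,
    ENNReal.ofReal_of_nonpos (by linarith : cdf01 μ ↑u - cdf01 ν ↑u ≤ 0), zero_add]
  congr 1
  ring

lemma pi_prob (π : Measure (I01 × I01)) (hπ : π.map Prod.fst = μ)
    (hμ : IsProbabilityMeasure μ) : IsProbabilityMeasure π := by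
  constructor
  have : (π.map Prod.fst) univ = 1 := by rw [hπ]; exact hμ.measure_univ
  rwa [Measure.map_apply measurable_fst MeasurableSet.univ, preimage_univ] at this

lemma lower (hμ : IsProbabilityMeasure μ) (hν : IsProbabilityMeasure ν)
    (π : Measure (I01 × I01)) (hπ1 : π.map Prod.fst = μ) (hπ2 : π.map Prod.snd = ν) :
    D μ ν ≤ ∫⁻ z, edist z.1 z.2 ∂π := by
  haveI := pi_prob π hπ1 hμ
  have hGmeas : Measurable (Function.uncurry
      (fun (z : I01 × I01) (u : I01) => (χ z.1 u - χ z.2 u) + (χ z.2 u - χ z.1 u))) := by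
    have m1 : Measurable (fun w : (I01 × I01) × I01 => χ w.1.1 w.2) :=
      Measurable.ite (measurableSet_lt (measurable_subtype_coe.comp measurable_snd)
        (measurable_subtype_coe.comp (measurable_fst.fst))) measurable_const measurable_const
    have m2 : Measurable (fun w : (I01 × I01) × I01 => χ w.1.2 w.2) :=
      Measurable.ite (measurableSet_lt (measurable_subtype_coe.comp measurable_snd)
        (measurable_subtype_coe.comp (measurable_snd.comp measurable_fst))) measurable_const
        measurable_const
    exact ((m1.sub m2).add (m2.sub m1))
  calc D μ ν = ∫⁻ u, edist (Fm μ u) (Fm ν u) ∂(volume : Measure I01) := rfl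
    _ ≤ ∫⁻ u, ∫⁻ z, (χ z.1 u - χ z.2 u) + (χ z.2 u - χ z.1 u) ∂π ∂(volume : Measure I01) := by
        apply lintegral_mono
        intro u
        show edist (Fm μ u) (Fm ν u) ≤ ∫⁻ z, (χ z.1 u - χ z.2 u) + (χ z.2 u - χ z.1 u) ∂π
        rw [← key_edist hμ hν u, ← lint_chi_fst π hπ1 u, ← lint_chi_snd π hπ2 u]
        calc (∫⁻ z, χ z.1 u ∂π - ∫⁻ z, χ z.2 u ∂π) + (∫⁻ z, χ z.2 u ∂π - ∫⁻ z, χ z.1 u ∂π)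
            ≤ (∫⁻ z, χ z.1 u - χ z.2 u ∂π) + (∫⁻ z, χ z.2 u - χ z.1 u ∂π) :=
              add_le_add (lintegral_sub_le _ _ (meas_chi_snd u)) (lintegral_sub_le _ _ (meas_chi_fst u))
          _ = ∫⁻ z, (χ z.1 u - χ z.2 u) + (χ z.2 u - χ z.1 u) ∂π :=
              (lintegral_add_left ((meas_chi_fst u).sub (meas_chi_snd u)) _).symm
    _ = ∫⁻ z, ∫⁻ u, (χ z.1 u - χ z.2 u) + (χ z.2 u - χ z.1 u) ∂(volume : Measure I01) ∂π :=
        (lintegral_lintegral_swap hGmeas.aemeasurable).symm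
    _ = ∫⁻ z, edist z.1 z.2 ∂π := lintegral_congr (fun z => (edist_eq_lint z).symm)

lemma upper (hμ : IsProbabilityMeasure μ) (hν : IsProbabilityMeasure ν) :
    dWY (jmap μ) (jmap ν) ≤ D μ ν := by
  have hf : Measurable (fun u : I01 => (Fm μ u, Fm ν u)) :=
    (measurable_Fm hμ).prodMk (measurable_Fm hν)
  have hmem : (Measure.map (fun u : I01 => (Fm μ u, Fm ν u)) volume)
      ∈ {π : Measure (I01 × I01) | π.map Prod.fst = jmap μ ∧ π.map Prod.snd = jmap ν} := by
    constructor
    · rw [Measure.map_map measurable_fst hf]; rfl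
    · rw [Measure.map_map measurable_snd hf]; rfl
  refine le_trans (iInf₂_le _ hmem) ?_
  rw [lintegral_map (measurable_fst.edist measurable_snd) hf]
  rfl

end FlipAux

namespace FlipAux
variable {μ ν : Measure I01}

def ψ (μ : Measure I01) (u x : I01) : ℝ≥0∞ := if cdf01 μ ↑u ≤ (x:ℝ) then 1 else 0

lemma claim1 (hμ : IsProbabilityMeasure μ) (hν : IsProbabilityMeasure ν) (u : I01) :
    ∫⁻ x, (ψ μ u x - ψ ν u x) + (ψ ν u x - ψ μ u x) ∂(volume : Measure I01)
      = edist (Fm μ u) (Fm ν u) := by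
  suffices H : ∀ (μ ν : Measure I01), IsProbabilityMeasure μ → IsProbabilityMeasure ν →
      cdf01 μ ↑u ≤ cdf01 ν ↑u →
      ∫⁻ x, (ψ μ u x - ψ ν u x) + (ψ ν u x - ψ μ u x) ∂(volume : Measure I01)
        = edist (Fm μ u) (Fm ν u) by
    rcases le_total (cdf01 μ ↑u) (cdf01 ν ↑u) with h | h
    · exact H μ ν hμ hν h
    · rw [show (fun x => (ψ μ u x - ψ ν u x) + (ψ ν u x - ψ μ u x))
          = fun x => (ψ ν u x - ψ μ u x) + (ψ μ u x - ψ ν u x) from funext (fun x => add_comm _ _),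
        edist_comm]
      exact H ν μ hν hμ h
  clear hμ hν
  intro μ ν hμ hν h
  have hpt : ∀ x : I01, (ψ μ u x - ψ ν u x) + (ψ ν u x - ψ μ u x)
      = if (cdf01 μ ↑u ≤ (x:ℝ) ∧ (x:ℝ) < cdf01 ν ↑u) then 1 else 0 := by
    intro x
    by_cases h2 : cdf01 ν ↑u ≤ (x:ℝ)
    · have h1 : cdf01 μ ↑u ≤ (x:ℝ) := le_trans h h2
      simp [ψ, h1, h2, not_lt.mpr h2]
    · by_cases h1 : cdf01 μ ↑u ≤ (x:ℝ)
      · simp [ψ, h1, h2, not_lt.mpr, zero_tsub, tsub_zero, not_le.mp h2]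
      · simp [ψ, h1, h2, zero_tsub, tsub_zero]
  rw [lintegral_congr hpt]
  have hS : MeasurableSet {x : I01 | cdf01 μ ↑u ≤ (x:ℝ) ∧ (x:ℝ) < cdf01 ν ↑u} :=
    (measurableSet_le measurable_const measurable_subtype_coe).inter
      (measurableSet_lt measurable_subtype_coe measurable_const)
  have hind : (fun x : I01 => if (cdf01 μ ↑u ≤ (x:ℝ) ∧ (x:ℝ) < cdf01 ν ↑u) then (1:ℝ≥0∞) else 0)
      = Set.indicator {x : I01 | cdf01 μ ↑u ≤ (x:ℝ) ∧ (x:ℝ) < cdf01 ν ↑u} 1 := by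
    funext x
    by_cases hx : (cdf01 μ ↑u ≤ (x:ℝ) ∧ (x:ℝ) < cdf01 ν ↑u) <;>
      simp [hx, Set.indicator_apply]
  rw [hind, lintegral_indicator_one hS,
    vol_Ico _ _ (cdf_nonneg _) (cdf_le_one hν _), edist_I01, Fm_coe hμ, Fm_coe hν,
    ENNReal.ofReal_of_nonpos (by linarith : cdf01 μ ↑u - cdf01 ν ↑u ≤ 0), zero_add]

lemma nested (hμ : IsProbabilityMeasure μ) (hν : IsProbabilityMeasure ν) (x : I01) :
    {u : I01 | cdf01 ν ↑u ≤ (x:ℝ)} ⊆ {u : I01 | cdf01 μ ↑u ≤ (x:ℝ)}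
      ∨ {u : I01 | cdf01 μ ↑u ≤ (x:ℝ)} ⊆ {u : I01 | cdf01 ν ↑u ≤ (x:ℝ)} := by
  by_cases hc : {u : I01 | cdf01 μ ↑u ≤ (x:ℝ)} ⊆ {u : I01 | cdf01 ν ↑u ≤ (x:ℝ)}
  · exact Or.inr hc
  · left
    rw [not_subset] at hc
    obtain ⟨u₀, hu₀1, hu₀2⟩ := hc
    intro v hv
    rcases le_total (v:ℝ) ↑u₀ with hvu | hvu
    · exact le_trans (cdf_mono hμ hvu) hu₀1
    · exfalso
      exact hu₀2 (le_trans (cdf_mono hν hvu) hv)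

lemma claim2 (hμ : IsProbabilityMeasure μ) (hν : IsProbabilityMeasure ν) (x : I01) :
    ∫⁻ u, (ψ μ u x - ψ ν u x) + (ψ ν u x - ψ μ u x) ∂(volume : Measure I01)
      = edist (Fm (jmap μ) x) (Fm (jmap ν) x) := by
  suffices H : ∀ (μ ν : Measure I01), IsProbabilityMeasure μ → IsProbabilityMeasure ν →
      {u : I01 | cdf01 ν ↑u ≤ (x:ℝ)} ⊆ {u : I01 | cdf01 μ ↑u ≤ (x:ℝ)} →
      ∫⁻ u, (ψ μ u x - ψ ν u x) + (ψ ν u x - ψ μ u x) ∂(volume : Measure I01)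
        = edist (Fm (jmap μ) x) (Fm (jmap ν) x) by
    rcases nested hμ hν x with h | h
    · exact H μ ν hμ hν h
    · rw [show (fun u => (ψ μ u x - ψ ν u x) + (ψ ν u x - ψ μ u x))
          = fun u => (ψ ν u x - ψ μ u x) + (ψ μ u x - ψ ν u x) from funext (fun u => add_comm _ _),
        edist_comm]
      exact H ν μ hν hμ h
  clear hμ hν
  intro μ ν hμ hν h
  have hSμ : MeasurableSet {u : I01 | cdf01 μ ↑u ≤ (x:ℝ)} := meas_cdf_le hμ _
  have hSν : MeasurableSet {u : I01 | cdf01 ν ↑u ≤ (x:ℝ)} := meas_cdf_le hν _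
  have hpt : ∀ u : I01, (ψ μ u x - ψ ν u x) + (ψ ν u x - ψ μ u x)
      = Set.indicator ({u : I01 | cdf01 μ ↑u ≤ (x:ℝ)} \ {u : I01 | cdf01 ν ↑u ≤ (x:ℝ)}) 1 u := by
    intro u
    by_cases h2 : cdf01 ν ↑u ≤ (x:ℝ)
    · have h1 : cdf01 μ ↑u ≤ (x:ℝ) := h h2
      simp [ψ, h1, h2, Set.indicator_apply, mem_diff]
    · by_cases h1 : cdf01 μ ↑u ≤ (x:ℝ)
      · simp [ψ, h1, h2, Set.indicator_apply, mem_diff, zero_tsub, tsub_zero]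
      · simp [ψ, h1, h2, Set.indicator_apply, mem_diff, zero_tsub, tsub_zero]
  rw [lintegral_congr hpt, lintegral_indicator_one (hSμ.diff hSν),
    measure_diff h hSν.nullMeasurableSet (ne_top vol_prob _),
    edist_I01, Fm_coe (jmap_prob hμ), Fm_coe (jmap_prob hν), cdf_jmap hμ, cdf_jmap hν,
    ENNReal.ofReal_of_nonpos
      (sub_nonpos.mpr (ENNReal.toReal_mono (ne_top vol_prob _) (measure_mono h))), add_zero,
    ← sub_eq_ofReal (ne_top vol_prob _) (measure_mono h)]

/-- MAIN LEMMA 3: the flip preserves the cdf distance. -/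
lemma D_jmap (hμ : IsProbabilityMeasure μ) (hν : IsProbabilityMeasure ν) :
    D (jmap μ) (jmap ν) = D μ ν := by
  have hmeas : Measurable (Function.uncurry
      (fun (x u : I01) => (ψ μ u x - ψ ν u x) + (ψ ν u x - ψ μ u x))) := by
    have m1 : Measurable (fun w : I01 × I01 => ψ μ w.2 w.1) :=
      Measurable.ite (measurableSet_le
        (((cdf_mono hμ).measurable).comp (measurable_subtype_coe.comp measurable_snd))
        (measurable_subtype_coe.comp measurable_fst)) measurable_const measurable_const
    have m2 : Measurable (fun w : I01 × I01 => ψ ν w.2 w.1) :=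
      Measurable.ite (measurableSet_le
        (((cdf_mono hν).measurable).comp (measurable_subtype_coe.comp measurable_snd))
        (measurable_subtype_coe.comp measurable_fst)) measurable_const measurable_const
    exact (m1.sub m2).add (m2.sub m1)
  calc D (jmap μ) (jmap ν)
      = ∫⁻ x, ∫⁻ u, (ψ μ u x - ψ ν u x) + (ψ ν u x - ψ μ u x)
          ∂(volume : Measure I01) ∂(volume : Measure I01) :=
        lintegral_congr (fun x => (claim2 hμ hν x).symm)
    _ = ∫⁻ u, ∫⁻ x, (ψ μ u x - ψ ν u x) + (ψ ν u x - ψ μ u x)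
          ∂(volume : Measure I01) ∂(volume : Measure I01) :=
        lintegral_lintegral_swap hmeas.aemeasurable
    _ = D μ ν := lintegral_congr (fun u => claim1 hμ hν u)

end FlipAux

namespace FlipAux
variable {μ ν : Measure I01}

lemma dWY_eq_D (hμ : IsProbabilityMeasure μ) (hν : IsProbabilityMeasure ν) :
    dWY μ ν = D μ ν := by
  apply le_antisymm
  · have h := upper (jmap_prob hμ) (jmap_prob hν)
    rwa [jj_eq hμ, jj_eq hν, D_jmap hμ hν] at h
  · exact le_iInf₂ (fun π hπ => lower hμ hν π hπ.1 hπ.2)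

lemma dWY_jmap (hμ : IsProbabilityMeasure μ) (hν : IsProbabilityMeasure ν) :
    dWY (jmap μ) (jmap ν) = dWY μ ν := by
  rw [dWY_eq_D (jmap_prob hμ) (jmap_prob hν), D_jmap hμ hν, dWY_eq_D hμ hν]

lemma dWX_eq_rpow {p : ℝ} (hp : 1 ≤ p) (μ ν : Measure I01) :
    dWX p μ ν = dWY μ ν ^ (1/p) := by
  have hp0 : (0:ℝ) < p := lt_of_lt_of_le one_pos hp
  have h1 : (1:ℝ)/p ≤ 1 := by rw [div_le_one hp0]; exact hp
  have hint : ∀ π : Measure (I01 × I01),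
      ∫⁻ z, (edist z.1 z.2 ^ (1/p)) ^ p ∂π = ∫⁻ z, edist z.1 z.2 ∂π := fun π =>
    lintegral_congr (fun z => by
      rw [← ENNReal.rpow_mul, one_div_mul_cancel hp0.ne', ENNReal.rpow_one])
  rw [dWX, dWY, min_eq_left h1]
  congr 1
  exact iInf_congr (fun π => iInf_congr (fun hπ => hint π))

lemma jmap_dirac {t : ℝ} (ht : t ∈ Ioo (0:ℝ) 1) :
    jmap (Measure.dirac ⟨t, Set.mem_Icc_of_Ioo ht⟩)
      = ENNReal.ofReal t • Measure.dirac (⟨0, Set.left_mem_Icc.mpr zero_le_one⟩ : I01)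
        + ENNReal.ofReal (1 - t) •
            Measure.dirac (⟨1, Set.right_mem_Icc.mpr zero_le_one⟩ : I01) := by
  set pt : I01 := ⟨t, Set.mem_Icc_of_Ioo ht⟩ with hpt
  set p0 : I01 := ⟨0, Set.left_mem_Icc.mpr zero_le_one⟩ with hp0
  set p1 : I01 := ⟨1, Set.right_mem_Icc.mpr zero_le_one⟩ with hp1
  have hδ : IsProbabilityMeasure (Measure.dirac pt) := inferInstance
  have hRHS : IsProbabilityMeasure
      (ENNReal.ofReal t • Measure.dirac p0 + ENNReal.ofReal (1 - t) • Measure.dirac p1) := by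
    constructor
    rw [Measure.add_apply, Measure.smul_apply, Measure.smul_apply, measure_univ, measure_univ,
      smul_eq_mul, smul_eq_mul, mul_one, mul_one,
      ← ENNReal.ofReal_add ht.1.le (by linarith [ht.2])]
    norm_num
  have hcdfδ : ∀ y : ℝ, cdf01 (Measure.dirac pt) y = if t ≤ y then 1 else 0 := by
    intro y
    rw [cdf_eq, Measure.dirac_apply' _ (meas_cSet y)]
    by_cases hty : t ≤ y <;> simp [Set.indicator_apply, hty, cSet, hpt]
  apply ext_cdf (jmap_prob hδ) hRHS
  intro x hx
  rcases eq_or_lt_of_le hx.2 with h1 | h1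
  · rw [h1, cdf_jmap hδ]
    have huniv : {u : I01 | cdf01 (Measure.dirac pt) ↑u ≤ (1:ℝ)} = univ :=
      eq_univ_of_forall (fun u => cdf_le_one hδ _)
    have huniv2 : cSet (1:ℝ) = univ := eq_univ_of_forall (fun z => z.2.2)
    rw [huniv, measure_univ, cdf_eq, huniv2, hRHS.measure_univ]
  · rw [cdf_jmap hδ]
    have hset : {u : I01 | cdf01 (Measure.dirac pt) ↑u ≤ x} = {u : I01 | (u:ℝ) < t} := by
      ext u
      rw [mem_setOf_eq, mem_setOf_eq, hcdfδ ↑u]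
      by_cases hty : t ≤ (u:ℝ)
      · simp only [if_pos hty]
        constructor
        · intro hh; exfalso; linarith
        · intro hh; exfalso; exact absurd hh (not_lt.mpr hty)
      · simp only [if_neg hty]
        exact ⟨fun _ => not_le.mp hty, fun _ => hx.1⟩
    rw [hset, vol_Iio t ⟨ht.1.le, ht.2.le⟩, ENNReal.toReal_ofReal ht.1.le, cdf_eq,
      Measure.add_apply, Measure.smul_apply, Measure.smul_apply,
      Measure.dirac_apply' _ (meas_cSet x), Measure.dirac_apply' _ (meas_cSet x)]
    have hm0 : p0 ∈ cSet x := by simpa [cSet, hp0] using hx.1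
    have hm1 : p1 ∉ cSet x := by simp [cSet, hp1]; linarith
    rw [Set.indicator_of_mem hm0, Set.indicator_of_notMem hm1]
    simp [ENNReal.toReal_ofReal ht.1.le]

end FlipAux


open FlipAux

/-- (1) `d_{W_p(X)}^p = d_{W_1(Y)}` on Borel probability measures on `[0,1]`;
(2) the flip map `j`, defined by `F_{j(μ)} = F_μ^{-1}`, is a bijective isometry of `W_p(X)`
with `j(δ_t) = t δ_0 + (1-t) δ_1` for `t ∈ (0,1)`; consequently `W_p(X)` possesses an
isometry not preserving the set of Dirac measures. -/
theorem flip_is_mass_splitting_isometry (p : ℝ) (hp : 1 ≤ p) :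
    (∀ μ ν : Measure I01, IsProbabilityMeasure μ → IsProbabilityMeasure ν →
        dWX p μ ν ^ p = dWY μ ν) ∧
    ∃ j : Measure I01 → Measure I01,
      (∀ μ : Measure I01, IsProbabilityMeasure μ → IsProbabilityMeasure (j μ)) ∧
      (∀ μ : Measure I01, IsProbabilityMeasure μ →
        ∀ x ∈ Set.Icc (0:ℝ) 1, cdf01 (j μ) x = quantile01 μ x) ∧
      Set.BijOn j {μ : Measure I01 | IsProbabilityMeasure μ}
        {μ : Measure I01 | IsProbabilityMeasure μ} ∧
      (∀ μ ν : Measure I01, IsProbabilityMeasure μ → IsProbabilityMeasure ν →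
        dWX p (j μ) (j ν) = dWX p μ ν) ∧
      (∀ (t : ℝ) (ht : t ∈ Set.Ioo (0:ℝ) 1),
        j (Measure.dirac ⟨t, Set.mem_Icc_of_Ioo ht⟩)
          = ENNReal.ofReal t • Measure.dirac (⟨0, Set.left_mem_Icc.mpr zero_le_one⟩ : I01)
            + ENNReal.ofReal (1 - t) •
                Measure.dirac (⟨1, Set.right_mem_Icc.mpr zero_le_one⟩ : I01)) ∧
      ¬ (∀ x : I01, ∃ y : I01, j (Measure.dirac x) = Measure.dirac y) := by
  have hp0 : (0:ℝ) < p := lt_of_lt_of_le one_pos hp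
  constructor
  · intro μ ν hμ hν
    rw [dWX_eq_rpow hp, ← ENNReal.rpow_mul, one_div_mul_cancel hp0.ne', ENNReal.rpow_one]
  · refine ⟨jmap, fun μ hμ => jmap_prob hμ,
      fun μ hμ x hx => cdf_jmap_eq_quantile hμ hx, ?_,
      fun μ ν hμ hν => by rw [dWX_eq_rpow hp, dWX_eq_rpow hp, dWY_jmap hμ hν],
      fun t ht => jmap_dirac ht, ?_⟩
    · have hmap : Set.MapsTo jmap {μ : Measure I01 | IsProbabilityMeasure μ}
          {μ : Measure I01 | IsProbabilityMeasure μ} := fun μ hμ => jmap_prob hμ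
      exact Set.InvOn.bijOn ⟨fun μ hμ => jj_eq hμ, fun μ hμ => jj_eq hμ⟩ hmap hmap
    · intro h
      obtain ⟨y, hy⟩ := h ⟨1/2, by norm_num⟩
      set p0 : I01 := ⟨0, Set.left_mem_Icc.mpr zero_le_one⟩ with hp0'
      set p1 : I01 := ⟨1, Set.right_mem_Icc.mpr zero_le_one⟩ with hp1'
      have ht2 : (1/2 : ℝ) ∈ Set.Ioo (0:ℝ) 1 := by norm_num
      have hd := jmap_dirac ht2
      have hkey : Measure.dirac y
          = ENNReal.ofReal (1/2) • Measure.dirac p0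
            + ENNReal.ofReal (1 - 1/2) • Measure.dirac p1 := by
        rw [← hy]; exact hd
      have hval := congrArg (fun m : Measure I01 => m {p0}) hkey
      simp only [Measure.add_apply, Measure.smul_apply, smul_eq_mul] at hval
      rw [Measure.dirac_apply' y (measurableSet_singleton p0),
        Measure.dirac_apply' p0 (measurableSet_singleton p0),
        Measure.dirac_apply' p1 (measurableSet_singleton p0)] at hval
      have hm1 : p1 ∉ ({p0} : Set I01) := by
        simp only [Set.mem_singleton_iff, hp0', hp1']
        intro hcon
        have : (1:ℝ) = 0 := congrArg Subtype.val hcon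
        norm_num at this
      rw [Set.indicator_of_mem (Set.mem_singleton p0), Set.indicator_of_notMem hm1] at hval
      by_cases hy0 : y ∈ ({p0} : Set I01)
      · rw [Set.indicator_of_mem hy0] at hval
        simp only [Pi.one_apply, mul_one, mul_zero, add_zero] at hval
        have hlt : ENNReal.ofReal (1/2) < 1 := ENNReal.ofReal_lt_one.mpr (by norm_num)
        rw [← hval] at hlt
        exact absurd hlt (lt_irrefl 1)
      · rw [Set.indicator_of_notMem hy0] at hval
        simp only [Pi.one_apply, mul_one, mul_zero, add_zero] at hval
        have hpos : 0 < ENNReal.ofReal (1/2) := ENNReal.ofReal_pos.mpr (by norm_num)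
        rw [← hval] at hpos
        exact absurd hpos (lt_irrefl 0)
end
end
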